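/- arXiv:1303.0990 — 5 statements merged into one kernel-verified Lean document; each statement's English description precedes it below -/
import Mathlib

section
/- For every n ∈ ℕ, Σ_{w ∈ B_n, w ascending} (−1)^{l(w)} X^{L(w)} = (1−X)(1−X³)···(1−X^{ñ}), where ñ is the largest odd integer ≤ n, and an element w ∈ B_n is ascending if w(1) < w(2) < ⋯ < w(n). -/
open Finset Polynomial

def IsSigned (n : ℕ) (w : ℤ → ℤ) : Prop :=
  (∀ j : ℤ, w (-j) = -w j) ∧
    Set.BijOn w (Set.Icc (-(n : ℤ)) n) (Set.Icc (-(n : ℤ)) n)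

noncomputable def Lset (n : ℕ) (w : ℤ → ℤ) : Finset (ℤ × ℤ) :=
  (Finset.Icc (-(n : ℤ)) n ×ˢ Finset.Icc (-(n : ℤ)) n).filter
    fun p => p.1 < p.2 ∧ w p.2 < w p.1 ∧ p.1 % 2 ≠ p.2 % 2

noncomputable def Lstat (n : ℕ) (w : ℤ → ℤ) : ℕ := (Lset n w).card / 2

noncomputable def invStat (n : ℕ) (w : ℤ → ℤ) : ℕ :=
  ((Finset.Icc (1 : ℤ) n ×ˢ Finset.Icc (1 : ℤ) n).filter
    fun p => p.1 < p.2 ∧ w p.2 < w p.1).card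

noncomputable def negStat (n : ℕ) (w : ℤ → ℤ) : ℕ :=
  ((Finset.Icc (1 : ℤ) n).filter fun i => w i < 0).card

noncomputable def nspStat (n : ℕ) (w : ℤ → ℤ) : ℕ :=
  ((Finset.Icc (1 : ℤ) n ×ˢ Finset.Icc (1 : ℤ) n).filter
    fun p => p.1 < p.2 ∧ w p.1 + w p.2 < 0).card

noncomputable def lenStat (n : ℕ) (w : ℤ → ℤ) : ℕ := invStat n w + negStat n w + nspStat n w

noncomputable def Dset (n : ℕ) (w : ℤ → ℤ) : Finset ℤ :=
  (Finset.Ico (0 : ℤ) n).filter fun i => w (i + 1) < w i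

abbrev HypOct (n : ℕ) := Equiv.Perm (Fin n) × (Fin n → Bool)

def HypOct.fn {n : ℕ} (w : HypOct n) : ℤ → ℤ := fun j =>
  if h : 1 ≤ j ∧ j ≤ (n : ℤ) then
    (if w.2 ⟨(j - 1).toNat, by omega⟩ then -1 else 1) *
      (((w.1 ⟨(j - 1).toNat, by omega⟩ : Fin n) : ℤ) + 1)
  else if h' : 1 ≤ -j ∧ -j ≤ (n : ℤ) then
    -((if w.2 ⟨(-j - 1).toNat, by omega⟩ then -1 else 1) *
      (((w.1 ⟨(-j - 1).toNat, by omega⟩ : Fin n) : ℤ) + 1))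
  else 0


noncomputable def aXf (v : ℕ) : Polynomial ℤ := (-1)^(v+1) * X^(2*((v+1)/2)+1)

lemma prodB (u : Polynomial ℤ) (hu : u * u = 1) (n : ℕ) :
    (1 + u * X) * ∏ s ∈ range n, (1 + u * ((-1)^(s+1) * X^(2*((s+1)/2)+1)))
      = (if n % 2 = 0 then 1 + u * X^(n+1) else 1) *
          ∏ k ∈ range ((n+1)/2), (1 - (X : Polynomial ℤ)^(2*(2*k+1))) := by
  induction n with
  | zero => simp
  | succ n ih =>
    rw [prod_range_succ, ← mul_assoc]
    rcases Nat.even_or_odd n with he | ho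
    · have h0 : n % 2 = 0 := Nat.even_iff.mp he
      have h1 : (n+1) % 2 = 1 := by omega
      have h2 : (n+1+1)/2 = (n+1)/2 + 1 := by omega
      have h3 : 2*(((n:ℕ)+1)/2)+1 = n + 1 := by omega
      have h4 : 2*(2*((n+1)/2)+1) = 2*(n+1) := by omega
      have hs : ((-1 : Polynomial ℤ))^(n+1) = -1 := by
        rw [Odd.neg_one_pow]; exact Nat.odd_iff.mpr h1
      have hu2 : u^2 = 1 := by rw [sq]; exact hu
      rw [ih, if_pos h0, if_neg (by omega : ¬((n+1) % 2 = 0)), h3, h2, prod_range_succ, hs]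
      have key : (1 + u * X ^ (n + 1)) * (1 + u * (-1 * X ^ (n+1))) = 1 - X^(2*(2*((n+1)/2)+1)) := by
        rw [h4]; ring_nf; rw [hu2]; ring
      linear_combination (∏ k ∈ range ((n+1)/2), (1 - (X : Polynomial ℤ)^(2*(2*k+1)))) * key
    · have h0 : n % 2 = 1 := Nat.odd_iff.mp ho
      have h1 : (n+1) % 2 = 0 := by omega
      have h2 : (n+1+1)/2 = (n+1)/2 := by omega
      have h3 : 2*(((n:ℕ)+1)/2)+1 = n + 2 := by omega
      have hs : ((-1 : Polynomial ℤ))^(n+1) = 1 := by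
        rw [Even.neg_one_pow]; exact Nat.even_iff.mpr h1
      rw [ih, if_neg (by omega : ¬(n % 2 = 0)), if_pos h1, h3, h2, hs]
      ring

lemma comp_Xsq_inj : Function.Injective (fun p : Polynomial ℤ => p.comp (X^2)) := by
  intro p q h
  apply Polynomial.eq_of_infinite_eval_eq
  apply Set.infinite_of_injective_forall_mem (f := fun k : ℕ => (k:ℤ)^2)
  · intro a b hab
    simpa using hab
  · intro k
    have := congrArg (Polynomial.eval ((k:ℤ))) h
    simpa [Polynomial.eval_comp] using this

lemma partB (n : ℕ) :
    ∑ S : Finset (Fin n),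
      ((-1 : Polynomial ℤ)^(∑ v ∈ S, ((v:ℕ)+1)) *
        X ^ ((S.card + 1)/2 + ∑ v ∈ S, (((v:ℕ)+1)/2)))
    = ∏ k ∈ range ((n+1)/2), (1 - X^(2*k+1)) := by
  apply comp_Xsq_inj
  dsimp only
  rw [Polynomial.sum_comp, Polynomial.prod_comp]
  simp only [Polynomial.mul_comp, Polynomial.pow_comp, Polynomial.neg_comp,
    Polynomial.one_comp, Polynomial.X_comp, Polynomial.sub_comp]
  have h2 : (2 : Polynomial ℤ) ≠ 0 := by norm_num
  apply mul_left_cancel₀ h2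
  have hterm : ∀ S : Finset (Fin n),
      (2 : Polynomial ℤ) * ((-1)^(∑ v ∈ S, ((v:ℕ)+1)) *
          (X^2) ^ ((S.card + 1)/2 + ∑ v ∈ S, (((v:ℕ)+1)/2)))
        = (1 + X) * ∏ v ∈ S, aXf (v:ℕ) + (1 - X) * ∏ v ∈ S, (-(aXf (v:ℕ))) := by
    intro S
    have hprod : ∏ v ∈ S, aXf (v:ℕ)
        = (-1)^(∑ v ∈ S, ((v:ℕ)+1)) * X^(S.card + 2 * ∑ v ∈ S, (((v:ℕ)+1)/2)) := by
      unfold aXf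
      rw [prod_mul_distrib, prod_pow_eq_pow_sum, prod_pow_eq_pow_sum]
      congr 1
      rw [Finset.sum_add_distrib, Finset.sum_const, ← Finset.mul_sum, smul_eq_mul, mul_one]
      congr 1
      omega
    have hneg : ∏ v ∈ S, (-(aXf (v:ℕ))) = (-1)^S.card * ∏ v ∈ S, aXf (v:ℕ) := by
      rw [show (∏ v ∈ S, (-(aXf (v:ℕ)))) = ∏ v ∈ S, (-1) * aXf (v:ℕ) from
        Finset.prod_congr rfl fun v _ => (neg_one_mul _).symm, prod_mul_distrib, prod_const]
    rw [hneg, hprod, ← pow_mul]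
    rcases Nat.even_or_odd S.card with he | ho
    · have h1 : 2 * ((S.card + 1)/2 + ∑ v ∈ S, (((v:ℕ)+1)/2))
          = S.card + 2 * ∑ v ∈ S, (((v:ℕ)+1)/2) := by
        have := Nat.even_iff.mp he; omega
      have hs : ((-1 : Polynomial ℤ))^S.card = 1 := Even.neg_one_pow he
      rw [h1, hs]; ring
    · have h1 : 2 * ((S.card + 1)/2 + ∑ v ∈ S, (((v:ℕ)+1)/2))
          = S.card + 2 * (∑ v ∈ S, (((v:ℕ)+1)/2)) + 1 := by
        have := Nat.odd_iff.mp ho; omega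
      have hs : ((-1 : Polynomial ℤ))^S.card = -1 := Odd.neg_one_pow ho
      rw [h1, hs, pow_succ]; ring
  rw [Finset.mul_sum]
  calc ∑ S : Finset (Fin n), (2 : Polynomial ℤ) * ((-1)^(∑ v ∈ S, ((v:ℕ)+1)) *
          (X^2) ^ ((S.card + 1)/2 + ∑ v ∈ S, (((v:ℕ)+1)/2)))
      = ∑ S : Finset (Fin n), ((1 + X) * ∏ v ∈ S, aXf (v:ℕ)
          + (1 - X) * ∏ v ∈ S, (-(aXf (v:ℕ)))) := by
        exact Finset.sum_congr rfl fun S _ => hterm S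
    _ = (1 + X) * (∑ S : Finset (Fin n), ∏ v ∈ S, aXf (v:ℕ))
          + (1 - X) * (∑ S : Finset (Fin n), ∏ v ∈ S, (-(aXf (v:ℕ)))) := by
        rw [Finset.sum_add_distrib, Finset.mul_sum, Finset.mul_sum]
    _ = (1 + X) * ∏ v : Fin n, (1 + aXf (v:ℕ)) + (1 - X) * ∏ v : Fin n, (1 + -(aXf (v:ℕ))) := by
        have expand : ∀ f : Fin n → Polynomial ℤ,
            ∑ S : Finset (Fin n), ∏ v ∈ S, f v = ∏ v : Fin n, (1 + f v) := by
          intro f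
          have h := Fintype.prod_add f (fun _ => (1 : Polynomial ℤ))
          simp only [prod_const_one, mul_one] at h
          rw [← h]
          exact Fintype.prod_congr _ _ fun v => add_comm _ _
        rw [expand (fun v => aXf (v:ℕ)), expand (fun v => -(aXf (v:ℕ)))]
    _ = (1 + X) * ∏ s ∈ range n, (1 + aXf s) + (1 - X) * ∏ s ∈ range n, (1 + -(aXf s)) := by
        rw [Fin.prod_univ_eq_prod_range (fun s => 1 + aXf s),
          Fin.prod_univ_eq_prod_range (fun s => 1 + -(aXf s))]
    _ = 2 * ∏ k ∈ range ((n + 1) / 2), (1 - (X ^ 2) ^ (2 * k + 1)) := by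
        have r1 : ∏ s ∈ range n, (1 + aXf s)
            = ∏ s ∈ range n, (1 + 1 * ((-1)^(s+1) * X^(2*((s+1)/2)+1)) : Polynomial ℤ) :=
          Finset.prod_congr rfl fun s _ => by unfold aXf; ring
        have r2 : ∏ s ∈ range n, (1 + -(aXf s))
            = ∏ s ∈ range n, (1 + (-1) * ((-1)^(s+1) * X^(2*((s+1)/2)+1)) : Polynomial ℤ) :=
          Finset.prod_congr rfl fun s _ => by unfold aXf; ring
        have r3 : (∏ k ∈ range ((n+1)/2), (1 - ((X : Polynomial ℤ)^2) ^ (2*k+1)))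
            = ∏ k ∈ range ((n+1)/2), (1 - (X : Polynomial ℤ)^(2*(2*k+1))) :=
          Finset.prod_congr rfl fun k _ => by rw [← pow_mul]
        rw [r1, r2, r3]
        have e1 := prodB 1 (by norm_num) n
        have e2 := prodB (-1) (by norm_num) n
        split_ifs at e1 e2 <;> linear_combination e1 + e2


-- fiberwise card for product filters
lemma card_product_filter (s t : Finset ℤ) (P : ℤ → ℤ → Prop) [∀ a b, Decidable (P a b)] :
    ((s ×ˢ t).filter fun p => P p.1 p.2).card = ∑ a ∈ s, (t.filter fun b => P a b).card := by
  rw [Finset.card_eq_sum_card_fiberwise (f := Prod.fst) (t := s)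
    (fun p hp => (Finset.mem_product.mp (Finset.mem_filter.mp hp).1).1)]
  refine Finset.sum_congr rfl fun a ha => ?_
  apply Finset.card_nbij (fun p => p.2)
  · intro p hp
    simp only [Finset.mem_coe, Finset.mem_filter, Finset.mem_product] at hp ⊢
    exact ⟨hp.1.1.2, by rw [← hp.2]; exact hp.1.2⟩
  · intro p hp q hq hpq
    simp only [Finset.mem_coe, Finset.mem_filter] at hp hq
    exact Prod.ext (hp.2.trans hq.2.symm) hpq
  · intro b hb
    rw [Finset.mem_coe, Finset.mem_filter] at hb
    refine ⟨(a, b), ?_, rfl⟩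
    rw [Finset.mem_coe, Finset.mem_filter, Finset.mem_filter, Finset.mem_product]
    exact ⟨⟨⟨ha, hb.1⟩, hb.2⟩, rfl⟩

-- parity counting
lemma parityCount (a : ℤ) (m : ℕ) :
    ((Finset.Ioc a (a + m)).filter fun b => b % 2 ≠ a % 2).card = (m + 1) / 2 := by
  induction m with
  | zero => simp
  | succ m ih =>
    have hins : Finset.Ioc a (a + (m + 1 : ℕ)) = insert (a + m + 1) (Finset.Ioc a (a + m)) := by
      ext b
      simp only [Finset.mem_Ioc, Finset.mem_insert]
      push_cast
      omega
    rw [hins, Finset.filter_insert]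
    by_cases hpar : (a + m + 1) % 2 ≠ a % 2
    · rw [if_pos hpar, Finset.card_insert_of_notMem (by simp [Finset.mem_filter])]
      rw [ih]
      omega
    · rw [if_neg hpar, ih]
      push_neg at hpar
      omega

section Abstract

variable {n : ℕ} {w : ℤ → ℤ} {T : Finset ℤ}

/-- bundled hypotheses -/
structure Good (n : ℕ) (w : ℤ → ℤ) (T : Finset ℤ) : Prop where
  hodd : ∀ j, w (-j) = - w j
  hmono : ∀ i j : ℤ, 1 ≤ i → i < j → j ≤ n → w i < w j
  himg : (Finset.Icc (1:ℤ) n).image w = T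
  honeof : ∀ t ∈ T, (1 ≤ t ∧ t ≤ n) ∨ (1 ≤ -t ∧ -t ≤ n)
  hopp : ∀ t ∈ T, -t ∉ T
  hfull : ∀ m : ℤ, 1 ≤ m → m ≤ n → m ∈ T ∨ -m ∈ T

namespace Good

lemma hw0 (G : Good n w T) : w 0 = 0 := by
  have := G.hodd 0; simp at this; omega

lemma injOn (G : Good n w T) : Set.InjOn w (Finset.Icc (1:ℤ) n) := by
  intro i hi j hj hij
  simp only [Finset.coe_Icc, Set.mem_Icc] at hi hj
  by_contra hne
  rcases lt_or_gt_of_ne hne with h | h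
  · exact absurd hij (ne_of_lt (G.hmono i j hi.1 h hj.2))
  · exact absurd hij.symm (ne_of_lt (G.hmono j i hj.1 h hi.2))

lemma hcardT (G : Good n w T) : T.card = n := by
  rw [← G.himg, Finset.card_image_of_injOn G.injOn, Int.card_Icc]
  omega

lemma hmem (G : Good n w T) {a : ℤ} (h1 : 1 ≤ a) (h2 : a ≤ n) : w a ∈ T := by
  rw [← G.himg]
  exact Finset.mem_image_of_mem w (Finset.mem_Icc.mpr ⟨h1, h2⟩)

lemma hlt_iff (G : Good n w T) {i j : ℤ} (hi1 : 1 ≤ i) (hi2 : i ≤ n) (hj1 : 1 ≤ j)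
    (hj2 : j ≤ n) : w i < w j ↔ i < j := by
  constructor
  · intro h
    by_contra hn
    push_neg at hn
    rcases eq_or_lt_of_le hn with rfl | hlt
    · omega
    · exact absurd h (not_lt.mpr (le_of_lt (G.hmono j i hj1 hlt hi2)))
  · intro h
    exact G.hmono i j hi1 h hj2

lemma cnt (G : Good n w T) (P : ℤ → Prop) [DecidablePred P] :
    ((Finset.Icc (1:ℤ) n).filter fun j => P (w j)).card = (T.filter P).card := by
  rw [← G.himg, Finset.filter_image,
    Finset.card_image_of_injOn (G.injOn.mono (fun x hx =>
      Finset.mem_coe.mpr (Finset.mem_of_mem_filter x hx)))]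

lemma sum_transport (G : Good n w T) (P : ℤ → Prop) [DecidablePred P] (F : ℤ → ℕ) :
    ∑ j ∈ (Finset.Icc (1:ℤ) n).filter (fun j => P (w j)), F (w j)
      = ∑ t ∈ T.filter P, F t := by
  rw [← G.himg, Finset.filter_image, Finset.sum_image (fun x hx y hy hxy =>
    G.injOn (Finset.mem_coe.mpr (Finset.mem_of_mem_filter x hx))
      (Finset.mem_coe.mpr (Finset.mem_of_mem_filter y hy)) hxy)]

lemma posc (G : Good n w T) {b : ℤ} (hb1 : 1 ≤ b) (hb2 : b ≤ n) (c : ℤ) :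
    w b < c ↔ b ≤ ((T.filter (· < c)).card : ℤ) := by
  classical
  have hcnt := G.cnt (· < c)
  constructor
  · intro h
    have hsub : Finset.Icc (1:ℤ) b ⊆ (Finset.Icc (1:ℤ) n).filter fun j => w j < c := by
      intro i hi
      rw [Finset.mem_Icc] at hi
      rw [Finset.mem_filter, Finset.mem_Icc]
      refine ⟨⟨hi.1, le_trans hi.2 hb2⟩, ?_⟩
      rcases eq_or_lt_of_le hi.2 with rfl | hlt
      · exact h
      · exact lt_trans (G.hmono i b hi.1 hlt hb2) h
    have := Finset.card_le_card hsub
    rw [hcnt, Int.card_Icc] at this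
    omega
  · intro h
    by_contra hn
    push_neg at hn
    have hsub : (Finset.Icc (1:ℤ) n).filter (fun j => w j < c) ⊆ Finset.Icc (1:ℤ) (b-1) := by
      intro j hj
      rw [Finset.mem_filter, Finset.mem_Icc] at hj
      rw [Finset.mem_Icc]
      refine ⟨hj.1.1, ?_⟩
      by_contra hjb
      push_neg at hjb
      have : w b ≤ w j := by
        rcases eq_or_lt_of_le (by omega : b ≤ j) with rfl | h'
        · exact le_refl _
        · exact le_of_lt (G.hmono b j hb1 h' hj.1.2)
      omega
    have := Finset.card_le_card hsub
    rw [hcnt, Int.card_Icc] at this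
    omega


lemma invStat_eq (G : Good n w T) : invStat n w = 0 := by
  rw [invStat, Finset.card_eq_zero, Finset.filter_eq_empty_iff]
  rintro ⟨a, b⟩ hab
  rw [Finset.mem_product, Finset.mem_Icc, Finset.mem_Icc] at hab
  rintro ⟨h1, h2⟩
  exact absurd h2 (not_lt.mpr (le_of_lt (G.hmono a b hab.1.1 h1 hab.2.2)))

lemma negStat_eq (G : Good n w T) : negStat n w = (T.filter (· < 0)).card := by
  rw [negStat]
  exact G.cnt (· < 0)

lemma card_le_abs (G : Good n w T) {a : ℤ} (ha1 : 1 ≤ a) (ha2 : a ≤ n) :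
    ((T.filter (· ≤ w a)).card : ℤ) = a := by
  rw [← G.cnt (· ≤ w a)]
  have : ((Finset.Icc (1:ℤ) n).filter fun j => w j ≤ w a) = Finset.Icc 1 a := by
    ext j
    simp only [Finset.mem_filter, Finset.mem_Icc]
    constructor
    · rintro ⟨⟨hj1, hj2⟩, hle⟩
      refine ⟨hj1, ?_⟩
      by_contra hja
      push_neg at hja
      exact absurd hle (not_le.mpr (G.hmono a j ha1 hja hj2))
    · rintro ⟨hj1, hj2⟩
      refine ⟨⟨hj1, le_trans hj2 ha2⟩, ?_⟩
      rcases eq_or_lt_of_le hj2 with rfl | hlt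
      · exact le_refl _
      · exact le_of_lt (G.hmono j a hj1 hlt ha2)
  rw [this, Int.card_Icc]
  omega

lemma card_band (G : Good n w T) {s : ℤ} (hs1 : 1 ≤ s) (hs2 : s ≤ n) :
    ((T.filter (fun t => -s < t ∧ t < s)).card : ℤ) = s - 1 := by
  have h0T : (0 : ℤ) ∉ T := fun h0 => by rcases G.honeof 0 h0 with h | h <;> omega
  have := Finset.card_nbij' (i := fun t : ℤ => |t|)
    (j := fun m : ℤ => if m ∈ T then m else -m)
    (s := T.filter (fun t => -s < t ∧ t < s)) (t := Finset.Icc 1 (s-1))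
    ?_ ?_ ?_ ?_
  · rw [this, Int.card_Icc]; omega
  · intro t ht
    rw [Finset.mem_coe, Finset.mem_filter] at ht
    dsimp only
    rw [Finset.mem_coe, Finset.mem_Icc]
    have : t ≠ 0 := fun h => h0T (h ▸ ht.1)
    rcases abs_cases t with ⟨h1, h2⟩ | ⟨h1, h2⟩ <;> omega
  · intro m hm
    rw [Finset.mem_coe, Finset.mem_Icc] at hm
    dsimp only
    rw [Finset.mem_coe, Finset.mem_filter]
    by_cases hmT : m ∈ T
    · rw [if_pos hmT]; exact ⟨hmT, by omega⟩
    · rw [if_neg hmT]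
      rcases G.hfull m (by omega) (by omega) with h | h
      · exact absurd h hmT
      · exact ⟨h, by omega⟩
  · intro t ht
    rw [Finset.mem_coe, Finset.mem_filter] at ht
    dsimp only
    rcases abs_cases t with ⟨h1, h2⟩ | ⟨h1, h2⟩
    · rw [h1, if_pos ht.1]
    · rw [h1, if_neg (G.hopp t ht.1), neg_neg]
  · intro m hm
    rw [Finset.mem_coe, Finset.mem_Icc] at hm
    dsimp only
    by_cases hmT : m ∈ T
    · rw [if_pos hmT]; exact abs_of_nonneg (by omega)
    · rw [if_neg hmT, abs_of_nonpos (by omega), neg_neg]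

lemma card_lt_s (G : Good n w T) {a : ℤ} (ha1 : 1 ≤ a) (ha2 : a ≤ n) (haneg : w a < 0) :
    ((T.filter (· < -w a)).card : ℤ) = a + (-w a) - 1 := by
  have hwa : w a ∈ T := G.hmem ha1 ha2
  have hs : 1 ≤ -w a ∧ -w a ≤ n := by
    rcases G.honeof _ hwa with h | h <;> omega
  have hsplit : T.filter (· < -w a)
      = T.filter (· ≤ w a) ∪ T.filter (fun t => w a < t ∧ t < -w a) := by
    ext t
    simp only [Finset.mem_union, Finset.mem_filter]
    constructor
    · rintro ⟨htT, hlt⟩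
      by_cases h : t ≤ w a
      · exact Or.inl ⟨htT, h⟩
      · exact Or.inr ⟨htT, by omega⟩
    · rintro (⟨htT, h⟩ | ⟨htT, h⟩) <;> exact ⟨htT, by omega⟩
  have hdisj : Disjoint (T.filter (· ≤ w a)) (T.filter (fun t => w a < t ∧ t < -w a)) := by
    rw [Finset.disjoint_filter]
    intro t _ h1 h2
    omega
  have hband := G.card_band hs.1 hs.2
  have hle := G.card_le_abs ha1 ha2
  rw [hsplit, Finset.card_union_of_disjoint hdisj]
  have : w a < -w a := by omega
  push_cast
  rw [hle]
  rw [show (T.filter (fun t => w a < t ∧ t < -w a)) =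
    (T.filter (fun t => -(-w a) < t ∧ t < -w a)) from by rw [neg_neg]] 
  rw [hband]
  ring

lemma inner_set (G : Good n w T) {a : ℤ} (ha1 : 1 ≤ a) (ha2 : a ≤ n) (haneg : w a < 0) :
    (Finset.Icc (1:ℤ) n).filter (fun b => a < b ∧ w a + w b < 0)
      = Finset.Ioc a (a + (-w a) - 1) := by
  have hcard := G.card_lt_s ha1 ha2 haneg
  have hTn := G.hcardT
  have hcle : (T.filter (· < -w a)).card ≤ n := hTn ▸ Finset.card_filter_le T _
  ext b
  simp only [Finset.mem_filter, Finset.mem_Icc, Finset.mem_Ioc]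
  constructor
  · rintro ⟨⟨hb1, hb2⟩, hab, hsum⟩
    have : w b < -w a := by omega
    have := (G.posc hb1 hb2 (-w a)).mp this
    omega
  · rintro ⟨hab, hb2⟩
    have hb1 : 1 ≤ b := by omega
    have hbn : b ≤ n := by omega
    have : w b < -w a := (G.posc hb1 hbn (-w a)).mpr (by omega)
    exact ⟨⟨hb1, hbn⟩, hab, by omega⟩

lemma nspStat_eq (G : Good n w T) :
    nspStat n w = ∑ t ∈ T.filter (· < 0), ((-t).toNat - 1) := by
  rw [nspStat, card_product_filter _ _ (fun a b => a < b ∧ w a + w b < 0)]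
  rw [← G.sum_transport (· < 0) (fun t => (-t).toNat - 1)]
  rw [← Finset.sum_filter_of_ne (p := fun a => w a < 0)]
  · apply Finset.sum_congr rfl
    intro a ha
    rw [Finset.mem_filter, Finset.mem_Icc] at ha
    rw [G.inner_set ha.1.1 ha.1.2 ha.2, Int.card_Ioc]
    omega
  · intro a ha hne
    rw [Finset.mem_Icc] at ha
    by_contra hpos
    push_neg at hpos
    apply hne
    rw [Finset.card_eq_zero, Finset.filter_eq_empty_iff]
    intro b hb
    rw [Finset.mem_Icc] at hb
    rintro ⟨hab, hsum⟩
    have := G.hmono a b ha.1 hab hb.2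
    omega


lemma Pcard_eq (G : Good n w T) :
    ((Finset.Icc (1:ℤ) n ×ˢ Finset.Icc (1:ℤ) n).filter
        fun p => p.1 < p.2 ∧ w p.1 + w p.2 < 0 ∧ p.1 % 2 ≠ p.2 % 2).card
      = ∑ t ∈ T.filter (· < 0), (-t).toNat / 2 := by
  rw [card_product_filter _ _ (fun a b => a < b ∧ w a + w b < 0 ∧ a % 2 ≠ b % 2)]
  rw [← G.sum_transport (· < 0) (fun t => (-t).toNat / 2)]
  rw [← Finset.sum_filter_of_ne (p := fun a => w a < 0)]
  · apply Finset.sum_congr rfl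
    intro a ha
    rw [Finset.mem_filter, Finset.mem_Icc] at ha
    have hrw : (Finset.Icc (1:ℤ) n).filter (fun b => a < b ∧ w a + w b < 0 ∧ a % 2 ≠ b % 2)
        = ((Finset.Icc (1:ℤ) n).filter (fun b => a < b ∧ w a + w b < 0)).filter
            (fun b => b % 2 ≠ a % 2) := by
      rw [Finset.filter_filter]
      apply Finset.filter_congr
      intro b _
      constructor
      · rintro ⟨h1, h2, h3⟩; exact ⟨⟨h1, h2⟩, fun h => h3 h.symm⟩
      · rintro ⟨⟨h1, h2⟩, h3⟩; exact ⟨h1, h2, fun h => h3 h.symm⟩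
    rw [hrw, G.inner_set ha.1.1 ha.1.2 ha.2]
    have htn : (1:ℤ) ≤ -w a := by omega
    have hbnd : a + (-w a) - 1 = a + ((((-w a).toNat - 1 : ℕ)) : ℤ) := by omega
    rw [hbnd, parityCount a ((-w a).toNat - 1)]
    omega
  · intro a ha hne
    rw [Finset.mem_Icc] at ha
    by_contra hpos
    push_neg at hpos
    apply hne
    rw [Finset.card_eq_zero, Finset.filter_eq_empty_iff]
    intro b hb
    rw [Finset.mem_Icc] at hb
    rintro ⟨hab, hsum, hpar⟩
    have := G.hmono a b ha.1 hab hb.2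
    omega

lemma mem_Lset {p : ℤ × ℤ} : p ∈ Lset n w ↔ ((-(n:ℤ) ≤ p.1 ∧ p.1 ≤ n) ∧ (-(n:ℤ) ≤ p.2 ∧ p.2 ≤ n))
    ∧ p.1 < p.2 ∧ w p.2 < w p.1 ∧ p.1 % 2 ≠ p.2 % 2 := by
  rw [Lset, Finset.mem_filter, Finset.mem_product, Finset.mem_Icc, Finset.mem_Icc]

lemma Lstat_eq (G : Good n w T) :
    Lstat n w = ((T.filter (· < 0)).card + 1) / 2 + ∑ t ∈ T.filter (· < 0), (-t).toNat / 2 := by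
  classical
  set k := (T.filter (· < 0)).card with hk
  have hkn : k ≤ n := by
    rw [hk, ← G.hcardT]; exact Finset.card_filter_le T _
  set B := (Lset n w).filter (fun p => 0 < p.1 + p.2) with hB
  have hsplit : (Lset n w).card
      = ((Lset n w).filter (fun p => p.1 + p.2 < 0)).card + B.card := by
    rw [hB, ← Finset.card_filter_add_card_filter_not
      (p := fun p : ℤ × ℤ => p.1 + p.2 < 0)]
    congr 1
    apply congrArg Finset.card
    apply Finset.filter_congr
    intro p hp
    have hpar := (mem_Lset.mp hp).2.2.2
    simp only [not_lt]
    constructor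
    · intro h; omega
    · intro h; omega
  have hAB : ((Lset n w).filter (fun p => p.1 + p.2 < 0)).card = B.card := by
    apply Finset.card_nbij' (i := fun p : ℤ × ℤ => (-p.2, -p.1))
      (j := fun p : ℤ × ℤ => (-p.2, -p.1))
    · intro p hp
      rw [Finset.mem_coe, Finset.mem_filter] at hp
      obtain ⟨hl, hs⟩ := hp
      rw [mem_Lset] at hl
      rw [hB, Finset.mem_coe, Finset.mem_filter, mem_Lset]
      beta_reduce
      refine ⟨⟨⟨by omega, by omega⟩, ?_, ?_, ?_⟩, by dsimp only; omega⟩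
      · dsimp only; omega
      · dsimp only
        rw [G.hodd, G.hodd]
        omega
      · dsimp only; omega
    · intro p hp
      rw [hB, Finset.mem_coe, Finset.mem_filter] at hp
      obtain ⟨hl, hs⟩ := hp
      rw [mem_Lset] at hl
      rw [Finset.mem_coe, Finset.mem_filter, mem_Lset]
      beta_reduce
      refine ⟨⟨⟨by omega, by omega⟩, ?_, ?_, ?_⟩, by dsimp only; omega⟩
      · dsimp only; omega
      · dsimp only
        rw [G.hodd, G.hodd]
        omega
      · dsimp only; omega
    · intro p hp
      simp only [neg_neg, Prod.mk.eta]
    · intro p hp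
      simp only [neg_neg, Prod.mk.eta]
  have hLB : Lstat n w = B.card := by
    rw [Lstat, hsplit, hAB]
    omega
  have hsplit2 : B.card = (B.filter (fun p => p.1 < 0)).card
      + (B.filter (fun p => ¬ p.1 < 0)).card :=
    (Finset.card_filter_add_card_filter_not _).symm
  have hzero : B.filter (fun p => ¬ p.1 < 0) = B.filter (fun p => p.1 = 0) := by
    apply Finset.filter_congr
    intro p hp
    rw [hB, Finset.mem_filter, mem_Lset] at hp
    obtain ⟨⟨hbox, hlt, hinv, hpar⟩, hsum⟩ := hp
    constructor
    · intro h
      push_neg at h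
      rcases eq_or_lt_of_le h with h' | h'
      · omega
      · exfalso
        have := G.hmono p.1 p.2 (by omega) hlt (by omega)
        omega
    · intro h; omega
  have hc0 : (B.filter (fun p => p.1 = 0)).card
      = ((Finset.Ioc (0:ℤ) ((0:ℤ) + (k:ℕ))).filter (fun b => b % 2 ≠ (0:ℤ) % 2)).card := by
    apply Finset.card_nbij' (i := fun p : ℤ × ℤ => p.2) (j := fun b : ℤ => ((0:ℤ), b))
    · intro p hp
      rw [hB, Finset.mem_coe, Finset.mem_filter, Finset.mem_filter, mem_Lset] at hp
      obtain ⟨⟨⟨hbox, hlt, hinv, hpar⟩, hsum⟩, h0⟩ := hp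
      rw [Finset.mem_coe, Finset.mem_filter, Finset.mem_Ioc]
      beta_reduce
      have hw0 := G.hw0
      have hneg : w p.2 < 0 := by rw [← hw0, ← h0]; exact hinv
      have hp2k := (G.posc (by omega) (by omega) 0).mp hneg
      rw [hk]
      refine ⟨⟨by omega, by omega⟩, by omega⟩
    · intro b hb
      rw [Finset.mem_coe, Finset.mem_filter, Finset.mem_Ioc] at hb
      obtain ⟨⟨hb1, hb2⟩, hbpar⟩ := hb
      rw [hB, Finset.mem_coe, Finset.mem_filter, Finset.mem_filter, mem_Lset]
      beta_reduce
      have hbn : b ≤ n := by omega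
      have hneg : w b < 0 := (G.posc (by omega) (by omega) 0).mpr (by omega)
      have hw0 := G.hw0
      refine ⟨⟨⟨⟨⟨by omega, by omega⟩, by omega, by omega⟩, ?_, ?_, ?_⟩, ?_⟩, rfl⟩
      · show (0:ℤ) < b
        omega
      · show w b < w 0
        rw [hw0]
        exact hneg
      · show (0:ℤ) % 2 ≠ b % 2
        omega
      · show (0:ℤ) < 0 + b
        omega
    · intro p hp
      rw [Finset.mem_coe, Finset.mem_filter] at hp
      obtain ⟨p1, p2⟩ := p
      obtain ⟨-, h0⟩ := hp
      dsimp only at h0 ⊢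
      rw [h0]
    · intro b hb
      rfl
  have hc1 : (B.filter (fun p => p.1 < 0)).card
      = ((Finset.Icc (1:ℤ) n ×ˢ Finset.Icc (1:ℤ) n).filter
          fun p => p.1 < p.2 ∧ w p.1 + w p.2 < 0 ∧ p.1 % 2 ≠ p.2 % 2).card := by
    apply Finset.card_nbij' (i := fun p : ℤ × ℤ => (-p.1, p.2))
      (j := fun q : ℤ × ℤ => (-q.1, q.2))
    · intro p hp
      rw [hB, Finset.mem_coe, Finset.mem_filter, Finset.mem_filter, mem_Lset] at hp
      obtain ⟨⟨⟨hbox, hlt, hinv, hpar⟩, hsum⟩, h0⟩ := hp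
      rw [Finset.mem_coe, Finset.mem_filter, Finset.mem_product, Finset.mem_Icc, Finset.mem_Icc]
      beta_reduce
      have hwodd := G.hodd p.1
      have : w (-p.1) = - w p.1 := by rw [← G.hodd]
      refine ⟨⟨⟨by omega, by omega⟩, ⟨by omega, by omega⟩⟩, by dsimp only; omega,
        ?_, by dsimp only; omega⟩
      dsimp only
      rw [this]
      omega
    · intro q hq
      rw [Finset.mem_coe, Finset.mem_filter, Finset.mem_product, Finset.mem_Icc, Finset.mem_Icc] at hq
      obtain ⟨⟨⟨hq1, hq2⟩, hq3, hq4⟩, hlt, hsum, hpar⟩ := hq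
      rw [hB, Finset.mem_coe, Finset.mem_filter, Finset.mem_filter, mem_Lset]
      beta_reduce
      have : w (-q.1) = - w q.1 := G.hodd q.1
      refine ⟨⟨⟨⟨⟨by omega, by omega⟩, by omega, by omega⟩, ?_, ?_, ?_⟩, ?_⟩, ?_⟩
      · dsimp only; omega
      · dsimp only; rw [this]; omega
      · dsimp only; omega
      · dsimp only; omega
      · dsimp only; omega
    · intro p hp
      simp only [neg_neg, Prod.mk.eta]
    · intro q hq
      simp only [neg_neg, Prod.mk.eta]
  rw [hLB, hsplit2, hzero, hc0, hc1, Pcard_eq G, parityCount 0 k]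
  omega

end Good
end Abstract


section Construct

variable {n : ℕ}

def tvalS (S : Finset (Fin n)) : Fin n → ℤ := fun v => if v ∈ S then -((v:ℤ)+1) else (v:ℤ)+1

lemma tvalS_natAbs (S : Finset (Fin n)) (v : Fin n) : (tvalS S v).natAbs = (v:ℕ)+1 := by
  unfold tvalS
  split_ifs <;> omega

lemma tvalS_neg_iff (S : Finset (Fin n)) (v : Fin n) : tvalS S v < 0 ↔ v ∈ S := by
  unfold tvalS
  split_ifs with h
  · simp only [iff_true, h]
    omega
  · simp only [iff_false, h]
    omega

lemma tvalS_inj (S : Finset (Fin n)) : Function.Injective (tvalS S) := by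
  intro a b h
  have := congrArg Int.natAbs h
  rw [tvalS_natAbs, tvalS_natAbs] at this
  exact Fin.ext (by omega)

def TgS (S : Finset (Fin n)) : Finset ℤ := Finset.image (tvalS S) Finset.univ

lemma card_TgS (S : Finset (Fin n)) : (TgS S).card = n := by
  rw [TgS, Finset.card_image_of_injective _ (tvalS_inj S), Finset.card_univ, Fintype.card_fin]

lemma TgS_bounds {S : Finset (Fin n)} {t : ℤ} (h : t ∈ TgS S) :
    (1 ≤ t ∧ t ≤ n) ∨ (1 ≤ -t ∧ -t ≤ n) := by
  rw [TgS, Finset.mem_image] at h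
  obtain ⟨v, -, rfl⟩ := h
  have hv := v.isLt
  unfold tvalS
  split_ifs
  · right; constructor <;> omega
  · left; constructor <;> omega

lemma TgS_opp {S : Finset (Fin n)} {t : ℤ} (h : t ∈ TgS S) : -t ∉ TgS S := by
  intro h'
  rw [TgS, Finset.mem_image] at h h'
  obtain ⟨v, -, rfl⟩ := h
  obtain ⟨v', -, hv'⟩ := h'
  have h1 := congrArg Int.natAbs hv'
  rw [Int.natAbs_neg, tvalS_natAbs, tvalS_natAbs] at h1
  have : v' = v := Fin.ext (by omega)
  subst this
  have h2 := tvalS_natAbs S v'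
  omega

lemma TgS_full (S : Finset (Fin n)) : ∀ m : ℤ, 1 ≤ m → m ≤ n → m ∈ TgS S ∨ -m ∈ TgS S := by
  intro m h1 h2
  have hvn : (m-1).toNat < n := by omega
  set v : Fin n := ⟨(m-1).toNat, hvn⟩ with hv
  have hval : ((v:ℕ):ℤ) + 1 = m := by
    rw [hv]
    show (((m-1).toNat : ℕ) : ℤ) + 1 = m
    omega
  by_cases hmem : v ∈ S
  · right
    rw [TgS, Finset.mem_image]
    exact ⟨v, Finset.mem_univ v, by unfold tvalS; rw [if_pos hmem]; omega⟩
  · left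
    rw [TgS, Finset.mem_image]
    exact ⟨v, Finset.mem_univ v, by unfold tvalS; rw [if_neg hmem]; omega⟩

noncomputable def oES (S : Finset (Fin n)) : Fin n ↪o ℤ := (TgS S).orderEmbOfFin (card_TgS S)

lemma oES_mem (S : Finset (Fin n)) (j : Fin n) : oES S j ∈ TgS S :=
  Finset.orderEmbOfFin_mem _ _ _

noncomputable def idxS (S : Finset (Fin n)) (j : Fin n) : Fin n :=
  ⟨(oES S j).natAbs - 1, by have := TgS_bounds (oES_mem S j); omega⟩

lemma tvalS_idxS (S : Finset (Fin n)) (j : Fin n) : tvalS S (idxS S j) = oES S j := by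
  have h := oES_mem S j
  rw [TgS, Finset.mem_image] at h
  obtain ⟨v, -, hv⟩ := h
  have hval : idxS S j = v := by
    apply Fin.ext
    show (oES S j).natAbs - 1 = v
    rw [← hv, tvalS_natAbs]
    omega
  rw [hval, hv]

lemma idxS_inj (S : Finset (Fin n)) : Function.Injective (idxS S) := by
  intro a b h
  have := congrArg (tvalS S) h
  rw [tvalS_idxS, tvalS_idxS] at this
  exact (oES S).injective this

noncomputable def sigmaS (S : Finset (Fin n)) : Equiv.Perm (Fin n) :=
  Equiv.ofBijective (idxS S) ((Finite.injective_iff_bijective).mp (idxS_inj S))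

noncomputable def WS (S : Finset (Fin n)) : HypOct n :=
  (sigmaS S, fun j => decide (oES S j < 0))

lemma sigmaS_apply (S : Finset (Fin n)) (j : Fin n) : tvalS S (sigmaS S j) = oES S j :=
  tvalS_idxS S j

lemma fn_WS (S : Finset (Fin n)) {j : ℤ} (h1 : 1 ≤ j) (h2 : j ≤ n) :
    HypOct.fn (WS S) j = oES S ⟨(j-1).toNat, by omega⟩ := by
  rw [HypOct.fn, dif_pos ⟨h1, h2⟩]
  set J : Fin n := ⟨(j-1).toNat, by omega⟩ with hJ
  have hsig : tvalS S ((WS S).1 J) = oES S J := sigmaS_apply S J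
  have hidxval : (((WS S).1 J : Fin n) : ℕ) = (oES S J).natAbs - 1 := rfl
  have hbnd := TgS_bounds (oES_mem S J)
  by_cases hneg : oES S J < 0
  · have hmem : (WS S).1 J ∈ S := by
      rw [← tvalS_neg_iff S, hsig]
      exact hneg
    have : (WS S).2 J = true := decide_eq_true hneg
    rw [this, if_pos rfl]
    rw [tvalS, if_pos hmem] at hsig
    omega
  · have hmem : (WS S).1 J ∉ S := by
      rw [← tvalS_neg_iff S, hsig]
      exact hneg
    have : (WS S).2 J = false := decide_eq_false hneg
    rw [this, if_neg (by simp)]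
    rw [tvalS, if_neg hmem] at hsig
    omega

lemma fn_odd (w : HypOct n) (j : ℤ) : HypOct.fn w (-j) = - HypOct.fn w j := by
  rw [HypOct.fn, HypOct.fn]
  simp only [neg_neg]
  by_cases h1 : 1 ≤ j ∧ j ≤ (n:ℤ)
  · rw [dif_neg (by omega), dif_pos h1, dif_pos h1]
  · by_cases h2 : 1 ≤ -j ∧ -j ≤ (n:ℤ)
    · rw [dif_pos h2, dif_pos h2, dif_neg h1, neg_neg]
    · rw [dif_neg h2, dif_neg h1, dif_neg h1, dif_neg h2, neg_zero]

lemma image_fn_WS (S : Finset (Fin n)) :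
    (Finset.Icc (1:ℤ) n).image (HypOct.fn (WS S)) = TgS S := by
  apply Finset.Subset.antisymm
  · intro t ht
    rw [Finset.mem_image] at ht
    obtain ⟨j, hj, rfl⟩ := ht
    rw [Finset.mem_Icc] at hj
    rw [fn_WS S hj.1 hj.2]
    exact oES_mem S _
  · intro t ht
    have : t ∈ Set.range (oES S) := by
      have := Finset.range_orderEmbOfFin (TgS S) (card_TgS S)
      rw [show Set.range (oES S) = Set.range ((TgS S).orderEmbOfFin (card_TgS S)) from rfl, this]
      exact ht
    obtain ⟨j0, hj0⟩ := this
    rw [Finset.mem_image]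
    refine ⟨(j0:ℤ)+1, Finset.mem_Icc.mpr ⟨by omega, by have := j0.isLt; omega⟩, ?_⟩
    rw [fn_WS S (by omega) (by have := j0.isLt; omega)]
    rw [← hj0]
    congr 1
    apply Fin.ext
    show ((j0:ℤ) + 1 - 1).toNat = (j0:ℕ)
    omega

lemma good_WS (S : Finset (Fin n)) : Good n (HypOct.fn (WS S)) (TgS S) := by
  refine ⟨fn_odd (WS S), ?_, image_fn_WS S, fun t ht => TgS_bounds ht,
    fun t ht => TgS_opp ht, TgS_full S⟩
  intro i j hi hij hjn
  rw [fn_WS S hi (by omega), fn_WS S (by omega) hjn]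
  apply (oES S).strictMono
  show ((i-1).toNat : ℕ) < (j-1).toNat
  omega

lemma negTgS (S : Finset (Fin n)) :
    (TgS S).filter (· < 0) = Finset.image (fun v : Fin n => -((v:ℤ)+1)) S := by
  ext t
  rw [Finset.mem_filter, Finset.mem_image]
  constructor
  · rintro ⟨ht, hneg⟩
    rw [TgS, Finset.mem_image] at ht
    obtain ⟨v, -, rfl⟩ := ht
    have hv := (tvalS_neg_iff S v).mp hneg
    refine ⟨v, hv, ?_⟩
    rw [tvalS, if_pos hv]
  · rintro ⟨v, hv, rfl⟩
    constructor
    · rw [TgS, Finset.mem_image]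
      exact ⟨v, Finset.mem_univ v, by rw [tvalS, if_pos hv]⟩
    · show -((v:ℤ)+1) < 0
      omega

lemma neg_inj_aux : Function.Injective (fun v : Fin n => -((v:ℤ)+1)) := by
  intro a b h
  simp only [neg_inj, add_left_inj, Nat.cast_inj] at h
  exact Fin.ext (by exact_mod_cast h)

lemma negTgS_card (S : Finset (Fin n)) : ((TgS S).filter (· < 0)).card = S.card := by
  rw [negTgS, Finset.card_image_of_injective _ neg_inj_aux]

lemma negTgS_sum (S : Finset (Fin n)) (F : ℤ → ℕ) :
    ∑ t ∈ (TgS S).filter (· < 0), F t = ∑ v ∈ S, F (-((v:ℤ)+1)) := by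
  rw [negTgS, Finset.sum_image (fun a _ b _ h => neg_inj_aux h)]

lemma lenStat_WS (S : Finset (Fin n)) :
    lenStat n (HypOct.fn (WS S)) = ∑ v ∈ S, ((v:ℕ)+1) := by
  have G := good_WS S
  rw [lenStat, G.invStat_eq, G.negStat_eq, G.nspStat_eq, negTgS_card, negTgS_sum]
  have hterm : ∀ v : Fin n, ((-(-((v:ℤ)+1))).toNat - 1) = (v:ℕ) := by
    intro v
    omega
  rw [Finset.sum_congr rfl (fun v _ => hterm v), Finset.sum_add_distrib, Finset.sum_const,
    smul_eq_mul, mul_one]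
  show 0 + #S + S.sum Fin.val = S.sum Fin.val + #S
  omega

lemma Lstat_WS (S : Finset (Fin n)) :
    Lstat n (HypOct.fn (WS S)) = (S.card + 1)/2 + ∑ v ∈ S, (((v:ℕ)+1)/2) := by
  have G := good_WS S
  rw [G.Lstat_eq, negTgS_card, negTgS_sum]
  congr 1


def gOf (w : HypOct n) : Finset (Fin n) := Finset.univ.filter (fun v => w.2 (w.1.symm v))

lemma gOf_WS (S : Finset (Fin n)) : gOf (WS S) = S := by
  ext v
  rw [gOf, Finset.mem_filter]
  simp only [Finset.mem_univ, true_and]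
  set j := (sigmaS S).symm v with hj
  have hsig : sigmaS S j = v := Equiv.apply_symm_apply _ _
  show ((WS S).2 j = true) ↔ v ∈ S
  have : (WS S).2 j = decide (oES S j < 0) := rfl
  rw [this, decide_eq_true_iff, ← sigmaS_apply S j, hsig, tvalS_neg_iff]

lemma fn_pos_form (w : HypOct n) (j : Fin n) :
    HypOct.fn w ((j:ℤ)+1) = (if w.2 j then (-1:ℤ) else 1) * ((w.1 j : ℤ) + 1) := by
  rw [HypOct.fn, dif_pos ⟨by omega, by have := j.isLt; omega⟩]
  have hJ : (⟨((j:ℤ) + 1 - 1).toNat, by have := j.isLt; omega⟩ : Fin n) = j := by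
    apply Fin.ext
    show ((j:ℤ) + 1 - 1).toNat = (j:ℕ)
    omega
  rw [hJ]

lemma WS_gOf {w : HypOct n}
    (hasc : ∀ i ∈ Finset.Icc (1:ℤ) n, ∀ j ∈ Finset.Icc (1:ℤ) n,
      i < j → HypOct.fn w i < HypOct.fn w j) : WS (gOf w) = w := by
  set S := gOf w with hS
  have hmemS : ∀ j : Fin n, (w.1 j ∈ S ↔ w.2 j = true) := by
    intro j
    rw [hS, gOf, Finset.mem_filter]
    simp only [Finset.mem_univ, true_and, Equiv.symm_apply_apply]
  have hF : ∀ j : Fin n, HypOct.fn w ((j:ℤ)+1) = tvalS S (w.1 j) := by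
    intro j
    rw [fn_pos_form, tvalS]
    by_cases hb : w.2 j = true
    · rw [hb, if_pos rfl, if_pos ((hmemS j).mpr hb)]
      ring
    · have hb' : w.2 j = false := by
        cases h : w.2 j
        · rfl
        · exact absurd h hb
      rw [hb', if_neg (by simp), if_neg (fun hm => hb ((hmemS j).mp hm))]
      ring
  have hFmono : StrictMono (fun j : Fin n => HypOct.fn w ((j:ℤ)+1)) := by
    intro a b hab
    have ha := a.isLt
    have hb := b.isLt
    exact hasc _ (Finset.mem_Icc.mpr ⟨by omega, by omega⟩) _
      (Finset.mem_Icc.mpr ⟨by omega, by omega⟩)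
      (by exact_mod_cast by omega : ((a:ℤ)+1) < ((b:ℤ)+1))
  have hFmem : ∀ j : Fin n, (fun j : Fin n => HypOct.fn w ((j:ℤ)+1)) j ∈ TgS S := by
    intro j
    dsimp only
    rw [hF j, TgS]
    exact Finset.mem_image_of_mem _ (Finset.mem_univ _)
  have huniq := Finset.orderEmbOfFin_unique (card_TgS S) hFmem hFmono
  have hkey : ∀ j : Fin n, tvalS S (sigmaS S j) = tvalS S (w.1 j) := by
    intro j
    calc tvalS S (sigmaS S j) = oES S j := sigmaS_apply S j
      _ = HypOct.fn w ((j:ℤ)+1) := (congrFun huniq j).symm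
      _ = tvalS S (w.1 j) := hF j
  have hcomp1 : ∀ j, (WS S).1 j = w.1 j := fun j => tvalS_inj S (hkey j)
  have hcomp2 : ∀ j, (WS S).2 j = w.2 j := by
    intro j
    have h1 : (WS S).2 j = decide (oES S j < 0) := rfl
    have h2 : oES S j = tvalS S (w.1 j) := by
      rw [← sigmaS_apply S j]
      exact hkey j
    rw [h1, h2]
    by_cases hb : w.2 j = true
    · rw [hb]
      apply decide_eq_true
      rw [tvalS_neg_iff]
      exact (hmemS j).mpr hb
    · have hb' : w.2 j = false := by
        cases h : w.2 j
        · rfl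
        · exact absurd h hb
      rw [hb']
      apply decide_eq_false
      rw [tvalS_neg_iff]
      exact fun hm => hb ((hmemS j).mp hm)
  exact Prod.ext (Equiv.ext hcomp1) (funext hcomp2)

end Construct

/-- The signed generating function of `L` over the ascending elements of `Bₙ`
is `(1−X)(1−X³)⋯(1−X^ñ)`, where `ñ` is the largest odd integer `≤ n`. -/
theorem ascending_sum (n : ℕ) :
    ∑ w ∈ Finset.univ.filter (fun w : HypOct n =>
          ∀ i ∈ Finset.Icc (1 : ℤ) n, ∀ j ∈ Finset.Icc (1 : ℤ) n,
            i < j → HypOct.fn w i < HypOct.fn w j),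
        ((-1 : Polynomial ℤ) ^ lenStat n (HypOct.fn w) * X ^ Lstat n (HypOct.fn w))
      = ∏ k ∈ Finset.range ((n + 1) / 2), (1 - X ^ (2 * k + 1)) := by
  classical
  rw [← partB n]
  apply Finset.sum_nbij' (i := gOf) (j := WS)
  · intro a _
    exact Finset.mem_univ _
  · intro S _
    rw [Finset.mem_filter]
    refine ⟨Finset.mem_univ _, ?_⟩
    intro i hi j hj hij
    rw [Finset.mem_Icc] at hi hj
    exact (good_WS S).hmono i j hi.1 hij hj.2
  · intro a ha
    rw [Finset.mem_filter] at ha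
    exact WS_gOf ha.2
  · intro S _
    exact gOf_WS S
  · intro a ha
    rw [Finset.mem_filter] at ha
    conv_lhs => rw [← WS_gOf ha.2]
    rw [lenStat_WS, Lstat_WS]
end

section
/- An even chessboard element w ∈ C_{n,0} lies in M_n (i.e. both factors of its parabolic factorisation w = w^{[n−1]} w_{[n−1]} are chessboard elements) if and only if w has no odd sandwich. -/
open Finset Polynomial

/-- `v` is an even chessboard element of `Bₙ`. -/
def EvenChess (n : ℕ) (v : ℤ → ℤ) : Prop :=
  ∀ j ∈ Finset.Icc (1 : ℤ) n, |v j| % 2 = j % 2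

/-- `v` is a chessboard element of `Bₙ`. -/
def Chess (n : ℕ) (v : ℤ → ℤ) : Prop :=
  (∀ j ∈ Finset.Icc (1 : ℤ) n, |v j| % 2 = j % 2) ∨
    (∀ j ∈ Finset.Icc (1 : ℤ) n, |v j| % 2 ≠ j % 2)

/-- The row pattern of `w` at row `i` is `+1`, i.e. the value `i` is taken
(positively) by `w` on `{1, …, n}`. -/
def RhoPos (n : ℕ) (w : ℤ → ℤ) (i : ℤ) : Prop :=
  ∃ j ∈ Finset.Icc (1 : ℤ) n, w j = i

/-- `(r, h)` is an odd sandwich in `w`. -/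
def OddSandwich (n : ℕ) (w : ℤ → ℤ) (r h : ℤ) : Prop :=
  1 ≤ r ∧ r ≤ (n : ℤ) - 2 ∧ 1 ≤ h ∧ h ≤ (n : ℤ) - 1 ∧ h % 2 = 1 ∧ r + h + 1 ≤ (n : ℤ) ∧
    (((RhoPos n w r ↔ RhoPos n w (r + h + 1)) ∧
        (∀ i : ℤ, 1 ≤ i → i ≤ h → ¬(RhoPos n w r ↔ RhoPos n w (r + i)))) ∨
      (r = 1 ∧ (∀ i : ℤ, 1 ≤ i → i ≤ h → (RhoPos n w 1 ↔ RhoPos n w (1 + i))) ∧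
        ¬(RhoPos n w 1 ↔ RhoPos n w (h + 2))))

section Aux

variable {n : ℕ} {u v w : ℤ → ℤ}

lemma signed_zero (hu : IsSigned n u) : u 0 = 0 := by
  have h := hu.1 0
  rw [neg_zero] at h
  omega

lemma signed_range (hu : IsSigned n u) {j : ℤ} (h1 : 1 ≤ j) (h2 : j ≤ (n : ℤ)) :
    -(n : ℤ) ≤ u j ∧ u j ≤ (n : ℤ) ∧ u j ≠ 0 := by
  have hm := hu.2.1 (Set.mem_Icc.2 ⟨by omega, by omega⟩ : j ∈ Set.Icc (-(n:ℤ)) n)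
  rw [Set.mem_Icc] at hm
  refine ⟨hm.1, hm.2, fun h0 => ?_⟩
  have h00 : u 0 = 0 := signed_zero hu
  have hj0 : j = 0 := hu.2.2.1 (Set.mem_Icc.2 ⟨by omega, by omega⟩)
    (Set.mem_Icc.2 ⟨by omega, by omega⟩) (h0.trans h00.symm)
  omega

lemma signed_exists (hu : IsSigned n u) {i : ℤ} (h1 : 1 ≤ i) (h2 : i ≤ (n : ℤ)) :
    ∃ j, 1 ≤ j ∧ j ≤ (n : ℤ) ∧ (u j = i ∨ u j = -i) := by
  obtain ⟨j, hj, hji⟩ := hu.2.2.2 (Set.mem_Icc.2 ⟨by omega, by omega⟩ : i ∈ Set.Icc (-(n:ℤ)) n)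
  rw [Set.mem_Icc] at hj
  rcases lt_trichotomy j 0 with h | h | h
  · refine ⟨-j, by omega, by omega, Or.inr ?_⟩
    have := hu.1 j
    omega
  · subst h
    have := signed_zero hu
    omega
  · exact ⟨j, by omega, hj.2, Or.inl hji⟩

lemma signed_not_both (hu : IsSigned n u) {i j j' : ℤ}
    (hj : 1 ≤ j) (hj2 : j ≤ (n : ℤ)) (hj' : 1 ≤ j') (hj'2 : j' ≤ (n : ℤ))
    (h : u j = i) (h' : u j' = -i) : False := by
  have h2 : u (-j') = i := by have := hu.1 j'; omega
  have hj0 : j = -j' := hu.2.2.1 (Set.mem_Icc.2 ⟨by omega, by omega⟩)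
    (Set.mem_Icc.2 ⟨by omega, by omega⟩) (h.trans h2.symm)
  omega

lemma asc_gap (hasc : ∀ i j : ℤ, 1 ≤ i → i < j → j ≤ (n : ℤ) → u i < u j)
    {j l : ℤ} (hj1 : 1 ≤ j) (hj2 : j + 1 ≤ (n : ℤ)) (hl1 : 1 ≤ l) (hl2 : l ≤ (n : ℤ)) :
    u l ≤ u j ∨ u (j + 1) ≤ u l := by
  rcases le_or_gt l j with h | h
  · rcases eq_or_lt_of_le h with rfl | h'
    · exact Or.inl le_rfl
    · exact Or.inl (hasc l j hl1 h' (by omega)).le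
  · rcases eq_or_lt_of_le (by omega : j + 1 ≤ l) with rfl | h'
    · exact Or.inr le_rfl
    · exact Or.inr (hasc (j + 1) l (by omega) h' hl2).le

lemma next_val (hasc : ∀ i j : ℤ, 1 ≤ i → i < j → j ≤ (n : ℤ) → u i < u j)
    {l l' : ℤ} (hl : 1 ≤ l) (hl2 : l ≤ (n : ℤ)) (hl' : 1 ≤ l') (hl'2 : l' ≤ (n : ℤ))
    (hlt : u l < u l') : l + 1 ≤ (n : ℤ) ∧ u l < u (l + 1) ∧ u (l + 1) ≤ u l' := by
  have hll' : l < l' := by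
    by_contra hc
    push_neg at hc
    rcases eq_or_lt_of_le hc with rfl | h'
    · exact absurd hlt (lt_irrefl _)
    · exact absurd (hasc l' l hl' h' hl2) (by omega)
  refine ⟨by omega, hasc l (l + 1) hl (by omega) (by omega), ?_⟩
  rcases eq_or_lt_of_le (by omega : l + 1 ≤ l') with h | h'
  · rw [h]
  · exact (hasc (l + 1) l' (by omega) h' hl'2).le

lemma rhoPos_of_eq {i j : ℤ} (hj : 1 ≤ j) (hj2 : j ≤ (n : ℤ)) (h : u j = i) :
    RhoPos n u i := ⟨j, Finset.mem_Icc.2 ⟨hj, hj2⟩, h⟩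

lemma not_rhoPos_of_eq_neg (hu : IsSigned n u) {i j : ℤ} (hj : 1 ≤ j) (hj2 : j ≤ (n : ℤ))
    (h : u j = -i) : ¬ RhoPos n u i := by
  rintro ⟨j', hj', h'⟩
  rw [Finset.mem_Icc] at hj'
  exact signed_not_both hu hj'.1 hj'.2 hj hj2 h' h

lemma exists_of_rhoPos {i : ℤ} (h : RhoPos n u i) :
    ∃ j, 1 ≤ j ∧ j ≤ (n : ℤ) ∧ u j = i := by
  obtain ⟨j, hj, h'⟩ := h
  rw [Finset.mem_Icc] at hj
  exact ⟨j, hj.1, hj.2, h'⟩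

lemma exists_of_not_rhoPos (hu : IsSigned n u) {i : ℤ} (h1 : 1 ≤ i) (h2 : i ≤ (n : ℤ))
    (h : ¬ RhoPos n u i) : ∃ j, 1 ≤ j ∧ j ≤ (n : ℤ) ∧ u j = -i := by
  obtain ⟨j, a, b, hc⟩ := signed_exists hu h1 h2
  rcases hc with hc | hc
  · exact absurd (rhoPos_of_eq a b hc) h
  · exact ⟨j, a, b, hc⟩

lemma chess_iff_alt : Chess n u ↔
    ∀ j : ℤ, 1 ≤ j → j + 1 ≤ (n : ℤ) → |u j| % 2 ≠ |u (j + 1)| % 2 := by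
  constructor
  · rintro (hc | hc) j h1 h2
    · have a := hc j (Finset.mem_Icc.2 ⟨by omega, by omega⟩)
      have b := hc (j + 1) (Finset.mem_Icc.2 ⟨by omega, by omega⟩)
      omega
    · have a := hc j (Finset.mem_Icc.2 ⟨by omega, by omega⟩)
      have b := hc (j + 1) (Finset.mem_Icc.2 ⟨by omega, by omega⟩)
      have a2 : (0:ℤ) ≤ |u j| := abs_nonneg _
      have b2 : (0:ℤ) ≤ |u (j+1)| := abs_nonneg _
      omega
  · intro halt
    rcases lt_or_ge (n : ℤ) 1 with hn | hn
    · left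
      intro j hj
      rw [Finset.mem_Icc] at hj
      omega
    · have key : ∀ j : ℤ, 1 ≤ j → j ≤ (n : ℤ) → (|u j| + j) % 2 = (|u 1| + 1) % 2 := by
        intro j hj
        refine Int.le_induction (motive := fun j _ => j ≤ (n:ℤ) → (|u j| + j) % 2 = (|u 1| + 1) % 2) ?_ ?_ j hj
        · intro _; rfl
        · intro k hk ih hkn
          have h1 := ih (by omega)
          have h2 := halt k hk (by omega)
          have a2 : (0:ℤ) ≤ |u k| := abs_nonneg _
          have b2 : (0:ℤ) ≤ |u (k+1)| := abs_nonneg _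
          omega
      rcases (by omega : (|u 1| + 1) % 2 = 0 ∨ (|u 1| + 1) % 2 = 1) with h | h
      · left
        intro j hj
        rw [Finset.mem_Icc] at hj
        have := key j hj.1 hj.2
        have a2 : (0:ℤ) ≤ |u j| := abs_nonneg _
        omega
      · right
        intro j hj
        rw [Finset.mem_Icc] at hj
        have := key j hj.1 hj.2
        have a2 : (0:ℤ) ≤ |u j| := abs_nonneg _
        omega

end Aux
section Core

variable {n : ℕ} {u : ℤ → ℤ}

lemma sandwich_of_not_chess (hu : IsSigned n u)
    (hasc : ∀ i j : ℤ, 1 ≤ i → i < j → j ≤ (n : ℤ) → u i < u j)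
    (h : ¬ Chess n u) : ∃ r h' : ℤ, OddSandwich n u r h' := by
  rw [chess_iff_alt] at h
  push_neg at h
  obtain ⟨j, hj1, hj2, hpar⟩ := h
  have hrj := signed_range hu hj1 (by omega)
  have hrj1 := signed_range hu (by omega : (1:ℤ) ≤ j + 1) hj2
  have hab : u j < u (j + 1) := hasc j (j + 1) hj1 (by omega) hj2
  have gap : ∀ l, 1 ≤ l → l ≤ (n : ℤ) → u l ≤ u j ∨ u (j + 1) ≤ u l :=
    fun l hl1 hl2 => asc_gap hasc hj1 hj2 hl1 hl2
  rcases lt_trichotomy (u j) 0 with hneg | h0 | hposa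
  · rcases lt_trichotomy (u (j + 1)) 0 with hnegb | h0b | hposb
    · -- both negative
      have e1 : |u j| = -u j := abs_of_neg hneg
      have e2 : |u (j + 1)| = -u (j + 1) := abs_of_neg hnegb
      refine ⟨-u (j + 1), u (j + 1) - u j - 1, by omega, by omega, by omega, by omega,
        by omega, by omega, Or.inl ⟨?_, ?_⟩⟩
      · have hre : -u (j + 1) + (u (j + 1) - u j - 1) + 1 = -u j := by ring
        rw [hre]
        exact iff_of_false
          (not_rhoPos_of_eq_neg hu (by omega) hj2 (by omega : u (j + 1) = -(-u (j + 1))))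
          (not_rhoPos_of_eq_neg hu hj1 (by omega) (by omega : u j = -(-u j)))
      · intro i hi1 hi2 hiff
        have hρr : ¬ RhoPos n u (-u (j + 1)) :=
          not_rhoPos_of_eq_neg hu (by omega) hj2 (by omega : u (j + 1) = -(-u (j + 1)))
        obtain ⟨l, hl1, hl2, hc⟩ := signed_exists hu (by omega : (1:ℤ) ≤ -u (j + 1) + i)
          (by omega : -u (j + 1) + i ≤ (n : ℤ))
        rcases hc with hc | hc
        · exact hρr (hiff.2 (rhoPos_of_eq hl1 hl2 hc))
        · rcases gap l hl1 hl2 with hg | hg <;> omega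
    · omega
    · -- u j < 0 < u (j+1)
      have e1 : |u j| = -u j := abs_of_neg hneg
      have e2 : |u (j + 1)| = u (j + 1) := abs_of_pos hposb
      have hne : -u j ≠ u (j + 1) := by
        intro hc
        exact signed_not_both hu (by omega : (1:ℤ) ≤ j + 1) hj2 hj1 (by omega) rfl
          (by omega : u j = -u (j + 1))
      rcases lt_or_gt_of_ne hne with h2 | h3
      · -- -u j < u (j+1) : claim u j = -1
        have hja : u j = -1 := by
          by_contra hja
          obtain ⟨l, hl1, hl2, hc⟩ := signed_exists hu le_rfl (by omega : (1:ℤ) ≤ (n : ℤ))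
          rcases hc with hc | hc <;> rcases gap l hl1 hl2 with hg | hg <;> omega
        refine ⟨1, u (j + 1) - 2, le_rfl, by omega, by omega, by omega, by omega, by omega,
          Or.inr ⟨rfl, ?_, ?_⟩⟩
        · intro i hi1 hi2
          refine iff_of_false
            (not_rhoPos_of_eq_neg hu hj1 (by omega) (by omega : u j = -1)) ?_
          intro hρ
          obtain ⟨l, hl1, hl2, hc⟩ := exists_of_rhoPos hρ
          rcases gap l hl1 hl2 with hg | hg <;> omega
        · have hre : u (j + 1) - 2 + 2 = u (j + 1) := by ring
          rw [hre]
          intro hiff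
          exact (not_rhoPos_of_eq_neg hu hj1 (by omega) (by omega : u j = -1))
            (hiff.2 (rhoPos_of_eq (by omega) hj2 rfl))
      · -- u (j+1) < -u j : claim u (j+1) = 1
        have hjb : u (j + 1) = 1 := by
          by_contra hjb
          obtain ⟨l, hl1, hl2, hc⟩ := signed_exists hu le_rfl (by omega : (1:ℤ) ≤ (n : ℤ))
          rcases hc with hc | hc <;> rcases gap l hl1 hl2 with hg | hg <;> omega
        refine ⟨1, -u j - 2, le_rfl, by omega, by omega, by omega, by omega, by omega,
          Or.inr ⟨rfl, ?_, ?_⟩⟩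
        · intro i hi1 hi2
          refine iff_of_true (rhoPos_of_eq (by omega) hj2 (by omega : u (j + 1) = 1)) ?_
          obtain ⟨l, hl1, hl2, hc⟩ := signed_exists hu (by omega : (1:ℤ) ≤ 1 + i)
            (by omega : 1 + i ≤ (n : ℤ))
          rcases hc with hc | hc
          · exact rhoPos_of_eq hl1 hl2 hc
          · rcases gap l hl1 hl2 with hg | hg
            · omega
            · omega
        · have hre : -u j - 2 + 2 = -u j := by ring
          rw [hre]
          intro hiff
          exact (not_rhoPos_of_eq_neg hu hj1 (by omega) (by omega : u j = -(-u j)))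
            (hiff.1 (rhoPos_of_eq (by omega) hj2 (by omega : u (j + 1) = 1)))
  · exact absurd h0 hrj.2.2
  · -- 0 < u j < u (j+1)
    have hb : 0 < u (j + 1) := by omega
    have e1 : |u j| = u j := abs_of_pos hposa
    have e2 : |u (j + 1)| = u (j + 1) := abs_of_pos hb
    refine ⟨u j, u (j + 1) - u j - 1, by omega, by omega, by omega, by omega, by omega,
      by omega, Or.inl ⟨?_, ?_⟩⟩
    · have hre : u j + (u (j + 1) - u j - 1) + 1 = u (j + 1) := by ring
      rw [hre]
      exact iff_of_true (rhoPos_of_eq hj1 (by omega) rfl)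
        (rhoPos_of_eq (by omega) hj2 rfl)
    · intro i hi1 hi2 hiff
      have hρm := hiff.1 (rhoPos_of_eq hj1 (by omega) rfl)
      obtain ⟨l, hl1, hl2, hc⟩ := exists_of_rhoPos hρm
      rcases gap l hl1 hl2 with hg | hg <;> omega

lemma not_chess_of_sandwich (hu : IsSigned n u)
    (hasc : ∀ i j : ℤ, 1 ≤ i → i < j → j ≤ (n : ℤ) → u i < u j)
    {r h' : ℤ} (hs : OddSandwich n u r h') : ¬ Chess n u := by
  rw [chess_iff_alt]
  intro halt
  obtain ⟨hr1, hr2, hh1, hh2, hodd, hrhn, hcase⟩ := hs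
  rcases hcase with ⟨hiff, hmid⟩ | ⟨hre, hsame, hdiff⟩
  · by_cases hρr : RhoPos n u r
    · obtain ⟨l, hl1, hl2, hvl⟩ := exists_of_rhoPos hρr
      obtain ⟨l', hl1', hl2', hvl'⟩ := exists_of_rhoPos (hiff.1 hρr)
      obtain ⟨hln, hlt1, hle1⟩ := next_val hasc hl1 hl2 hl1' hl2' (by omega)
      have hnotmid : u (l + 1) = r + h' + 1 := by
        by_contra hne
        have := hmid (u (l + 1) - r) (by omega) (by omega)
        exact this (iff_of_true hρr
          (rhoPos_of_eq (by omega) (by omega) (by omega : u (l + 1) = r + (u (l + 1) - r))))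
      have hha := halt l hl1 hln
      have e1 : |u l| = u l := abs_of_pos (by omega)
      have e2 : |u (l + 1)| = u (l + 1) := abs_of_pos (by omega)
      omega
    · have hρb : ¬ RhoPos n u (r + h' + 1) := fun hb => hρr (hiff.2 hb)
      obtain ⟨l, hl1, hl2, hvl⟩ := exists_of_not_rhoPos hu (by omega) (by omega) hρr
      obtain ⟨l', hl1', hl2', hvl'⟩ := exists_of_not_rhoPos hu (by omega) (by omega) hρb
      obtain ⟨hln, hlt1, hle1⟩ := next_val hasc hl1' hl2' hl1 hl2 (by omega)
      have hnotmid : u (l' + 1) = -r := by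
        by_contra hne
        have hm := hmid (-u (l' + 1) - r) (by omega) (by omega)
        have hρm : RhoPos n u (r + (-u (l' + 1) - r)) := by
          by_contra hno
          exact hm (iff_of_false hρr hno)
        obtain ⟨l₂, a2, b2, c2⟩ := exists_of_rhoPos hρm
        exact signed_not_both hu a2 b2 (by omega) (by omega) c2
          (by omega : u (l' + 1) = -(r + (-u (l' + 1) - r)))
      have hha := halt l' hl1' hln
      have e1 : |u l'| = -u l' := abs_of_neg (by omega)
      have e2 : |u (l' + 1)| = -u (l' + 1) := abs_of_neg (by omega)
      omega
  · subst hre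
    by_cases hρ1 : RhoPos n u 1
    · have hρb : ¬ RhoPos n u (h' + 2) := fun hb => hdiff (iff_of_true hρ1 hb)
      obtain ⟨l, hl1, hl2, hvl⟩ := exists_of_not_rhoPos hu (by omega) (by omega) hρb
      obtain ⟨l', hl1', hl2', hvl'⟩ := exists_of_rhoPos hρ1
      obtain ⟨hln, hlt1, hle1⟩ := next_val hasc hl1 hl2 hl1' hl2' (by omega)
      have hz := signed_range hu (by omega : (1:ℤ) ≤ l + 1) hln
      have hnot : u (l + 1) = 1 := by
        by_contra hne
        have hm : 1 ≤ -u (l + 1) ∧ -u (l + 1) ≤ h' + 1 := by omega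
        rcases eq_or_lt_of_le hm.1 with h1 | h1
        · exact signed_not_both hu hl1' hl2' (by omega) (by omega) hvl'
            (by omega : u (l + 1) = -1)
        · have hρm : RhoPos n u (1 + (-u (l + 1) - 1)) :=
            (hsame (-u (l + 1) - 1) (by omega) (by omega)).1 hρ1
          obtain ⟨l₂, a2, b2, c2⟩ := exists_of_rhoPos hρm
          exact signed_not_both hu a2 b2 (by omega) (by omega) c2
            (by omega : u (l + 1) = -(1 + (-u (l + 1) - 1)))
      have hha := halt l hl1 hln
      have e1 : |u l| = -u l := abs_of_neg (by omega)
      have e2 : |u (l + 1)| = u (l + 1) := abs_of_pos (by omega)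
      omega
    · have hρb : RhoPos n u (h' + 2) := by
        by_contra hno
        exact hdiff (iff_of_false hρ1 hno)
      obtain ⟨l, hl1, hl2, hvl⟩ := exists_of_not_rhoPos hu le_rfl (by omega) hρ1
      obtain ⟨l', hl1', hl2', hvl'⟩ := exists_of_rhoPos hρb
      obtain ⟨hln, hlt1, hle1⟩ := next_val hasc hl1 hl2 hl1' hl2' (by omega)
      have hz := signed_range hu (by omega : (1:ℤ) ≤ l + 1) hln
      have hnot : u (l + 1) = h' + 2 := by
        by_contra hne
        have hm : 1 ≤ u (l + 1) ∧ u (l + 1) ≤ h' + 1 := by omega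
        rcases eq_or_lt_of_le hm.1 with h1 | h1
        · exact hρ1 (rhoPos_of_eq (by omega) (by omega) (by omega : u (l + 1) = 1))
        · exact hρ1 ((hsame (u (l + 1) - 1) (by omega) (by omega)).2
            (rhoPos_of_eq (by omega) (by omega) (by omega : u (l + 1) = 1 + (u (l + 1) - 1))))
      have hha := halt l hl1 hln
      have e1 : |u l| = -u l := abs_of_neg (by omega)
      have e2 : |u (l + 1)| = u (l + 1) := abs_of_pos (by omega)
      omega

end Core
section Final

variable {n : ℕ} {w u v : ℤ → ℤ}

lemma v_mem (hv : IsSigned n v) (hpos : ∀ j ∈ Finset.Icc (1 : ℤ) n, 0 < v j)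
    {j : ℤ} (h1 : 1 ≤ j) (h2 : j ≤ (n : ℤ)) : 1 ≤ v j ∧ v j ≤ (n : ℤ) := by
  have := signed_range hv h1 h2
  have := hpos j (Finset.mem_Icc.2 ⟨h1, h2⟩)
  omega

lemma v_surj (hv : IsSigned n v) (hpos : ∀ j ∈ Finset.Icc (1 : ℤ) n, 0 < v j)
    {m : ℤ} (h1 : 1 ≤ m) (h2 : m ≤ (n : ℤ)) :
    ∃ j, 1 ≤ j ∧ j ≤ (n : ℤ) ∧ v j = m := by
  obtain ⟨j, a, b, hc⟩ := signed_exists hv h1 h2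
  rcases hc with hc | hc
  · exact ⟨j, a, b, hc⟩
  · have := hpos j (Finset.mem_Icc.2 ⟨a, b⟩)
    omega

lemma rho_wu (hv : IsSigned n v) (hpos : ∀ j ∈ Finset.Icc (1 : ℤ) n, 0 < v j)
    (hfact : ∀ j : ℤ, w j = u (v j)) (i : ℤ) :
    RhoPos n w i ↔ RhoPos n u i := by
  constructor
  · rintro ⟨j, hj, hji⟩
    rw [Finset.mem_Icc] at hj
    have hm := v_mem hv hpos hj.1 hj.2
    exact rhoPos_of_eq hm.1 hm.2 (by rw [← hfact j, hji])
  · rintro ⟨m, hm, hmi⟩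
    rw [Finset.mem_Icc] at hm
    obtain ⟨j, a, b, hc⟩ := v_surj hv hpos hm.1 hm.2
    refine rhoPos_of_eq a b ?_
    rw [hfact j, hc, hmi]

lemma oddSandwich_congr {r h : ℤ}
    (hrho : ∀ i, RhoPos n w i ↔ RhoPos n u i) :
    OddSandwich n w r h ↔ OddSandwich n u r h := by
  unfold OddSandwich
  simp only [hrho]

lemma chess_u_to_v (hv : IsSigned n v) (hpos : ∀ j ∈ Finset.Icc (1 : ℤ) n, 0 < v j)
    (hfact : ∀ j : ℤ, w j = u (v j)) (hwe : EvenChess n w)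
    (hc : Chess n u) : Chess n v := by
  rcases hc with hc | hc
  · left
    intro j hj
    rw [Finset.mem_Icc] at hj
    have hm := v_mem hv hpos hj.1 hj.2
    have h1 := hwe j (Finset.mem_Icc.2 ⟨hj.1, hj.2⟩)
    have h2 := hc (v j) (Finset.mem_Icc.2 ⟨hm.1, hm.2⟩)
    rw [hfact j] at h1
    have e : |v j| = v j := abs_of_pos (by omega)
    omega
  · right
    intro j hj
    rw [Finset.mem_Icc] at hj
    have hm := v_mem hv hpos hj.1 hj.2
    have h1 := hwe j (Finset.mem_Icc.2 ⟨hj.1, hj.2⟩)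
    have h2 := hc (v j) (Finset.mem_Icc.2 ⟨hm.1, hm.2⟩)
    rw [hfact j] at h1
    have e : |v j| = v j := abs_of_pos (by omega)
    have a2 : (0:ℤ) ≤ |u (v j)| := abs_nonneg _
    omega

lemma chess_v_to_u (hv : IsSigned n v) (hpos : ∀ j ∈ Finset.Icc (1 : ℤ) n, 0 < v j)
    (hfact : ∀ j : ℤ, w j = u (v j)) (hwe : EvenChess n w)
    (hc : Chess n v) : Chess n u := by
  rcases hc with hc | hc
  · left
    intro m hm
    rw [Finset.mem_Icc] at hm
    obtain ⟨j, a, b, hj⟩ := v_surj hv hpos hm.1 hm.2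
    have h1 := hwe j (Finset.mem_Icc.2 ⟨a, b⟩)
    have h2 := hc j (Finset.mem_Icc.2 ⟨a, b⟩)
    rw [hfact j, hj] at h1
    have e : |v j| = v j := abs_of_pos (hpos j (Finset.mem_Icc.2 ⟨a, b⟩))
    rw [e, hj] at h2
    omega
  · right
    intro m hm
    rw [Finset.mem_Icc] at hm
    obtain ⟨j, a, b, hj⟩ := v_surj hv hpos hm.1 hm.2
    have h1 := hwe j (Finset.mem_Icc.2 ⟨a, b⟩)
    have h2 := hc j (Finset.mem_Icc.2 ⟨a, b⟩)
    rw [hfact j, hj] at h1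
    have e : |v j| = v j := abs_of_pos (hpos j (Finset.mem_Icc.2 ⟨a, b⟩))
    rw [e, hj] at h2
    have a2 : (0:ℤ) ≤ |u m| := abs_nonneg _
    omega

end Final
/-- An even chessboard element `w` with parabolic factorisation `w = u·v`
(`u` ascending, `v ∈ Sₙ`) has both factors chessboard elements if and only if
`w` has no odd sandwich. -/
theorem mem_M_iff_no_odd_sandwich (n : ℕ) (w u v : ℤ → ℤ)
    (hw : IsSigned n w) (hu : IsSigned n u) (hv : IsSigned n v)
    (hasc : ∀ i j : ℤ, 1 ≤ i → i < j → j ≤ (n : ℤ) → u i < u j)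
    (hpos : ∀ j ∈ Finset.Icc (1 : ℤ) n, 0 < v j)
    (hfact : ∀ j : ℤ, w j = u (v j))
    (hwe : EvenChess n w) :
    (Chess n u ∧ Chess n v) ↔ ¬∃ r h : ℤ, OddSandwich n w r h := by
  have hrho := rho_wu hv hpos hfact (u := u)
  have hcuv : (Chess n u ∧ Chess n v) ↔ Chess n u :=
    ⟨And.left, fun h => ⟨h, chess_u_to_v hv hpos hfact hwe h⟩⟩
  rw [hcuv]
  constructor
  · rintro hc ⟨r, h, hs⟩
    exact not_chess_of_sandwich hu hasc ((oddSandwich_congr hrho).1 hs) hc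
  · intro hns
    by_contra hc
    obtain ⟨r, h', hs⟩ := sandwich_of_not_chess hu hasc hc
    exact hns ⟨r, h', (oddSandwich_congr hrho).2 hs⟩
end

section
/- Let w ∈ C_{n,0} be an ascending even chessboard element (w(1) < ⋯ < w(n) and |w(j)| ≡ j mod 2 for all j) and let j ∈ [⌊n/2⌋]. Then |w(2j)| − |w(2j−1)| is odd. Moreover: if w(2j) > 0 then |w(2j)| > |w(2j−1)| and w⁻¹(e) < 0 for every integer e with |w(2j−1)| < e < |w(2j)|; and if w(2j) < 0 then |w(2j−1)| − |w(2j)| = 1. -/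
open Finset Polynomial

lemma signed_w0 {n : ℕ} {w : ℤ → ℤ} (hw : IsSigned n w) : w 0 = 0 := by
  have h := hw.1 0; rw [neg_zero] at h; linarith

lemma card_abs_le (n : ℕ) (w : ℤ → ℤ) (hw : IsSigned n w) (v : ℤ) (hv : 1 ≤ v)
    (hvn : v ≤ (n : ℤ)) :
    ((Finset.Icc (1 : ℤ) n).filter (fun i => |w i| ≤ v)).card = v.toNat := by
  have hw0 : w 0 = 0 := signed_w0 hw
  have hcard : (Finset.Icc (1 : ℤ) v).card = v.toNat := by
    rw [Int.card_Icc]; omega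
  rw [← hcard]
  apply Finset.card_nbij (i := fun i => |w i|)
  · intro a ha
    simp only [Finset.mem_filter, Finset.mem_Icc, Finset.coe_filter, Finset.coe_Icc, Set.mem_Icc, Set.mem_setOf_eq, Finset.mem_coe] at ha ⊢
    refine ⟨?_, ha.2⟩
    rcases eq_or_ne (w a) 0 with h0 | h0
    · exfalso
      have : a = 0 := hw.2.injOn (by constructor <;> [omega; omega] : a ∈ Set.Icc (-(n:ℤ)) n)
        (by constructor <;> [omega; omega] : (0:ℤ) ∈ Set.Icc (-(n:ℤ)) n) (by rw [h0, hw0])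
      omega
    · have := abs_pos.mpr h0
      omega
  · intro a ha b hb hab
    simp only [Finset.coe_filter, Set.mem_setOf_eq, Finset.mem_Icc] at ha hb
    simp only at hab
    have h1 : w a = w b ∨ w a = - w b := by
      rcases abs_cases (w a) with ⟨h,_⟩ | ⟨h,_⟩ <;> rcases abs_cases (w b) with ⟨h',_⟩ | ⟨h',_⟩ <;>
        omega
    rcases h1 with h1 | h1
    · exact hw.2.injOn (by constructor <;> omega : a ∈ Set.Icc (-(n:ℤ)) n)
        (by constructor <;> omega : b ∈ Set.Icc (-(n:ℤ)) n) h1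
    · have h2 : w a = w (-b) := by rw [hw.1 b]; exact h1
      have := hw.2.injOn (by constructor <;> omega : a ∈ Set.Icc (-(n:ℤ)) n)
        (by constructor <;> omega : (-b) ∈ Set.Icc (-(n:ℤ)) n) h2
      omega
  · intro u hu
    simp only [Finset.coe_Icc, Set.mem_Icc] at hu
    obtain ⟨k, hk, hke⟩ := hw.2.surjOn (⟨by omega, by omega⟩ : u ∈ Set.Icc (-(n:ℤ)) n)
    simp only [Set.mem_Icc] at hk
    have hk0 : k ≠ 0 := by intro h; rw [h, hw0] at hke; omega
    have hka : 1 ≤ |k| := abs_pos.mpr hk0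
    have hkb : |k| ≤ (n : ℤ) := abs_le.mpr ⟨by omega, by omega⟩
    have habs : |w (|k|)| = u := by
      rcases abs_cases k with ⟨h, _⟩ | ⟨h, _⟩
      · rw [h, hke]; exact abs_of_nonneg (by omega)
      · rw [h, hw.1 k, hke, abs_neg]; exact abs_of_nonneg (by omega)
    refine ⟨|k|, ?_, habs⟩
    simp only [Finset.coe_filter, Set.mem_setOf_eq, Finset.mem_Icc]
    exact ⟨⟨hka, hkb⟩, by omega⟩

/-- Structure of ascending even chessboard elements: for each pair of adjacent
columns `(2j−1, 2j)`, the difference `|w(2j)| − |w(2j−1)|` is odd; if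
`w(2j) > 0` then `|w(2j−1)| < |w(2j)|` and all rows strictly in between carry
negative entries; if `w(2j) < 0` then `|w(2j−1)| − |w(2j)| = 1`. -/
theorem ascending_chessboard_structure (n : ℕ) (w : ℤ → ℤ) (hw : IsSigned n w)
    (hasc : ∀ i j : ℤ, 1 ≤ i → i < j → j ≤ (n : ℤ) → w i < w j)
    (hchess : ∀ j ∈ Finset.Icc (1 : ℤ) n, |w j| % 2 = j % 2)
    (j : ℤ) (hj1 : 1 ≤ j) (hj2 : 2 * j ≤ (n : ℤ)) :
    Odd (|w (2 * j)| - |w (2 * j - 1)|) ∧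
    (0 < w (2 * j) →
      |w (2 * j - 1)| < |w (2 * j)| ∧
      ∀ e : ℤ, |w (2 * j - 1)| < e → e < |w (2 * j)| →
        ∃ k : ℤ, -(n : ℤ) ≤ k ∧ k ≤ -1 ∧ w k = e) ∧
    (w (2 * j) < 0 → |w (2 * j - 1)| - |w (2 * j)| = 1) := by
  have hw0 : w 0 = 0 := signed_w0 hw
  have hmem : ∀ i : ℤ, -(n : ℤ) ≤ i → i ≤ n → -(n : ℤ) ≤ w i ∧ w i ≤ n := by
    intro i h1 h2
    exact hw.2.mapsTo ⟨h1, h2⟩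
  have hinj : ∀ a b : ℤ, -(n : ℤ) ≤ a → a ≤ n → -(n : ℤ) ≤ b → b ≤ n → w a = w b → a = b := by
    intro a b h1 h2 h3 h4 h
    exact hw.2.injOn ⟨h1, h2⟩ ⟨h3, h4⟩ h
  have hsurj : ∀ e : ℤ, -(n : ℤ) ≤ e → e ≤ n → ∃ k, -(n : ℤ) ≤ k ∧ k ≤ n ∧ w k = e := by
    intro e h1 h2
    obtain ⟨k, hk, hke⟩ := hw.2.surjOn (⟨h1, h2⟩ : e ∈ Set.Icc (-(n:ℤ)) n)
    exact ⟨k, hk.1, hk.2, hke⟩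
  have hne0 : ∀ i : ℤ, 1 ≤ i → i ≤ n → w i ≠ 0 := by
    intro i h1 h2 h
    have := hinj i 0 (by omega) h2 (by omega) (by omega) (by rw [h, hw0])
    omega
  have hmono : ∀ i k : ℤ, 1 ≤ i → i ≤ k → k ≤ n → w i ≤ w k := by
    intro i k h1 h2 h3
    rcases eq_or_lt_of_le h2 with h | h
    · rw [h]
    · exact (hasc i k h1 h h3).le
  have hch2 : |w (2 * j)| % 2 = 0 := by
    have := hchess (2 * j) (by rw [Finset.mem_Icc]; omega)
    omega
  have hch1 : |w (2 * j - 1)| % 2 = 1 := by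
    have := hchess (2 * j - 1) (by rw [Finset.mem_Icc]; omega)
    omega
  have hab := hasc (2 * j - 1) (2 * j) (by omega) (by omega) (by omega)
  refine ⟨by rw [Int.odd_iff]; omega, ?_, ?_⟩
  · -- case w(2j) > 0
    intro hpos
    have habs2 : |w (2 * j)| = w (2 * j) := abs_of_pos hpos
    constructor
    · -- |w(2j-1)| < |w(2j)|
      rcases lt_trichotomy (w (2 * j - 1)) 0 with hneg | h0 | hposa
      · -- negative case
        have habs1 : |w (2 * j - 1)| = -w (2 * j - 1) := abs_of_neg hneg
        rw [habs1, habs2]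
        by_contra hcon
        push_neg at hcon
        -- hcon : w (2j) ≤ - w (2j-1)
        have hne : w (2 * j) ≠ -w (2 * j - 1) := by
          intro h
          have h2 : w (2 * j) = w (-(2 * j - 1)) := by rw [hw.1 (2 * j - 1)]; exact h
          have := hinj (2 * j) (-(2 * j - 1)) (by omega) (by omega) (by omega) (by omega) h2
          omega
        have hlt : w (2 * j) < -w (2 * j - 1) := lt_of_le_of_ne hcon hne
        have hv2 : w (2 * j) = 1 := by
          by_contra h1
          have hv2ge : 2 ≤ w (2 * j) := by omega
          obtain ⟨k, hk1, hk2, hke⟩ := hsurj 1 (by omega) (by omega)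
          have hk0 : k ≠ 0 := by intro h; rw [h, hw0] at hke; omega
          rcases lt_or_gt_of_ne hk0 with hkneg | hkpos
          · -- k < 0, then w(-k) = -1
            have hwm : w (-k) = -1 := by rw [hw.1 k, hke]
            have hm1 : -k ≤ 2 * j - 1 ∨ 2 * j ≤ -k := by omega
            rcases hm1 with hm | hm
            · have := hmono (-k) (2 * j - 1) (by omega) hm (by omega)
              omega
            · have := hmono (2 * j) (-k) (by omega) hm (by omega)
              omega
          · -- k > 0
            have h1' : k ≤ 2 * j - 1 ∨ 2 * j ≤ k := by omega
            rcases h1' with hm | hm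
            · have := hmono k (2 * j - 1) (by omega) hm (by omega)
              omega
            · have := hmono (2 * j) k (by omega) hm hk2
              omega
        rw [hv2] at hch2
        norm_num at hch2
      · exact absurd h0 (hne0 (2 * j - 1) (by omega) (by omega))
      · have habs1 : |w (2 * j - 1)| = w (2 * j - 1) := abs_of_pos hposa
        omega
    · -- intermediate values have negative preimages
      intro e he1 he2
      rw [habs2] at he2
      have he1' : 1 ≤ e := by
        have := abs_nonneg (w (2 * j - 1)); omega
      have hen : e ≤ n := by
        have := (hmem (2 * j) (by omega) (by omega)).2
        omega
      obtain ⟨k, hk1, hk2, hke⟩ := hsurj e (by omega) hen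
      have hk0 : k ≠ 0 := by intro h; rw [h, hw0] at hke; omega
      rcases lt_or_gt_of_ne hk0 with hkneg | hkpos
      · exact ⟨k, hk1, by omega, hke⟩
      · exfalso
        have hle : w (2 * j - 1) ≤ |w (2 * j - 1)| := le_abs_self _
        have h1' : k ≤ 2 * j - 1 ∨ 2 * j ≤ k := by omega
        rcases h1' with hm | hm
        · have := hmono k (2 * j - 1) (by omega) hm (by omega)
          omega
        · have := hmono (2 * j) k (by omega) hm hk2
          omega
  · -- case w(2j) < 0
    intro hneg
    have hanneg : w (2 * j - 1) < 0 := by omega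
    have habs2 : |w (2 * j)| = -w (2 * j) := abs_of_neg hneg
    have habs1 : |w (2 * j - 1)| = -w (2 * j - 1) := abs_of_neg hanneg
    rw [habs1, habs2]
    by_contra hcon
    have hgap : w (2 * j - 1) ≤ w (2 * j) - 2 := by omega
    set v : ℤ := -w (2 * j) with hv
    have hv1 : 1 ≤ v := by omega
    have hbnd := hmem (2 * j - 1) (by omega) (by omega)
    obtain ⟨k, hk1, hk2, hke⟩ := hsurj (w (2 * j) - 1) (by omega) (by omega)
    have hk0 : k ≠ 0 := by intro h; rw [h, hw0] at hke; omega
    have hkneg : k < 0 := by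
      rcases lt_or_gt_of_ne hk0 with h | h
      · exact h
      · exfalso
        have h1' : k ≤ 2 * j - 1 ∨ 2 * j ≤ k := by omega
        rcases h1' with hm | hm
        · have := hmono k (2 * j - 1) (by omega) hm (by omega)
          omega
        · have := hmono (2 * j) k (by omega) hm hk2
          omega
    set m : ℤ := -k with hm
    have hm1 : 1 ≤ m := by omega
    have hm2 : m ≤ n := by omega
    have hwm : w m = v + 1 := by
      rw [hm, hw.1 k, hke]; omega
    have hvn : v ≤ (n : ℤ) := by
      have := hmem (2 * j) (by omega) (by omega); omega
    -- S = Icc (2j) (m-1)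
    have hS : (Finset.Icc (1 : ℤ) n).filter (fun i => |w i| ≤ v) = Finset.Icc (2 * j) (m - 1) := by
      ext i
      simp only [Finset.mem_filter, Finset.mem_Icc]
      constructor
      · rintro ⟨⟨hi1, hi2⟩, habsle⟩
        constructor
        · by_contra hc
          push_neg at hc
          have := hmono i (2 * j - 1) hi1 (by omega) (by omega)
          have : |w i| = -w i := abs_of_neg (by omega)
          omega
        · by_contra hc
          push_neg at hc
          have := hmono m i hm1 (by omega) hi2
          have : |w i| = w i := abs_of_pos (by omega)
          omega
      · rintro ⟨hi1, hi2⟩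
        have hii1 : 1 ≤ i := by omega
        have hii2 : i ≤ (n : ℤ) := by omega
        refine ⟨⟨hii1, hii2⟩, ?_⟩
        rcases lt_trichotomy (w i) 0 with hwi | hwi | hwi
        · have := hmono (2 * j) i (by omega) hi1 hii2
          rw [abs_of_neg hwi]; omega
        · exact absurd hwi (hne0 i hii1 hii2)
        · have := hasc i m hii1 (by omega) hm2
          rw [abs_of_pos hwi]; omega
    have hcard := card_abs_le n w hw v hv1 hvn
    rw [hS, Int.card_Icc] at hcard
    -- hcard : (m - 1 + 1 - 2*j).toNat = v.toNat
    have hmv : m = 2 * j + v := by omega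
    -- chessboard at m gives contradiction
    have hchm := hchess m (by rw [Finset.mem_Icc]; exact ⟨hm1, hm2⟩)
    rw [hwm] at hchm
    rw [abs_of_pos (by omega : (0:ℤ) < v + 1)] at hchm
    omega
end

section
/- Suppose w ∈ E_n, i.e. w is an even chessboard element whose parabolic factorisation w = w^{[n−1]} w_{[n−1]} (ascending part times S_n-part) has both factors even chessboard elements. Then L(w) = L(w^{[n−1]}) + L(w_{[n−1]}). -/
open Finset Polynomial

noncomputable def myA (n : ℕ) (w : ℤ → ℤ) : Finset (ℤ × ℤ) :=
  (Finset.Icc (1 : ℤ) n ×ˢ Finset.Icc (1 : ℤ) n).filter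
    fun p => p.1 < p.2 ∧ w p.2 < w p.1 ∧ p.1 % 2 ≠ p.2 % 2

noncomputable def myB (n : ℕ) (w : ℤ → ℤ) : Finset (ℤ × ℤ) :=
  (Finset.Icc (1 : ℤ) n ×ˢ Finset.Icc (1 : ℤ) n).filter
    fun p => p.1 < p.2 ∧ w p.1 + w p.2 < 0 ∧ p.1 % 2 ≠ p.2 % 2

noncomputable def myC (n : ℕ) (w : ℤ → ℤ) : Finset ℤ :=
  (Finset.Icc (1 : ℤ) n).filter fun i => w i < 0 ∧ i % 2 = 1

lemma lstat_decomp (n : ℕ) (w : ℤ → ℤ) (hodd : ∀ j, w (-j) = -w j) :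
    Lstat n w = (myA n w).card + (myB n w).card + (myC n w).card := by
  classical
  have w0 : w 0 = 0 := by have h := hodd 0; rw [neg_zero] at h; omega
  have memL : ∀ p : ℤ × ℤ, p ∈ Lset n w ↔
      (-(n:ℤ) ≤ p.1 ∧ p.1 ≤ n ∧ -(n:ℤ) ≤ p.2 ∧ p.2 ≤ n ∧ p.1 < p.2 ∧
        w p.2 < w p.1 ∧ p.1 % 2 ≠ p.2 % 2) := by
    intro p
    simp only [Lset, Finset.mem_filter, Finset.mem_product, Finset.mem_Icc]
    tauto
  set P := (Lset n w).filter (fun p => 0 < p.1 + p.2) with hPdef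
  have hsplit : (Lset n w).card =
      P.card + ((Lset n w).filter (fun p => ¬ 0 < p.1 + p.2)).card :=
    (Finset.card_filter_add_card_filter_not _).symm
  have hNP : ((Lset n w).filter (fun p => ¬ 0 < p.1 + p.2)).card = P.card := by
    apply Finset.card_bij (fun p _ => ((-p.2, -p.1) : ℤ × ℤ))
    · intro p hp
      simp only [Finset.mem_filter] at hp
      obtain ⟨hL, hs⟩ := hp
      rw [memL] at hL
      simp only [hPdef, Finset.mem_filter, memL]
      have h1 : w (-p.1) = -w p.1 := hodd p.1
      have h2 : w (-p.2) = -w p.2 := hodd p.2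
      refine ⟨⟨by omega, by omega, by omega, by omega, by omega, by omega, by omega⟩, by omega⟩
    · intro p hp q hq h
      simp only [Prod.mk.injEq] at h
      exact Prod.ext (by omega) (by omega)
    · intro q hq
      simp only [hPdef, Finset.mem_filter, memL] at hq
      refine ⟨(-q.2, -q.1), ?_, ?_⟩
      · simp only [Finset.mem_filter, memL]
        have h1 : w (-q.1) = -w q.1 := hodd q.1
        have h2 : w (-q.2) = -w q.2 := hodd q.2
        exact ⟨⟨by omega, by omega, by omega, by omega, by omega, by omega, by omega⟩, by omega⟩
      · simp
  -- P equals the disjoint union of A, B', C'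
  set B' := (myB n w).image (fun p => ((-p.1, p.2) : ℤ × ℤ)) with hB'def
  set C' := (myC n w).image (fun j => ((0 : ℤ), j)) with hC'def
  have hPeq : P = myA n w ∪ B' ∪ C' := by
    ext p
    simp only [hPdef, Finset.mem_filter, memL, Finset.mem_union, hB'def, hC'def,
      Finset.mem_image, myA, myB, myC, Finset.mem_product, Finset.mem_Icc, Prod.mk.injEq]
    constructor
    · rintro ⟨⟨h1, h2, h3, h4, h5, h6, h7⟩, hs⟩
      rcases lt_trichotomy p.1 0 with hneg | hzero | hposv
      · have h8 := hodd (-p.1)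
        simp only [neg_neg] at h8
        refine Or.inl (Or.inr ⟨(-p.1, p.2), ?_, Prod.ext (by dsimp only; omega) rfl⟩)
        dsimp only
        exact ⟨⟨⟨by omega, by omega⟩, by omega, by omega⟩, by omega, by omega, by omega⟩
      · have h9 : w p.1 = 0 := by rw [hzero, w0]
        refine Or.inr ⟨p.2, ?_, Prod.ext (by dsimp only; omega) rfl⟩
        exact ⟨⟨by omega, by omega⟩, by omega, by omega⟩
      · exact Or.inl (Or.inl ⟨⟨⟨by omega, by omega⟩, by omega, by omega⟩, by omega, by omega,
          by omega⟩)
    · rintro ((⟨⟨⟨ha, hb⟩, hc, hd⟩, he, hf, hg⟩ | ⟨q, ⟨⟨⟨ha, hb⟩, hc, hd⟩, he, hf, hg⟩, rfl⟩) |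
        ⟨j, ⟨⟨ha, hb⟩, hc, hd⟩, rfl⟩) <;> try dsimp only
      · exact ⟨⟨by omega, by omega, by omega, by omega, by omega, by omega, by omega⟩, by omega⟩
      · have h8 : w (-q.1) = -w q.1 := hodd q.1
        exact ⟨⟨by omega, by omega, by omega, by omega, by omega, by omega, by omega⟩, by omega⟩
      · exact ⟨⟨by omega, by omega, by omega, by omega, by omega, by omega, by omega⟩, by omega⟩
  have hd1 : Disjoint (myA n w) B' := by
    rw [Finset.disjoint_left]
    intro p hp hp'
    simp only [myA, Finset.mem_filter, Finset.mem_product, Finset.mem_Icc] at hp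
    simp only [hB'def, Finset.mem_image, myB, Finset.mem_filter, Finset.mem_product,
      Finset.mem_Icc, Prod.mk.injEq] at hp'
    obtain ⟨q, ⟨⟨⟨ha, _⟩, _⟩, _⟩, h1, _⟩ := hp'
    omega
  have hd2 : Disjoint (myA n w ∪ B') C' := by
    rw [Finset.disjoint_left]
    intro p hp hp'
    simp only [hC'def, Finset.mem_image, myC, Finset.mem_filter, Finset.mem_Icc] at hp'
    obtain ⟨j, _, h1, _⟩ := hp'
    simp only [Finset.mem_union, myA, hB'def, Finset.mem_image, myB, Finset.mem_filter,
      Finset.mem_product, Finset.mem_Icc, Prod.mk.injEq] at hp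
    rcases hp with ⟨⟨⟨ha, _⟩, _⟩, _⟩ | ⟨q, ⟨⟨⟨ha, _⟩, _⟩, _⟩, h2, _⟩ <;> omega
  have hcardB' : B'.card = (myB n w).card := by
    apply Finset.card_image_of_injective
    intro a b h
    simp only [Prod.mk.injEq] at h
    exact Prod.ext (by omega) h.2
  have hcardC' : C'.card = (myC n w).card := by
    apply Finset.card_image_of_injective
    intro a b h
    simp only [Prod.mk.injEq] at h
    exact h.2
  have hPcard : P.card = (myA n w).card + (myB n w).card + (myC n w).card := by
    rw [hPeq, Finset.card_union_of_disjoint hd2, Finset.card_union_of_disjoint hd1,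
      hcardB', hcardC']
  have : (Lset n w).card = 2 * P.card := by omega
  simp only [Lstat, this, hPcard]
  omega
/-- First additivity result: if `w ∈ Eₙ`, i.e. both factors of the parabolic
factorisation `w = u·v` (`u` ascending, `v ∈ Sₙ`) are even chessboard
elements, then `L(w) = L(u) + L(v)`. -/

theorem L_additive_first (n : ℕ) (w u v : ℤ → ℤ)
    (hw : IsSigned n w) (hu : IsSigned n u) (hv : IsSigned n v)
    (hasc : ∀ i j : ℤ, 1 ≤ i → i < j → j ≤ (n : ℤ) → u i < u j)
    (hpos : ∀ j ∈ Finset.Icc (1 : ℤ) n, 0 < v j)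
    (hfact : ∀ j : ℤ, w j = u (v j))
    (hue : ∀ j ∈ Finset.Icc (1 : ℤ) n, |u j| % 2 = j % 2)
    (hve : ∀ j ∈ Finset.Icc (1 : ℤ) n, |v j| % 2 = j % 2) :
    Lstat n w = Lstat n u + Lstat n v := by
  classical
  -- basic facts about v
  have hvmem : ∀ j : ℤ, 1 ≤ j → j ≤ n → (1 ≤ v j ∧ v j ≤ n) := by
    intro j h1 h2
    have := hv.2.1 (Set.mem_Icc.mpr ⟨by omega, h2⟩)
    have hp := hpos j (Finset.mem_Icc.mpr ⟨h1, h2⟩)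
    rw [Set.mem_Icc] at this
    omega
  have hvinj : ∀ a b : ℤ, 1 ≤ a → a ≤ n → 1 ≤ b → b ≤ n → v a = v b → a = b := by
    intro a b h1 h2 h3 h4 h
    exact hv.2.2.1 (Set.mem_Icc.mpr ⟨by omega, h2⟩) (Set.mem_Icc.mpr ⟨by omega, h4⟩) h
  have hvsurj : ∀ m : ℤ, 1 ≤ m → m ≤ n → ∃ j : ℤ, 1 ≤ j ∧ j ≤ (n : ℤ) ∧ v j = m := by
    intro m h1 h2
    obtain ⟨j, hj, hvj⟩ := hv.2.2.2 (Set.mem_Icc.mpr ⟨by omega, h2⟩)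
    rw [Set.mem_Icc] at hj
    rcases lt_trichotomy j 0 with hneg | hzero | hposj
    · exfalso
      have hmm := hvmem (-j) (by omega) (by omega)
      have : v j = -v (-j) := by rw [← hv.1, neg_neg]
      omega
    · exfalso
      rw [hzero] at hvj
      have : v 0 = 0 := by have := hv.1 0; rw [neg_zero] at this; omega
      omega
    · exact ⟨j, by omega, hj.2, hvj⟩
  have hvpar : ∀ j : ℤ, 1 ≤ j → j ≤ n → v j % 2 = j % 2 := by
    intro j h1 h2
    have := hve j (Finset.mem_Icc.mpr ⟨h1, h2⟩)
    have hp := hpos j (Finset.mem_Icc.mpr ⟨h1, h2⟩)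
    rwa [abs_of_pos hp] at this
  -- u is strictly monotone on [1,n], so comparisons transfer
  have humono : ∀ a b : ℤ, 1 ≤ a → a ≤ n → 1 ≤ b → b ≤ n → (u a < u b ↔ a < b) := by
    intro a b h1 h2 h3 h4
    constructor
    · intro h
      by_contra hc
      push_neg at hc
      rcases eq_or_lt_of_le hc with heq | hlt
      · rw [heq] at h; omega
      · have := hasc b a h3 hlt h2; omega
    · intro h; exact hasc a b h1 h h4
  -- decompositions
  rw [lstat_decomp n w hw.1, lstat_decomp n u hu.1, lstat_decomp n v hv.1]
  -- A(u) = ∅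
  have hAu : myA n u = ∅ := by
    rw [Finset.eq_empty_iff_forall_notMem]
    intro p hp
    simp only [myA, Finset.mem_filter, Finset.mem_product, Finset.mem_Icc] at hp
    obtain ⟨⟨⟨h1, h2⟩, h3, h4⟩, h5, h6, h7⟩ := hp
    have := hasc p.1 p.2 h1 h5 h4
    omega
  -- B(v) = ∅ and C(v) = ∅
  have hBv : myB n v = ∅ := by
    rw [Finset.eq_empty_iff_forall_notMem]
    intro p hp
    simp only [myB, Finset.mem_filter, Finset.mem_product, Finset.mem_Icc] at hp
    obtain ⟨⟨⟨h1, h2⟩, h3, h4⟩, h5, h6, h7⟩ := hp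
    have := hpos p.1 (Finset.mem_Icc.mpr ⟨h1, h2⟩)
    have := hpos p.2 (Finset.mem_Icc.mpr ⟨h3, h4⟩)
    omega
  have hCv : myC n v = ∅ := by
    rw [Finset.eq_empty_iff_forall_notMem]
    intro i hi
    simp only [myC, Finset.mem_filter, Finset.mem_Icc] at hi
    have := hpos i (Finset.mem_Icc.mpr hi.1)
    omega
  -- A(w) = A(v)
  have hAw : myA n w = myA n v := by
    unfold myA
    apply Finset.filter_congr
    intro p hp
    simp only [Finset.mem_product, Finset.mem_Icc] at hp
    obtain ⟨⟨h1, h2⟩, h3, h4⟩ := hp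
    have hm1 := hvmem p.1 h1 h2
    have hm2 := hvmem p.2 h3 h4
    have : w p.2 < w p.1 ↔ v p.2 < v p.1 := by
      rw [hfact p.1, hfact p.2]
      exact humono (v p.2) (v p.1) hm2.1 hm2.2 hm1.1 hm1.2
    simp only [this]
  -- C(w).card = C(u).card
  have hCw : (myC n w).card = (myC n u).card := by
    apply Finset.card_bij (fun j _ => v j)
    · intro j hj
      simp only [myC, Finset.mem_filter, Finset.mem_Icc] at hj ⊢
      obtain ⟨⟨h1, h2⟩, h3, h4⟩ := hj
      have hm := hvmem j h1 h2
      refine ⟨⟨hm.1, hm.2⟩, by rw [← hfact]; exact h3, ?_⟩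
      rw [hvpar j h1 h2]; exact h4
    · intro a ha b hb h
      simp only [myC, Finset.mem_filter, Finset.mem_Icc] at ha hb
      exact hvinj a b ha.1.1 ha.1.2 hb.1.1 hb.1.2 h
    · intro m hm
      simp only [myC, Finset.mem_filter, Finset.mem_Icc] at hm
      obtain ⟨⟨h1, h2⟩, h3, h4⟩ := hm
      obtain ⟨j, hj1, hj2, hj3⟩ := hvsurj m h1 h2
      refine ⟨j, ?_, hj3⟩
      simp only [myC, Finset.mem_filter, Finset.mem_Icc]
      refine ⟨⟨hj1, hj2⟩, by rw [hfact, hj3]; exact h3, ?_⟩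
      have := hvpar j hj1 hj2
      omega
  -- B(w).card = B(u).card
  have hBw : (myB n w).card = (myB n u).card := by
    apply Finset.card_bij (fun p _ =>
      if v p.1 < v p.2 then ((v p.1, v p.2) : ℤ × ℤ) else (v p.2, v p.1))
    · intro p hp
      simp only [myB, Finset.mem_filter, Finset.mem_product, Finset.mem_Icc] at hp
      obtain ⟨⟨⟨h1, h2⟩, h3, h4⟩, h5, h6, h7⟩ := hp
      have hm1 := hvmem p.1 h1 h2
      have hm2 := hvmem p.2 h3 h4
      have hne : v p.1 ≠ v p.2 := fun h => by
        have := hvinj p.1 p.2 h1 h2 h3 h4 h; omega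
      have hsum : u (v p.1) + u (v p.2) < 0 := by
        rw [← hfact, ← hfact]; exact h6
      have hp1 := hvpar p.1 h1 h2
      have hp2 := hvpar p.2 h3 h4
      split_ifs with hlt
      · simp only [myB, Finset.mem_filter, Finset.mem_product, Finset.mem_Icc]
        exact ⟨⟨⟨hm1.1, hm1.2⟩, hm2.1, hm2.2⟩, hlt, hsum, by omega⟩
      · simp only [myB, Finset.mem_filter, Finset.mem_product, Finset.mem_Icc]
        exact ⟨⟨⟨hm2.1, hm2.2⟩, hm1.1, hm1.2⟩, by omega, by omega, by omega⟩
    · intro p hp q hq h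
      simp only [myB, Finset.mem_filter, Finset.mem_product, Finset.mem_Icc] at hp hq
      obtain ⟨⟨⟨p1, p2⟩, p3, p4⟩, p5, -, -⟩ := hp
      obtain ⟨⟨⟨q1, q2⟩, q3, q4⟩, q5, -, -⟩ := hq
      have key : (v p.1 = v q.1 ∧ v p.2 = v q.2) ∨ (v p.1 = v q.2 ∧ v p.2 = v q.1) := by
        split_ifs at h <;> simp only [Prod.mk.injEq] at h <;> tauto
      rcases key with ⟨e1, e2⟩ | ⟨e1, e2⟩
      · exact Prod.ext (hvinj _ _ p1 p2 q1 q2 e1) (hvinj _ _ p3 p4 q3 q4 e2)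
      · have t1 := hvinj _ _ p1 p2 q3 q4 e1
        have t2 := hvinj _ _ p3 p4 q1 q2 e2
        exfalso; omega
    · intro q hq
      simp only [myB, Finset.mem_filter, Finset.mem_product, Finset.mem_Icc] at hq
      obtain ⟨⟨⟨h1, h2⟩, h3, h4⟩, h5, h6, h7⟩ := hq
      obtain ⟨j, hj1, hj2, hj3⟩ := hvsurj q.1 h1 h2
      obtain ⟨k, hk1, hk2, hk3⟩ := hvsurj q.2 h3 h4
      have hjk : j ≠ k := fun h => by rw [h, hk3] at hj3; omega
      have hparj := hvpar j hj1 hj2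
      have hpark := hvpar k hk1 hk2
      refine ⟨if j < k then (j, k) else (k, j), ?_, ?_⟩
      · split_ifs with hlt <;>
          simp only [myB, Finset.mem_filter, Finset.mem_product, Finset.mem_Icc]
        · refine ⟨⟨⟨hj1, hj2⟩, hk1, hk2⟩, hlt, ?_, by omega⟩
          rw [hfact, hfact, hj3, hk3]; exact h6
        · refine ⟨⟨⟨hk1, hk2⟩, hj1, hj2⟩, by omega, ?_, by omega⟩
          rw [hfact, hfact, hj3, hk3]; omega
      · rcases lt_or_gt_of_ne hjk with hlt | hlt
        · rw [if_pos hlt]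
          dsimp only
          rw [hj3, hk3, if_pos h5]
        · rw [if_neg (by omega : ¬ j < k)]
          dsimp only
          rw [hj3, hk3, if_neg (by omega : ¬ q.2 < q.1)]
  -- combine
  rw [hAw, hAu, hBv, hCv, hBw, hCw]
  simp only [Finset.card_empty]
  ring
end

section
/- Let n be even and suppose w ∈ E_n has descent set D(w) consisting only of even numbers. Let e ∈ [n−1] be even with w(1) < w(2) < ⋯ < w(e). Write w = w^J w_J for the parabolic factorisation with respect to J = {s₀,…,s_{e−1}} (so w_J ∈ B_e embedded in B_n fixing e+1,…,n, and w^J is the minimal coset representative). Then L(w) = L(w^J) + L(w_J). -/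
open Finset Polynomial

private noncomputable def oddc (a b : ℤ) : ℕ := ((Finset.Ioc a b).filter (fun i => i % 2 = 1)).card
private noncomputable def evenc (a b : ℤ) : ℕ := ((Finset.Ioc a b).filter (fun i => i % 2 = 0)).card
private lemma Ioc_succ (a b : ℤ) (h : a < b) :
    Finset.Ioc a b = insert b (Finset.Ioc a (b-1)) := by
  ext i; simp only [Finset.mem_Ioc, Finset.mem_insert]; omega
private lemma parity_count (a : ℤ) : ∀ k : ℕ, ∀ b : ℤ, b - a = k →
    oddc a b + evenc a b = k ∧
    evenc a b + (if a % 2 = 0 then 1 else 0) = oddc a b + (if b % 2 = 0 then 1 else 0) := by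
  intro k
  induction k with
  | zero =>
    intro b hb
    have hba : b = a := by omega
    subst hba
    simp [oddc, evenc]
  | succ k ih =>
    intro b hb
    have h1 : a < b := by omega
    obtain ⟨h2, h3⟩ := ih (b-1) (by omega)
    have hnm : b ∉ Finset.Ioc a (b-1) := by simp
    have hodd : oddc a b = oddc a (b-1) + (if b % 2 = 1 then 1 else 0) := by
      rw [oddc, Ioc_succ a b h1, Finset.filter_insert]
      by_cases hb2 : b % 2 = 1
      · simp only [hb2, if_pos, if_true]
        rw [Finset.card_insert_of_notMem (fun hc => hnm (Finset.mem_of_mem_filter _ hc))]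
        rfl
      · simp [hb2, oddc]
    have heven : evenc a b = evenc a (b-1) + (if b % 2 = 0 then 1 else 0) := by
      rw [evenc, Ioc_succ a b h1, Finset.filter_insert]
      by_cases hb2 : b % 2 = 0
      · simp only [hb2, if_pos, if_true]
        rw [Finset.card_insert_of_notMem (fun hc => hnm (Finset.mem_of_mem_filter _ hc))]
        rfl
      · simp [hb2, evenc]
    constructor
    · rw [hodd, heven]; split_ifs <;> omega
    · rw [hodd, heven]; split_ifs at h3 ⊢ <;> omega
private lemma oddc_add_evenc {a b : ℤ} (h : a ≤ b) : oddc a b + evenc a b = (b - a).toNat :=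
  (parity_count a (b-a).toNat b (by omega)).1
private lemma parity_balance {a b : ℤ} (h : a ≤ b) :
    evenc a b + (if a % 2 = 0 then 1 else 0) = oddc a b + (if b % 2 = 0 then 1 else 0) :=
  (parity_count a (b-a).toNat b (by omega)).2
private lemma oddc_Ioc_even_top {b : ℤ} {s : ℕ} (hb : b % 2 = 0) :
    oddc (b - s) b = s / 2 := by
  have h1 := oddc_add_evenc (a := b - s) (b := b) (by omega)
  have h2 := parity_balance (a := b - s) (b := b) (by omega)
  by_cases hs : (b - s) % 2 = 0 <;> simp [hs, hb] at h2 <;> omega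
private lemma mono_of_consec {f : ℤ → ℤ} {E : ℤ} (h : ∀ i, 1 ≤ i → i < E → f i < f (i+1)) :
    ∀ k : ℕ, ∀ i j : ℤ, 1 ≤ i → i < j → j ≤ E → j - i = k + 1 → f i < f j := by
  intro k
  induction k with
  | zero =>
    intro i j hi hij hj hk
    have hji : j = i + 1 := by omega
    subst hji; exact h i hi (by omega)
  | succ k ih =>
    intro i j hi hij hj hk
    have h1 : f i < f (j-1) := ih i (j-1) hi (by omega) (by omega) (by omega)
    have h2 : f (j-1) < f j := by
      have := h (j-1) (by omega) (by omega)
      rw [sub_add_cancel] at this; exact this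
    omega
private lemma signed_zero_s16 {n : ℕ} {f : ℤ → ℤ} (hf : IsSigned n f) : f 0 = 0 := by
  have := hf.1 0; simp at this; omega
private lemma signed_injOn {n : ℕ} {f : ℤ → ℤ} (hf : IsSigned n f) :
    ∀ i j : ℤ, -(n:ℤ) ≤ i → i ≤ n → -(n:ℤ) ≤ j → j ≤ n → f i = f j → i = j := by
  intro i j hi hi' hj hj' hfij
  exact hf.2.injOn (Set.mem_Icc.2 ⟨hi, hi'⟩) (Set.mem_Icc.2 ⟨hj, hj'⟩) hfij
private lemma signed_mem {n : ℕ} {f : ℤ → ℤ} (hf : IsSigned n f) :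
    ∀ i : ℤ, -(n:ℤ) ≤ i → i ≤ n → -(n:ℤ) ≤ f i ∧ f i ≤ n := by
  intro i hi hi'
  have := hf.2.mapsTo (Set.mem_Icc.2 ⟨hi, hi'⟩)
  exact Set.mem_Icc.1 this
private lemma signed_strictmono {n e : ℕ} {x : ℤ → ℤ} (hx : IsSigned n x)
    (hxpos : 0 < x 1) (hxasc : ∀ i : ℤ, 1 ≤ i → i < (e:ℤ) → x i < x (i+1)) :
    ∀ i j : ℤ, -(e:ℤ) ≤ i → i < j → j ≤ (e:ℤ) → x i < x j := by
  have hx0 : x 0 = 0 := signed_zero_s16 hx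
  have hmono : ∀ i j : ℤ, 1 ≤ i → i < j → j ≤ (e:ℤ) → x i < x j := by
    intro i j hi hij hj
    exact mono_of_consec hxasc (j-i-1).toNat i j hi hij hj (by omega)
  have hpos : ∀ i : ℤ, 1 ≤ i → i ≤ (e:ℤ) → 0 < x i := by
    intro i hi hie
    rcases eq_or_lt_of_le hi with h|h
    · rw [← h]; exact hxpos
    · exact lt_trans hxpos (hmono 1 i le_rfl h hie)
  have hneg : ∀ i : ℤ, -(e:ℤ) ≤ i → i ≤ -1 → x i < 0 := by
    intro i hi hi'
    have h1 := hx.1 (-i)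
    rw [neg_neg] at h1
    have h2 := hpos (-i) (by omega) (by omega)
    omega
  intro i j hi hij hj
  rcases le_or_gt 1 i with h1 | h1
  · exact hmono i j h1 hij hj
  · rcases le_or_gt 1 j with h2 | h2
    · rcases lt_or_eq_of_le (by omega : i ≤ 0) with h3 | h3
      · exact lt_trans (hneg i hi (by omega)) (hpos j h2 hj)
      · rw [h3, hx0]; exact hpos j h2 hj
    · rcases lt_or_eq_of_le (by omega : j ≤ 0) with h4 | h4
      · have h5 : x (-j) < x (-i) := hmono (-j) (-i) (by omega) (by omega) (by omega)
        have h6 := hx.1 (-i); have h7 := hx.1 (-j)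
        rw [neg_neg] at h6 h7
        omega
      · rw [h4, hx0]; exact hneg i hi (by omega)
private lemma y_inside {n e : ℕ} {y : ℤ → ℤ} (hy : IsSigned n y)
    (hyfix : ∀ j : ℤ, (e:ℤ) < |j| → |j| ≤ n → y j = j) (hen : e ≤ n) :
    ∀ i : ℤ, -(e:ℤ) ≤ i → i ≤ e → -(e:ℤ) ≤ y i ∧ y i ≤ e := by
  intro i hi hi'
  have hen' : (e:ℤ) ≤ n := by exact_mod_cast hen
  have hmem := signed_mem hy i (by omega) (by omega)
  by_contra hc
  have habs : (e:ℤ) < |y i| := by rcases abs_cases (y i) with ⟨h,_⟩|⟨h,_⟩ <;> omega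
  have hfix : y (y i) = y i := hyfix (y i) habs (by rcases abs_cases (y i) with ⟨h,_⟩|⟨h,_⟩ <;> omega)
  have := signed_injOn hy (y i) i hmem.1 hmem.2 (by omega) (by omega) hfix
  rcases abs_cases (y i) with ⟨h,_⟩|⟨h,_⟩ <;> omega
private lemma y_onto {n e : ℕ} {y : ℤ → ℤ} (hy : IsSigned n y)
    (hyfix : ∀ j : ℤ, (e:ℤ) < |j| → |j| ≤ n → y j = j) (hen : e ≤ n) :
    ∀ i' : ℤ, -(e:ℤ) ≤ i' → i' ≤ e → ∃ i : ℤ, (-(e:ℤ) ≤ i ∧ i ≤ e) ∧ y i = i' := by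
  intro i' hi hi'
  have hen' : (e:ℤ) ≤ n := by exact_mod_cast hen
  have hmem : i' ∈ Set.Icc (-(n:ℤ)) n := Set.mem_Icc.2 ⟨by omega, by omega⟩
  obtain ⟨i, him, hyi⟩ := hy.2.surjOn hmem
  rw [Set.mem_Icc] at him
  have hkey : -(e:ℤ) ≤ i ∧ i ≤ e := by
    by_contra hc
    have habs : (e:ℤ) < |i| := by rcases abs_cases i with ⟨h,_⟩|⟨h,_⟩ <;> omega
    have hfix : y i = i := hyfix i habs (by rcases abs_cases i with ⟨h,_⟩|⟨h,_⟩ <;> omega)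
    rcases abs_cases i with ⟨h,_⟩|⟨h,_⟩ <;> omega
  exact ⟨i, hkey, hyi⟩
private lemma card_split_subset {M S : Finset ℤ} (h : M ⊆ S) (p : ℤ → Prop) [DecidablePred p] :
    (S.filter p).card = (M.filter p).card + ((S \ M).filter p).card := by
  rw [← Finset.card_union_of_disjoint, ← Finset.filter_union, Finset.union_sdiff_of_subset h]
  exact Finset.disjoint_filter_filter Finset.disjoint_sdiff
private lemma icc_filter_odd {n : ℕ} {t : ℤ} (ht : 0 ≤ t) :
    ((Finset.Icc 1 (n:ℤ)).filter (fun m => t < m ∧ m % 2 = 1)).card = oddc t n := by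
  rw [oddc]
  congr 1
  ext m
  simp only [Finset.mem_filter, Finset.mem_Icc, Finset.mem_Ioc]
  omega
private lemma icc_filter_even {n : ℕ} {t : ℤ} (ht : 0 ≤ t) :
    ((Finset.Icc 1 (n:ℤ)).filter (fun m => t < m ∧ m % 2 = 0)).card = evenc t n := by
  rw [evenc]
  congr 1
  ext m
  simp only [Finset.mem_filter, Finset.mem_Icc, Finset.mem_Ioc]
  omega
private lemma step_one {n : ℕ} (hn2 : 2 ∣ n) {M : Finset ℤ} (hM : M ⊆ Finset.Icc 1 (n:ℤ))
    {t : ℤ} (ht : 0 ≤ t) (htn : t ≤ n)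
    (hBt : ((Finset.Icc 1 (n:ℤ) \ M).filter (fun m => t < m ∧ m % 2 = 1)).card ≤
           ((Finset.Icc 1 (n:ℤ) \ M).filter (fun m => t < m ∧ m % 2 = 0)).card) :
    (M.filter (fun m => t < m ∧ m % 2 = 0)).card + (if t % 2 = 0 then 1 else 0) ≤
      (M.filter (fun m => t < m ∧ m % 2 = 1)).card + 1 := by
  have h1 := card_split_subset hM (fun m => t < m ∧ m % 2 = 1)
  have h2 := card_split_subset hM (fun m => t < m ∧ m % 2 = 0)
  rw [icc_filter_odd ht] at h1
  rw [icc_filter_even ht] at h2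
  have h3 := parity_balance (a := t) (b := (n:ℤ)) htn
  have hne : ((n:ℤ)) % 2 = 0 := by omega
  rw [if_pos hne] at h3
  split_ifs at h3 ⊢ <;> omega
private lemma key_lemma (n : ℕ) (hn2 : 2 ∣ n) (M : Finset ℤ)
    (hM : M ⊆ Finset.Icc 1 (n:ℤ))
    (hA : ∀ t : ℤ, 0 ≤ t → t ≤ n →
       ((M.filter (fun m => t < m ∧ m % 2 = 1)).card ≤
        (M.filter (fun m => t < m ∧ m % 2 = 0)).card))
    (hB : ∀ t : ℤ, 0 ≤ t → t ≤ n →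
       (((Finset.Icc 1 (n:ℤ) \ M).filter (fun m => t < m ∧ m % 2 = 1)).card ≤
        ((Finset.Icc 1 (n:ℤ) \ M).filter (fun m => t < m ∧ m % 2 = 0)).card))
    (hC : (M.filter (fun m => m % 2 = 1)).card = (M.filter (fun m => m % 2 = 0)).card)
    (α β : ℤ) (hα : 0 ≤ α) (hαn : α ≤ n) (hβ : α + 2 ≤ β) (hβn : β ≤ (n:ℤ) + 1)
    (hq : (β - α - 1) % 2 = 1 → α % 2 = 0)
    (m₀ : ℤ) (hm₀M : m₀ ∉ M) (hm₀1 : 1 ≤ m₀) (hm₀n : m₀ ≤ n)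
    (hm₀p : m₀ % 2 = (β - α - 1) % 2)
    (hm₀e : m₀ = α + 1 ∨ m₀ = β - 1) :
    (M.filter (fun m => (m ≤ α ∨ β ≤ m) ∧ m % 2 = 1)).card =
      (M.filter (fun m => m ≤ α ∨ β ≤ m)).card / 2 := by
  classical
  set A1 := (M.filter (fun m => α < m ∧ m % 2 = 1)).card with hA1
  set B1 := (M.filter (fun m => α < m ∧ m % 2 = 0)).card with hB1
  set A2 := (M.filter (fun m => β - 1 < m ∧ m % 2 = 1)).card with hA2
  set B2 := (M.filter (fun m => β - 1 < m ∧ m % 2 = 0)).card with hB2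
  set P1 := (M.filter (fun m => m ≤ α ∧ m % 2 = 1)).card with hP1
  set Q1 := (M.filter (fun m => m ≤ α ∧ m % 2 = 0)).card with hQ1
  set oT := (M.filter (fun m => (m ≤ α ∨ β ≤ m) ∧ m % 2 = 1)).card with hoT
  set eT := (M.filter (fun m => (m ≤ α ∨ β ≤ m) ∧ m % 2 = 0)).card with heT
  set s := (M.filter (fun m => m ≤ α ∨ β ≤ m)).card with hs
  -- splitting identities
  have hdisj1 : ∀ p : ℤ → Prop, True := fun _ => trivial
  have hsplit1 :
      (M.filter (fun m => (m ≤ α ∨ β ≤ m) ∧ m % 2 = 1)).card =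
        (M.filter (fun m => m ≤ α ∧ m % 2 = 1)).card +
        (M.filter (fun m => β - 1 < m ∧ m % 2 = 1)).card := by
    rw [← Finset.card_union_of_disjoint]
    · congr 1
      ext m
      simp only [Finset.mem_union, Finset.mem_filter]
      constructor
      · rintro ⟨hm, h1, h2⟩
        rcases h1 with h1 | h1
        · exact Or.inl ⟨hm, h1, h2⟩
        · exact Or.inr ⟨hm, by omega, h2⟩
      · rintro (⟨hm, h1, h2⟩ | ⟨hm, h1, h2⟩)
        · exact ⟨hm, Or.inl h1, h2⟩
        · exact ⟨hm, Or.inr (by omega), h2⟩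
    · rw [Finset.disjoint_left]
      intro m hm hm'
      simp only [Finset.mem_filter] at hm hm'
      omega
  have hsplit0 :
      (M.filter (fun m => (m ≤ α ∨ β ≤ m) ∧ m % 2 = 0)).card =
        (M.filter (fun m => m ≤ α ∧ m % 2 = 0)).card +
        (M.filter (fun m => β - 1 < m ∧ m % 2 = 0)).card := by
    rw [← Finset.card_union_of_disjoint]
    · congr 1
      ext m
      simp only [Finset.mem_union, Finset.mem_filter]
      constructor
      · rintro ⟨hm, h1, h2⟩
        rcases h1 with h1 | h1
        · exact Or.inl ⟨hm, h1, h2⟩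
        · exact Or.inr ⟨hm, by omega, h2⟩
      · rintro (⟨hm, h1, h2⟩ | ⟨hm, h1, h2⟩)
        · exact ⟨hm, Or.inl h1, h2⟩
        · exact ⟨hm, Or.inr (by omega), h2⟩
    · rw [Finset.disjoint_left]
      intro m hm hm'
      simp only [Finset.mem_filter] at hm hm'
      omega
  -- parity split of s
  have hpar : s = oT + eT := by
    rw [hs, hoT, heT, ← Finset.card_union_of_disjoint]
    · congr 1
      ext m
      simp only [Finset.mem_union, Finset.mem_filter]
      constructor
      · rintro ⟨hm, h1⟩
        rcases (by omega : m % 2 = 1 ∨ m % 2 = 0) with h2 | h2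
        · exact Or.inl ⟨hm, h1, h2⟩
        · exact Or.inr ⟨hm, h1, h2⟩
      · rintro (⟨hm, h1, _⟩ | ⟨hm, h1, _⟩) <;> exact ⟨hm, h1⟩
    · rw [Finset.disjoint_left]
      intro m hm hm'
      simp only [Finset.mem_filter] at hm hm'
      omega
  -- prefix identities
  have hpre1 :
      (M.filter (fun m => α < m ∧ m % 2 = 1)).card +
        (M.filter (fun m => m ≤ α ∧ m % 2 = 1)).card =
        (M.filter (fun m => m % 2 = 1)).card := by
    rw [← Finset.card_union_of_disjoint]
    · congr 1
      ext m
      simp only [Finset.mem_union, Finset.mem_filter]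
      constructor
      · rintro (⟨hm, _, h2⟩ | ⟨hm, _, h2⟩) <;> exact ⟨hm, h2⟩
      · rintro ⟨hm, h2⟩
        rcases le_or_gt m α with h1 | h1
        · exact Or.inr ⟨hm, h1, h2⟩
        · exact Or.inl ⟨hm, h1, h2⟩
    · rw [Finset.disjoint_left]
      intro m hm hm'
      simp only [Finset.mem_filter] at hm hm'
      omega
  have hpre0 :
      (M.filter (fun m => α < m ∧ m % 2 = 0)).card +
        (M.filter (fun m => m ≤ α ∧ m % 2 = 0)).card =
        (M.filter (fun m => m % 2 = 0)).card := by
    rw [← Finset.card_union_of_disjoint]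
    · congr 1
      ext m
      simp only [Finset.mem_union, Finset.mem_filter]
      constructor
      · rintro (⟨hm, _, h2⟩ | ⟨hm, _, h2⟩) <;> exact ⟨hm, h2⟩
      · rintro ⟨hm, h2⟩
        rcases le_or_gt m α with h1 | h1
        · exact Or.inr ⟨hm, h1, h2⟩
        · exact Or.inl ⟨hm, h1, h2⟩
    · rw [Finset.disjoint_left]
      intro m hm hm'
      simp only [Finset.mem_filter] at hm hm'
      omega
  -- inequalities
  have f1 : A1 ≤ B1 := hA α hα hαn
  have f2 : A2 ≤ B2 := hA (β - 1) (by omega) (by omega)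
  have g1 : B1 + (if α % 2 = 0 then 1 else 0) ≤ A1 + 1 :=
    step_one hn2 hM hα hαn (hB α hα hαn)
  have g2 : B2 + (if (β - 1) % 2 = 0 then 1 else 0) ≤ A2 + 1 :=
    step_one hn2 hM (by omega) (by omega) (hB (β-1) (by omega) (by omega))
  -- exclusion of the bad case
  have hbad : ¬ (B1 = A1 + 1 ∧ B2 = A2) := by
    rintro ⟨hb1, hb2⟩
    have hαodd : α % 2 = 1 := by split_ifs at g1 <;> omega
    have hqeven : (β - α - 1) % 2 = 0 := by
      rcases (by omega : (β - α - 1) % 2 = 1 ∨ (β - α - 1) % 2 = 0) with h | h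
      · have := hq h; omega
      · exact h
    have hm₀even : m₀ % 2 = 0 := by omega
    have hm₀a : m₀ = α + 1 := by rcases hm₀e with h | h; exact h; omega
    -- counts at t = α+1 equal counts at t = α since α+1 = m₀ ∉ M
    have heq1 : M.filter (fun m => α + 1 < m ∧ m % 2 = 1) =
        M.filter (fun m => α < m ∧ m % 2 = 1) := by
      apply Finset.filter_congr
      intro m hm
      have : m ≠ m₀ := fun h => hm₀M (h ▸ hm)
      constructor <;> intro h' <;> exact ⟨by omega, h'.2⟩
    have heq0 : M.filter (fun m => α + 1 < m ∧ m % 2 = 0) =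
        M.filter (fun m => α < m ∧ m % 2 = 0) := by
      apply Finset.filter_congr
      intro m hm
      have : m ≠ m₀ := fun h => hm₀M (h ▸ hm)
      constructor <;> intro h' <;> exact ⟨by omega, h'.2⟩
    have g3 := step_one hn2 hM (t := α + 1) (by omega) (by omega)
      (hB (α+1) (by omega) (by omega))
    rw [heq1, heq0] at g3
    have : (α + 1) % 2 = 0 := by omega
    rw [if_pos this] at g3
    omega
  -- conclude
  have hconc : 2 * oT ≤ s ∧ s ≤ 2 * oT + 1 := by
    rw [hpar]
    split_ifs at g1 g2 <;> omega
  omega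
private lemma z_interval (n : ℕ) (u : ℤ → ℤ) (hu : IsSigned n u)
    (hasc : ∀ i j : ℤ, 1 ≤ i → i < j → j ≤ (n : ℤ) → u i < u j)
    (hue : ∀ j ∈ Finset.Icc (1 : ℤ) (n:ℤ), |u j| % 2 = j % 2)
    (m₀ : ℤ) (hm₀1 : 1 ≤ m₀) (hm₀n : m₀ ≤ (n:ℤ)) :
    ∃ α β : ℤ, 0 ≤ α ∧ α ≤ n ∧ α + 2 ≤ β ∧ β ≤ (n:ℤ)+1 ∧
      β - α - 1 = |u m₀| ∧
      ((β - α - 1) % 2 = 1 → α % 2 = 0) ∧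
      (m₀ = α + 1 ∨ m₀ = β - 1) ∧
      (∀ m : ℤ, 1 ≤ m → m ≤ n → (|u m₀| < |u m| ↔ (m ≤ α ∨ β ≤ m))) := by
  classical
  have hu0 : u 0 = 0 := signed_zero_s16 hu
  have huinj := signed_injOn hu
  have humem := signed_mem hu
  have hune : ∀ m : ℤ, 1 ≤ m → m ≤ (n:ℤ) → u m ≠ 0 := by
    intro m h1 h2 hc
    have h0 : (0:ℤ) ≤ (n:ℤ) := by omega
    have := huinj m 0 (by omega) h2 (by omega) h0 (by rw [hc, hu0])
    omega
  set q := |u m₀| with hqdef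
  have hq1 : 1 ≤ q := by
    have := hune m₀ hm₀1 hm₀n
    rcases abs_cases (u m₀) with ⟨h,_⟩|⟨h,_⟩ <;> omega
  have hqn : q ≤ n := by
    have := humem m₀ (by omega) hm₀n
    rcases abs_cases (u m₀) with ⟨h,_⟩|⟨h,_⟩ <;> omega
  set Z := (Finset.Icc 1 (n:ℤ)).filter (fun m => |u m| ≤ q) with hZdef
  have hm₀Z : m₀ ∈ Z := by
    simp only [hZdef, Finset.mem_filter, Finset.mem_Icc]
    exact ⟨⟨hm₀1, hm₀n⟩, le_rfl⟩
  have hne : Z.Nonempty := ⟨m₀, hm₀Z⟩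
  set z₁ := Z.min' hne with hz₁
  set z₂ := Z.max' hne with hz₂
  have hz₁Z : z₁ ∈ Z := Z.min'_mem hne
  have hz₂Z : z₂ ∈ Z := Z.max'_mem hne
  have hz₁b : 1 ≤ z₁ ∧ z₁ ≤ (n:ℤ) ∧ |u z₁| ≤ q := by
    have := hz₁Z; simp only [hZdef, Finset.mem_filter, Finset.mem_Icc] at this; tauto
  have hz₂b : 1 ≤ z₂ ∧ z₂ ≤ (n:ℤ) ∧ |u z₂| ≤ q := by
    have := hz₂Z; simp only [hZdef, Finset.mem_filter, Finset.mem_Icc] at this; tauto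
  have hmono : ∀ a b : ℤ, 1 ≤ a → a ≤ b → b ≤ (n:ℤ) → u a ≤ u b := by
    intro a b h1 h2 h3
    rcases lt_or_eq_of_le h2 with h|h
    · exact le_of_lt (hasc a b h1 h h3)
    · rw [h]
  have hZIcc : Z = Finset.Icc z₁ z₂ := by
    ext m
    simp only [Finset.mem_Icc]
    constructor
    · intro hm; exact ⟨Z.min'_le m hm, Z.le_max' m hm⟩
    · rintro ⟨h1, h2⟩
      simp only [hZdef, Finset.mem_filter, Finset.mem_Icc]
      have hub : u m ≤ u z₂ := hmono m z₂ (by omega) h2 hz₂b.2.1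
      have hlb : u z₁ ≤ u m := hmono z₁ m hz₁b.1 h1 (by omega)
      refine ⟨⟨by omega, by omega⟩, ?_⟩
      have h3 : -q ≤ u z₁ := by rcases abs_cases (u z₁) with ⟨h,_⟩|⟨h,_⟩ <;> omega
      have h4 : u z₂ ≤ q := by rcases abs_cases (u z₂) with ⟨h,_⟩|⟨h,_⟩ <;> omega
      rcases abs_cases (u m) with ⟨h,_⟩|⟨h,_⟩ <;> omega
  have habs_inj : ∀ a ∈ Finset.Icc (1:ℤ) (n:ℤ), ∀ b ∈ Finset.Icc (1:ℤ) (n:ℤ),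
      |u a| = |u b| → a = b := by
    intro a ha b hb h
    simp only [Finset.mem_Icc] at ha hb
    rcases abs_eq_abs.1 h with h'|h'
    · exact huinj a b (by omega) ha.2 (by omega) hb.2 h'
    · have h'' : u a = u (-b) := by rw [hu.1 b]; omega
      have := huinj a (-b) (by omega) ha.2 (by omega) (by omega) h''
      omega
  -- bijection with Icc 1 q via m ↦ |u m|
  have hZbij : ∀ r : ℤ,
      ((Z.filter (fun m => m % 2 = r ∨ r = 2)).card =
        ((Finset.Icc 1 q).filter (fun k => k % 2 = r ∨ r = 2)).card) := by
    intro r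
    apply Finset.card_bij (fun m _ => |u m|)
    · intro m hm
      simp only [hZdef, Finset.mem_filter, Finset.mem_Icc] at hm ⊢
      obtain ⟨⟨⟨h1, h2⟩, h3⟩, h4⟩ := hm
      have h5 := hune m h1 h2
      have h6 := hue m (by simp only [Finset.mem_Icc]; omega)
      refine ⟨⟨?_, h3⟩, ?_⟩
      · rcases abs_cases (u m) with ⟨h,_⟩|⟨h,_⟩ <;> omega
      · rcases h4 with h|h
        · left; omega
        · right; exact h
    · intro a ha b hb h
      simp only [hZdef, Finset.mem_filter, Finset.mem_Icc] at ha hb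
      exact habs_inj a (by simp only [Finset.mem_Icc]; omega)
        b (by simp only [Finset.mem_Icc]; omega) h
    · intro k hk
      simp only [Finset.mem_filter, Finset.mem_Icc] at hk
      obtain ⟨⟨h1, h2⟩, h3⟩ := hk
      have hkmem : k ∈ Set.Icc (-(n:ℤ)) (n:ℤ) := Set.mem_Icc.2 ⟨by omega, by omega⟩
      obtain ⟨m', hm'mem, hm'⟩ := hu.2.surjOn hkmem
      rw [Set.mem_Icc] at hm'mem
      have hm'0 : m' ≠ 0 := by intro hc; rw [hc, hu0] at hm'; omega
      have hum : |u (|m'|)| = k := by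
        rcases abs_cases m' with ⟨h,h'⟩|⟨h,h'⟩
        · rw [h, hm']; exact abs_of_nonneg (by omega)
        · rw [h]
          have h6 := hu.1 m'
          rw [hm'] at h6
          rw [h6, abs_neg]
          exact abs_of_nonneg (by omega)
      have hmb : 1 ≤ |m'| ∧ |m'| ≤ (n:ℤ) := by
        rcases abs_cases m' with ⟨h,h'⟩|⟨h,h'⟩ <;> omega
      refine ⟨|m'|, ?_, hum⟩
      simp only [hZdef, Finset.mem_filter, Finset.mem_Icc]
      have h7 := hue |m'| (by simp only [Finset.mem_Icc]; omega)
      refine ⟨⟨⟨hmb.1, hmb.2⟩, by omega⟩, ?_⟩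
      rcases h3 with h|h
      · left; omega
      · right; exact h
  -- cardinality of Z
  have hZ2 : Z.card = ((Finset.Icc 1 q)).card := by
    have := hZbij 2
    rwa [Finset.filter_true_of_mem (fun m _ => Or.inr rfl),
      Finset.filter_true_of_mem (fun m _ => Or.inr rfl)] at this
  have hz₁₂ : z₁ ≤ z₂ := le_trans (Z.min'_le m₀ hm₀Z) (Z.le_max' m₀ hm₀Z)
  have hzq : z₂ - z₁ + 1 = q := by
    rw [hZIcc] at hZ2
    rw [Int.card_Icc, Int.card_Icc] at hZ2
    omega
  -- odd counts
  have hIoc1 : Finset.Icc z₁ z₂ = Finset.Ioc (z₁ - 1) z₂ := by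
    ext m; simp only [Finset.mem_Icc, Finset.mem_Ioc]; omega
  have hIoc2 : Finset.Icc (1:ℤ) q = Finset.Ioc (0:ℤ) q := by
    ext m; simp only [Finset.mem_Icc, Finset.mem_Ioc]; omega
  have hfc : ∀ (S : Finset ℤ), S.filter (fun m => m % 2 = 1 ∨ (1:ℤ) = 2) =
      S.filter (fun m => m % 2 = 1) := by
    intro S
    apply Finset.filter_congr
    intro m _
    constructor
    · rintro (h|h); exact h; omega
    · intro h; exact Or.inl h
  have hoddZ : oddc (z₁ - 1) z₂ = oddc 0 q := by
    have := hZbij 1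
    rw [hfc, hfc, hZIcc, hIoc1, hIoc2] at this
    exact this
  -- parity consequence
  have hqpar : q % 2 = 1 → (z₁ - 1) % 2 = 0 := by
    intro hqo
    have b1 := parity_balance (a := z₁ - 1) (b := z₂) (by omega)
    have b2 := parity_balance (a := (0:ℤ)) (b := q) (by omega)
    have a1 := oddc_add_evenc (a := z₁ - 1) (b := z₂) (by omega)
    have a2 := oddc_add_evenc (a := (0:ℤ)) (b := q) (by omega)
    rw [hoddZ] at b1 a1
    split_ifs at b1 b2 <;> omega
  -- extremal position of m₀
  have hext : m₀ = z₁ ∨ m₀ = z₂ := by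
    rcases abs_cases (u m₀) with ⟨h,h'⟩|⟨h,h'⟩
    · right
      by_contra hc
      have h1 : m₀ ≤ z₂ := Z.le_max' m₀ hm₀Z
      have h2 : u m₀ < u z₂ := hasc m₀ z₂ hm₀1 (by omega) hz₂b.2.1
      have h3 : u z₂ ≤ q := by rcases abs_cases (u z₂) with ⟨h4,_⟩|⟨h4,_⟩ <;> omega
      omega
    · left
      by_contra hc
      have h1 : z₁ ≤ m₀ := Z.min'_le m₀ hm₀Z
      have h2 : u z₁ < u m₀ := hasc z₁ m₀ hz₁b.1 (by omega) hm₀n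
      have h3 : -q ≤ u z₁ := by rcases abs_cases (u z₁) with ⟨h4,_⟩|⟨h4,_⟩ <;> omega
      omega
  -- assemble
  refine ⟨z₁ - 1, z₂ + 1, by omega, by omega, by omega, by omega, by omega, ?_, ?_, ?_⟩
  · intro h; exact hqpar (by omega)
  · rcases hext with h|h
    · left; omega
    · right; omega
  · intro m h1 h2
    constructor
    · intro hlt
      by_contra hc
      push_neg at hc
      have : m ∈ Z := by rw [hZIcc]; simp only [Finset.mem_Icc]; omega
      simp only [hZdef, Finset.mem_filter] at this
      omega
    · intro hm
      have : m ∉ Z := by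
        rw [hZIcc]; simp only [Finset.mem_Icc]; omega
      simp only [hZdef, Finset.mem_filter, Finset.mem_Icc] at this
      have := fun h => this ⟨⟨h1, h2⟩, h⟩
      omega
private lemma interval_of_upward {S : Finset ℤ} {a b : ℤ} (hab : a ≤ b)
    (hsub : S ⊆ Finset.Icc a b)
    (hup : ∀ i ∈ S, ∀ i' : ℤ, i ≤ i' → i' ≤ b → i' ∈ S) :
    S = Finset.Ioc (b - S.card) b := by
  have hsub2 : S ⊆ Finset.Ioc (b - S.card) b := by
    intro m hm
    have hmab := hsub hm
    simp only [Finset.mem_Icc] at hmab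
    simp only [Finset.mem_Ioc]
    refine ⟨?_, hmab.2⟩
    have hIccS : Finset.Icc m b ⊆ S := by
      intro i hi
      simp only [Finset.mem_Icc] at hi
      exact hup m hm i hi.1 hi.2
    have hcard := Finset.card_le_card hIccS
    rw [Int.card_Icc] at hcard
    omega
  apply Finset.eq_of_subset_of_card_le hsub2
  rw [Int.card_Ioc]
  omega
private lemma lset_invol {n : ℕ} {f : ℤ → ℤ} (hf : ∀ j : ℤ, f (-j) = -f j) :
    ∀ p ∈ Lset n f, ((-p.2, -p.1) : ℤ × ℤ) ∈ Lset n f := by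
  rintro ⟨i, j⟩ hp
  simp only [Lset, Finset.mem_filter, Finset.mem_product, Finset.mem_Icc] at hp ⊢
  obtain ⟨⟨⟨h1, h2⟩, h3, h4⟩, h5, h6, h7⟩ := hp
  refine ⟨⟨⟨by omega, by omega⟩, by omega, by omega⟩, by omega, ?_, by omega⟩
  rw [hf i, hf j]
  omega
private lemma lset_even_card {n : ℕ} {f : ℤ → ℤ} (hf : ∀ j : ℤ, f (-j) = -f j) :
    2 ∣ (Lset n f).card := by
  classical
  have hsplit := Finset.card_filter_add_card_filter_not
    (s := Lset n f) (p := fun p => 0 < p.1 + p.2)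
  have hbij : ((Lset n f).filter (fun p => 0 < p.1 + p.2)).card =
      ((Lset n f).filter (fun p => ¬ 0 < p.1 + p.2)).card := by
    apply Finset.card_bij (fun p _ => ((-p.2, -p.1) : ℤ × ℤ))
    · rintro ⟨i, j⟩ hp
      simp only [Finset.mem_filter] at hp ⊢
      refine ⟨lset_invol hf _ hp.1, ?_⟩
      have := hp.1
      simp only [Lset, Finset.mem_filter] at this
      omega
    · rintro ⟨i, j⟩ _ ⟨i', j'⟩ _ h
      simp only [Prod.mk.injEq] at h ⊢
      omega
    · rintro ⟨i, j⟩ hp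
      simp only [Finset.mem_filter] at hp
      refine ⟨(-j, -i), ?_, by simp⟩
      simp only [Finset.mem_filter]
      have h2 := lset_invol hf _ hp.1
      refine ⟨h2, ?_⟩
      have := hp.1
      simp only [Lset, Finset.mem_filter] at this
      have hpar : i % 2 ≠ j % 2 := this.2.2.2
      omega
  omega
private lemma pos_count_le {v : ℤ → ℤ} {P : Finset ℤ} {t : ℤ}
    (hstep : ∀ j ∈ P, j % 2 = 1 → j + 1 ∈ P ∧ v j < v (j+1)) :
    (P.filter (fun j => t < v j ∧ j % 2 = 1)).card ≤
      (P.filter (fun j => t < v j ∧ j % 2 = 0)).card := by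
  apply Finset.card_le_card_of_injOn (fun j => j + 1)
  · intro j hj
    simp only [Finset.mem_coe, Finset.mem_filter] at hj ⊢
    obtain ⟨hjP, hjt, hjo⟩ := hj
    obtain ⟨h1, h2⟩ := hstep j hjP hjo
    exact ⟨h1, by omega, by omega⟩
  · intro a _ b _ h
    simpa using h
private lemma image_filter_count {v : ℤ → ℤ} {P : Finset ℤ}
    (hinj : ∀ i ∈ P, ∀ j ∈ P, v i = v j → i = j)
    (hpar : ∀ j ∈ P, v j % 2 = j % 2) (t r : ℤ) :
    ((P.image v).filter (fun m => t < m ∧ m % 2 = r)).card =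
      (P.filter (fun j => t < v j ∧ j % 2 = r)).card := by
  symm
  apply Finset.card_bij (fun j _ => v j)
  · intro j hj
    simp only [Finset.mem_filter] at hj ⊢
    refine ⟨Finset.mem_image_of_mem v hj.1, hj.2.1, ?_⟩
    rw [hpar j hj.1]; exact hj.2.2
  · intro a ha b hb h
    simp only [Finset.mem_filter] at ha hb
    exact hinj a ha.1 b hb.1 h
  · intro m hm
    simp only [Finset.mem_filter, Finset.mem_image] at hm
    obtain ⟨⟨j, hjP, hj⟩, h1, h2⟩ := hm
    refine ⟨j, ?_, hj⟩
    simp only [Finset.mem_filter]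
    subst hj
    exact ⟨hjP, h1, by rw [← hpar j hjP]; exact h2⟩
private lemma column_w (n e : ℕ) (hn2 : 2 ∣ n) (he2 : 2 ∣ e) (he1 : 1 ≤ e)
    (hen : e + 1 ≤ n)
    (w u v : ℤ → ℤ) (hw : IsSigned n w) (hu : IsSigned n u) (hv : IsSigned n v)
    (hasc : ∀ i j : ℤ, 1 ≤ i → i < j → j ≤ (n : ℤ) → u i < u j)
    (hpos : ∀ j ∈ Finset.Icc (1 : ℤ) (n:ℤ), 0 < v j)
    (hfact : ∀ j : ℤ, w j = u (v j))
    (hue : ∀ j ∈ Finset.Icc (1 : ℤ) (n:ℤ), |u j| % 2 = j % 2)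
    (hve : ∀ j ∈ Finset.Icc (1 : ℤ) (n:ℤ), |v j| % 2 = j % 2)
    (hvasc1 : ∀ j : ℤ, 1 ≤ j → j < (e:ℤ) → v j < v (j+1))
    (hvasc2 : ∀ j : ℤ, (e:ℤ) < j → j < (n:ℤ) → j % 2 = 1 → v j < v (j+1))
    (j₀ : ℤ) (hj₀e : (e:ℤ) < j₀) (hj₀n : j₀ ≤ (n:ℤ)) :
    (((Finset.Icc (-(e:ℤ)) (e:ℤ)).filter (fun i => w j₀ < w i ∧ i % 2 = 1)).card =
      (((Finset.Icc (-(e:ℤ)) (e:ℤ)).filter (fun i => w j₀ < w i)).card) / 2) := by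
  classical
  have he2' : (e:ℤ) % 2 = 0 := by omega
  have hn2' : (n:ℤ) % 2 = 0 := by omega
  have hen' : (e:ℤ) + 1 ≤ (n:ℤ) := by exact_mod_cast hen
  have hw0 : w 0 = 0 := signed_zero_s16 hw
  have hv0 : v 0 = 0 := signed_zero_s16 hv
  have hwinj := signed_injOn hw
  have hvinj := signed_injOn hv
  have hvmem : ∀ j : ℤ, 1 ≤ j → j ≤ (n:ℤ) → 1 ≤ v j ∧ v j ≤ (n:ℤ) := by
    intro j h1 h2
    have h3 := signed_mem hv j (by omega) h2
    have h4 := hpos j (by simp only [Finset.mem_Icc]; omega)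
    omega
  have hvpar : ∀ j : ℤ, 1 ≤ j → j ≤ (n:ℤ) → v j % 2 = j % 2 := by
    intro j h1 h2
    have h3 := hve j (by simp only [Finset.mem_Icc]; omega)
    have h4 := hpos j (by simp only [Finset.mem_Icc]; omega)
    rwa [abs_of_pos h4] at h3
  set M : Finset ℤ := (Finset.Icc 1 (e:ℤ)).image v with hMdef
  have hMsub : M ⊆ Finset.Icc 1 (n:ℤ) := by
    intro m hm
    simp only [hMdef, Finset.mem_image, Finset.mem_Icc] at hm ⊢
    obtain ⟨j, hj, hjm⟩ := hm
    subst hjm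
    exact ⟨(hvmem j hj.1 (by omega)).1, (hvmem j hj.1 (by omega)).2⟩
  have hinjP : ∀ P : Finset ℤ, P ⊆ Finset.Icc 1 (n:ℤ) →
      ∀ i ∈ P, ∀ j ∈ P, v i = v j → i = j := by
    intro P hP i hi j hj hij
    have h1 := hP hi; have h2 := hP hj
    simp only [Finset.mem_Icc] at h1 h2
    exact hvinj i j (by omega) h1.2 (by omega) h2.2 hij
  have hparP : ∀ P : Finset ℤ, P ⊆ Finset.Icc 1 (n:ℤ) →
      ∀ j ∈ P, v j % 2 = j % 2 := by
    intro P hP j hj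
    have h1 := hP hj
    simp only [Finset.mem_Icc] at h1
    exact hvpar j h1.1 h1.2
  have hsubE : Finset.Icc (1:ℤ) (e:ℤ) ⊆ Finset.Icc 1 (n:ℤ) := by
    intro j hj; simp only [Finset.mem_Icc] at hj ⊢; omega
  have hsubO : Finset.Ioc ((e:ℤ)) (n:ℤ) ⊆ Finset.Icc 1 (n:ℤ) := by
    intro j hj; simp only [Finset.mem_Ioc] at hj; simp only [Finset.mem_Icc]; omega
  -- complement of M
  have hMc : Finset.Icc 1 (n:ℤ) \ M = (Finset.Ioc ((e:ℤ)) (n:ℤ)).image v := by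
    ext m
    simp only [Finset.mem_sdiff, hMdef, Finset.mem_image, Finset.mem_Icc, Finset.mem_Ioc]
    constructor
    · rintro ⟨⟨h1, h2⟩, h3⟩
      have hmem : m ∈ Set.Icc (-(n:ℤ)) (n:ℤ) := Set.mem_Icc.2 ⟨by omega, h2⟩
      obtain ⟨j, hjmem, hj⟩ := hv.2.surjOn hmem
      rw [Set.mem_Icc] at hjmem
      have hj0 : j ≠ 0 := by intro hc; rw [hc, hv0] at hj; omega
      have hjpos : 1 ≤ j := by
        by_contra hc
        push_neg at hc
        have h4 := hv.1 (-j)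
        rw [neg_neg] at h4
        have h5 := (hvmem (-j) (by omega) (by omega)).1
        omega
      refine ⟨j, ⟨?_, hjmem.2⟩, hj⟩
      by_contra hc
      push_neg at hc
      exact h3 ⟨j, ⟨hjpos, hc⟩, hj⟩
    · rintro ⟨j, ⟨h1, h2⟩, hj⟩
      subst hj
      refine ⟨⟨(hvmem j (by omega) h2).1, (hvmem j (by omega) h2).2⟩, ?_⟩
      rintro ⟨j', ⟨h3, h4⟩, hj'⟩
      have := hinjP (Finset.Icc 1 (n:ℤ)) (fun a ha => ha) j'
        (by simp only [Finset.mem_Icc]; omega) j (by simp only [Finset.mem_Icc]; omega) hj'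
      omega
  -- key hypotheses
  have hA : ∀ t : ℤ, 0 ≤ t → t ≤ (n:ℤ) →
      ((M.filter (fun m => t < m ∧ m % 2 = 1)).card ≤
       (M.filter (fun m => t < m ∧ m % 2 = 0)).card) := by
    intro t _ _
    rw [hMdef, image_filter_count (hinjP _ hsubE) (hparP _ hsubE) t 1,
      image_filter_count (hinjP _ hsubE) (hparP _ hsubE) t 0]
    apply pos_count_le
    intro j hj hjo
    simp only [Finset.mem_Icc] at hj ⊢
    exact ⟨⟨by omega, by omega⟩, hvasc1 j hj.1 (by omega)⟩
  have hB : ∀ t : ℤ, 0 ≤ t → t ≤ (n:ℤ) →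
      (((Finset.Icc 1 (n:ℤ) \ M).filter (fun m => t < m ∧ m % 2 = 1)).card ≤
       ((Finset.Icc 1 (n:ℤ) \ M).filter (fun m => t < m ∧ m % 2 = 0)).card) := by
    intro t _ _
    rw [hMc, image_filter_count (hinjP _ hsubO) (hparP _ hsubO) t 1,
      image_filter_count (hinjP _ hsubO) (hparP _ hsubO) t 0]
    apply pos_count_le
    intro j hj hjo
    simp only [Finset.mem_Ioc] at hj ⊢
    exact ⟨⟨by omega, by omega⟩, hvasc2 j hj.1 (by omega) hjo⟩
  have hC : (M.filter (fun m => m % 2 = 1)).card = (M.filter (fun m => m % 2 = 0)).card := by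
    have hc1 : ∀ r : ℤ, M.filter (fun m => m % 2 = r) = M.filter (fun m => 0 < m ∧ m % 2 = r) := by
      intro r
      apply Finset.filter_congr
      intro m hm
      have := hMsub hm
      simp only [Finset.mem_Icc] at this
      constructor
      · intro h; exact ⟨by omega, h⟩
      · intro h; exact h.2
    rw [hc1 1, hc1 0, hMdef,
      image_filter_count (hinjP _ hsubE) (hparP _ hsubE) 0 1,
      image_filter_count (hinjP _ hsubE) (hparP _ hsubE) 0 0]
    have hc2 : ∀ r : ℤ, (Finset.Icc (1:ℤ) (e:ℤ)).filter (fun j => 0 < v j ∧ j % 2 = r) =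
        (Finset.Ioc (0:ℤ) (e:ℤ)).filter (fun j => j % 2 = r) := by
      intro r
      ext j
      simp only [Finset.mem_filter, Finset.mem_Icc, Finset.mem_Ioc]
      constructor
      · rintro ⟨⟨h1, h2⟩, _, h3⟩; exact ⟨⟨by omega, h2⟩, h3⟩
      · rintro ⟨⟨h1, h2⟩, h3⟩
        exact ⟨⟨by omega, h2⟩, (hvmem j (by omega) (by omega)).1, h3⟩
    rw [hc2 1, hc2 0]
    have b1 := parity_balance (a := (0:ℤ)) (b := (e:ℤ)) (by omega)
    have a1 := oddc_add_evenc (a := (0:ℤ)) (b := (e:ℤ)) (by omega)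
    rw [oddc, evenc] at b1 a1
    split_ifs at b1 <;> omega
  -- m₀ and q
  have hm₀b := hvmem j₀ (by omega) hj₀n
  set m₀ := v j₀ with hm₀def
  have hwu : w j₀ = u m₀ := hfact j₀
  obtain ⟨α, β, hα, hαn, hβ, hβn, hqeq, hqpar, hm₀e, hcomp⟩ :=
    z_interval n u hu hasc hue m₀ hm₀b.1 hm₀b.2
  set q := |u m₀| with hqdef
  have hq1 : 1 ≤ q := by omega
  have hm₀M : m₀ ∉ M := by
    rw [hMdef]
    simp only [Finset.mem_image, Finset.mem_Icc]
    rintro ⟨j', ⟨h1, h2⟩, hj'⟩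
    have := hvinj j' j₀ (by omega) (by omega) (by omega) (by omega) hj'
    omega
  have hm₀par : m₀ % 2 = (β - α - 1) % 2 := by
    have h1 := hue m₀ (by simp only [Finset.mem_Icc]; omega)
    omega
  have hkey := key_lemma n hn2 M hMsub hA hB hC α β hα hαn hβ hβn hqpar
    m₀ hm₀M hm₀b.1 hm₀b.2 hm₀par hm₀e
  have habsw : ∀ i : ℤ, |u (v |i|)| = |w i| := by
    intro i
    rcases abs_cases i with ⟨h1, _⟩|⟨h1, _⟩
    · rw [h1, ← hfact]
    · rw [h1, ← hfact, hw.1, abs_neg]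
  -- the main bijection, odd version
  have hbij1 : ((Finset.Icc (-(e:ℤ)) (e:ℤ)).filter (fun i => q < w i ∧ i % 2 = 1)).card =
      (M.filter (fun m => (m ≤ α ∨ β ≤ m) ∧ m % 2 = 1)).card := by
    apply Finset.card_bij (fun i _ => v |i|)
    · intro i hi
      simp only [Finset.mem_filter, Finset.mem_Icc] at hi ⊢
      obtain ⟨⟨h1, h2⟩, h3, h4⟩ := hi
      have hi0 : i ≠ 0 := by intro hc; rw [hc, hw0] at h3; omega
      have habsi : 1 ≤ |i| ∧ |i| ≤ (e:ℤ) := by rcases abs_cases i with ⟨h,_⟩|⟨h,_⟩ <;> omega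
      have hmM : v |i| ∈ M := by
        rw [hMdef]
        exact Finset.mem_image_of_mem v (by simp only [Finset.mem_Icc]; exact habsi)
      have hmb := hvmem |i| habsi.1 (by omega)
      have hqlt : q < |u (v |i|)| := by
        rw [habsw i]; exact lt_of_lt_of_le h3 (le_abs_self _)
      refine ⟨hmM, (hcomp (v |i|) hmb.1 hmb.2).1 hqlt, ?_⟩
      have := hvpar |i| habsi.1 (by omega)
      rcases abs_cases i with ⟨h,_⟩|⟨h,_⟩ <;> omega
    · intro a ha b hb hab
      simp only [Finset.mem_filter, Finset.mem_Icc] at ha hb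
      obtain ⟨⟨ha1, ha2⟩, ha3, _⟩ := ha
      obtain ⟨⟨hb1, hb2⟩, hb3, _⟩ := hb
      have ha0 : a ≠ 0 := by intro hc; rw [hc, hw0] at ha3; omega
      have hb0 : b ≠ 0 := by intro hc; rw [hc, hw0] at hb3; omega
      have haa : 1 ≤ |a| ∧ |a| ≤ (e:ℤ) := by rcases abs_cases a with ⟨h,_⟩|⟨h,_⟩ <;> omega
      have hbb : 1 ≤ |b| ∧ |b| ≤ (e:ℤ) := by rcases abs_cases b with ⟨h,_⟩|⟨h,_⟩ <;> omega
      have heq : |a| = |b| :=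
        hvinj _ _ (by omega) (by omega) (by omega) (by omega) hab
      rcases abs_eq_abs.1 heq with h|h
      · exact h
      · exfalso
        have h2 : w a = - w b := by rw [h, hw.1 b]
        omega
    · intro m hm
      simp only [Finset.mem_filter] at hm
      obtain ⟨hmM, hm1, hm2⟩ := hm
      have hmbnd := hMsub hmM
      simp only [Finset.mem_Icc] at hmbnd
      obtain ⟨j, hj, hjm⟩ : ∃ j, (j ∈ Finset.Icc (1:ℤ) (e:ℤ)) ∧ v j = m := by
        rw [hMdef] at hmM
        simpa [Finset.mem_image] using hmM
      simp only [Finset.mem_Icc] at hj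
      have hqlt : q < |u m| := (hcomp m hmbnd.1 hmbnd.2).2 hm1
      have hwj : |w j| = |u m| := by rw [hfact, hjm]
      have hjpar := hvpar j hj.1 (by omega)
      rcases abs_cases (w j) with ⟨h1, h2⟩|⟨h1, h2⟩
      · refine ⟨j, ?_, ?_⟩
        · simp only [Finset.mem_filter, Finset.mem_Icc]
          exact ⟨⟨by omega, by omega⟩, by omega, by omega⟩
        · rw [abs_of_nonneg (by omega : (0:ℤ) ≤ j)]; exact hjm
      · refine ⟨-j, ?_, ?_⟩
        · simp only [Finset.mem_filter, Finset.mem_Icc]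
          have hwn := hw.1 j
          exact ⟨⟨by omega, by omega⟩, by omega, by omega⟩
        · rw [abs_neg, abs_of_nonneg (by omega : (0:ℤ) ≤ j)]; exact hjm
  -- the main bijection, full version
  have hbij2 : ((Finset.Icc (-(e:ℤ)) (e:ℤ)).filter (fun i => q < w i)).card =
      (M.filter (fun m => m ≤ α ∨ β ≤ m)).card := by
    apply Finset.card_bij (fun i _ => v |i|)
    · intro i hi
      simp only [Finset.mem_filter, Finset.mem_Icc] at hi ⊢
      obtain ⟨⟨h1, h2⟩, h3⟩ := hi
      have hi0 : i ≠ 0 := by intro hc; rw [hc, hw0] at h3; omega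
      have habsi : 1 ≤ |i| ∧ |i| ≤ (e:ℤ) := by rcases abs_cases i with ⟨h,_⟩|⟨h,_⟩ <;> omega
      have hmM : v |i| ∈ M := by
        rw [hMdef]
        exact Finset.mem_image_of_mem v (by simp only [Finset.mem_Icc]; exact habsi)
      have hmb := hvmem |i| habsi.1 (by omega)
      have hqlt : q < |u (v |i|)| := by
        rw [habsw i]; exact lt_of_lt_of_le h3 (le_abs_self _)
      exact ⟨hmM, (hcomp (v |i|) hmb.1 hmb.2).1 hqlt⟩
    · intro a ha b hb hab
      simp only [Finset.mem_filter, Finset.mem_Icc] at ha hb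
      obtain ⟨⟨ha1, ha2⟩, ha3⟩ := ha
      obtain ⟨⟨hb1, hb2⟩, hb3⟩ := hb
      have ha0 : a ≠ 0 := by intro hc; rw [hc, hw0] at ha3; omega
      have hb0 : b ≠ 0 := by intro hc; rw [hc, hw0] at hb3; omega
      have haa : 1 ≤ |a| ∧ |a| ≤ (e:ℤ) := by rcases abs_cases a with ⟨h,_⟩|⟨h,_⟩ <;> omega
      have hbb : 1 ≤ |b| ∧ |b| ≤ (e:ℤ) := by rcases abs_cases b with ⟨h,_⟩|⟨h,_⟩ <;> omega
      have heq : |a| = |b| :=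
        hvinj _ _ (by omega) (by omega) (by omega) (by omega) hab
      rcases abs_eq_abs.1 heq with h|h
      · exact h
      · exfalso
        have h2 : w a = - w b := by rw [h, hw.1 b]
        omega
    · intro m hm
      simp only [Finset.mem_filter] at hm
      obtain ⟨hmM, hm1⟩ := hm
      have hmbnd := hMsub hmM
      simp only [Finset.mem_Icc] at hmbnd
      obtain ⟨j, hj, hjm⟩ : ∃ j, (j ∈ Finset.Icc (1:ℤ) (e:ℤ)) ∧ v j = m := by
        rw [hMdef] at hmM
        simpa [Finset.mem_image] using hmM
      simp only [Finset.mem_Icc] at hj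
      have hqlt : q < |u m| := (hcomp m hmbnd.1 hmbnd.2).2 hm1
      have hwj : |w j| = |u m| := by rw [hfact, hjm]
      rcases abs_cases (w j) with ⟨h1, h2⟩|⟨h1, h2⟩
      · refine ⟨j, ?_, ?_⟩
        · simp only [Finset.mem_filter, Finset.mem_Icc]
          exact ⟨⟨by omega, by omega⟩, by omega⟩
        · rw [abs_of_nonneg (by omega : (0:ℤ) ≤ j)]; exact hjm
      · refine ⟨-j, ?_, ?_⟩
        · simp only [Finset.mem_filter, Finset.mem_Icc]
          have hwn := hw.1 j
          exact ⟨⟨by omega, by omega⟩, by omega⟩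
        · rw [abs_neg, abs_of_nonneg (by omega : (0:ℤ) ≤ j)]; exact hjm
  have hmain_q : ((Finset.Icc (-(e:ℤ)) (e:ℤ)).filter (fun i => q < w i ∧ i % 2 = 1)).card =
      ((Finset.Icc (-(e:ℤ)) (e:ℤ)).filter (fun i => q < w i)).card / 2 := by
    rw [hbij1, hbij2]; exact hkey
  -- now distinguish the sign of w j₀
  rcases abs_cases (u m₀) with ⟨h1, _⟩|⟨h1, _⟩
  · have hc : w j₀ = q := by rw [hwu]; omega
    simp only [hc]
    exact hmain_q
  · have hc : w j₀ = -q := by rw [hwu]; omega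
    simp only [hc]
    -- complement argument
    have hnoq : ∀ i : ℤ, -(e:ℤ) ≤ i → i ≤ e → w i ≠ q ∧ w i ≠ -q := by
      intro i hie1 hie2
      have hwnj := hw.1 j₀
      constructor <;> intro hc'
      · have : w i = w (-j₀) := by rw [hwnj]; omega
        have := hwinj i (-j₀) (by omega) (by omega) (by omega) (by omega) this
        omega
      · have : w i = w j₀ := by omega
        have := hwinj i j₀ (by omega) (by omega) (by omega) (by omega) this
        omega
    -- complement bijection, odd version
    have hnb1 : ((Finset.Icc (-(e:ℤ)) (e:ℤ)).filter (fun i => ¬(-q < w i) ∧ i % 2 = 1)).card =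
        ((Finset.Icc (-(e:ℤ)) (e:ℤ)).filter (fun i => q < w i ∧ i % 2 = 1)).card := by
      apply Finset.card_bij (fun i _ => -i)
      · intro i hi
        simp only [Finset.mem_filter, Finset.mem_Icc] at hi ⊢
        obtain ⟨⟨h2, h3⟩, h4, h5⟩ := hi
        have hwn := hw.1 i
        have := hnoq i h2 h3
        refine ⟨⟨by omega, by omega⟩, by omega, by omega⟩
      · intro a _ b _ hab; omega
      · intro i hi
        simp only [Finset.mem_filter, Finset.mem_Icc] at hi
        obtain ⟨⟨h2, h3⟩, h4, h5⟩ := hi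
        refine ⟨-i, ?_, by omega⟩
        simp only [Finset.mem_filter, Finset.mem_Icc]
        have hwn := hw.1 i
        refine ⟨⟨by omega, by omega⟩, by omega, by omega⟩
      -- complement bijection, full version
    have hnb2 : ((Finset.Icc (-(e:ℤ)) (e:ℤ)).filter (fun i => ¬(-q < w i))).card =
        ((Finset.Icc (-(e:ℤ)) (e:ℤ)).filter (fun i => q < w i)).card := by
      apply Finset.card_bij (fun i _ => -i)
      · intro i hi
        simp only [Finset.mem_filter, Finset.mem_Icc] at hi ⊢
        obtain ⟨⟨h2, h3⟩, h4⟩ := hi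
        have hwn := hw.1 i
        have := hnoq i h2 h3
        refine ⟨⟨by omega, by omega⟩, by omega⟩
      · intro a _ b _ hab; omega
      · intro i hi
        simp only [Finset.mem_filter, Finset.mem_Icc] at hi
        obtain ⟨⟨h2, h3⟩, h4⟩ := hi
        refine ⟨-i, ?_, by omega⟩
        simp only [Finset.mem_filter, Finset.mem_Icc]
        have hwn := hw.1 i
        refine ⟨⟨by omega, by omega⟩, by omega⟩
    -- splits
    have hsp1 : ((Finset.Icc (-(e:ℤ)) (e:ℤ)).filter (fun i => -q < w i ∧ i % 2 = 1)).card +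
        ((Finset.Icc (-(e:ℤ)) (e:ℤ)).filter (fun i => ¬(-q < w i) ∧ i % 2 = 1)).card =
        ((Finset.Icc (-(e:ℤ)) (e:ℤ)).filter (fun i => i % 2 = 1)).card := by
      rw [← Finset.card_union_of_disjoint]
      · congr 1
        ext i
        simp only [Finset.mem_union, Finset.mem_filter, Finset.mem_Icc]
        omega
      · rw [Finset.disjoint_left]
        intro p hp hp'
        simp only [Finset.mem_filter] at hp hp'
        omega
    have hsp2 : ((Finset.Icc (-(e:ℤ)) (e:ℤ)).filter (fun i => -q < w i)).card +
        ((Finset.Icc (-(e:ℤ)) (e:ℤ)).filter (fun i => ¬(-q < w i))).card =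
        (Finset.Icc (-(e:ℤ)) (e:ℤ)).card := by
      exact Finset.card_filter_add_card_filter_not _
    -- totals
    have htot : (Finset.Icc (-(e:ℤ)) (e:ℤ)).card = 2*e+1 := by
      rw [Int.card_Icc]; omega
    have htotodd : ((Finset.Icc (-(e:ℤ)) (e:ℤ)).filter (fun i => i % 2 = 1)).card = e := by
      have hconv : Finset.Icc (-(e:ℤ)) (e:ℤ) = Finset.Ioc (-(e:ℤ)-1) (e:ℤ) := by
        ext i; simp only [Finset.mem_Icc, Finset.mem_Ioc]; omega
      rw [hconv]
      have b1 := parity_balance (a := -(e:ℤ)-1) (b := (e:ℤ)) (by omega)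
      have a1 := oddc_add_evenc (a := -(e:ℤ)-1) (b := (e:ℤ)) (by omega)
      rw [oddc, evenc] at b1 a1
      split_ifs at b1 <;> omega
    omega

/-- Second additivity result: let `n` be even and `w ∈ Eₙ` (both factors of
`w = u·v`, `u` ascending and `v ∈ Sₙ`, are even chessboard elements) with even
descent set. Let `e ∈ [n−1]` be even with `w(1) < ⋯ < w(e)`, and let
`w = x·y` be the parabolic factorisation with respect to `J = {s₀, …, s_{e−1}}`
(`y ∈ B_e ⊆ Bₙ`, `x` the minimal coset representative). Then
`L(w) = L(x) + L(y)`. -/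
theorem L_additive_second (n : ℕ) (hn : 2 ∣ n) (w u v : ℤ → ℤ)
    (hw : IsSigned n w) (hu : IsSigned n u) (hv : IsSigned n v)
    (hasc : ∀ i j : ℤ, 1 ≤ i → i < j → j ≤ (n : ℤ) → u i < u j)
    (hpos : ∀ j ∈ Finset.Icc (1 : ℤ) n, 0 < v j)
    (hfact : ∀ j : ℤ, w j = u (v j))
    (hue : ∀ j ∈ Finset.Icc (1 : ℤ) n, |u j| % 2 = j % 2)
    (hve : ∀ j ∈ Finset.Icc (1 : ℤ) n, |v j| % 2 = j % 2)
    (hdesc : ∀ i ∈ Dset n w, i % 2 = 0)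
    (e : ℕ) (he2 : 2 ∣ e) (he1 : 1 ≤ e) (hen : e ≤ n - 1)
    (hasce : ∀ i : ℤ, 1 ≤ i → i < (e : ℤ) → w i < w (i + 1))
    (x y : ℤ → ℤ) (hx : IsSigned n x) (hy : IsSigned n y)
    (hyfix : ∀ j : ℤ, (e : ℤ) < |j| → |j| ≤ (n : ℤ) → y j = j)
    (hxpos : 0 < x 1)
    (hxasc : ∀ i : ℤ, 1 ≤ i → i < (e : ℤ) → x i < x (i + 1))
    (hfact2 : ∀ j : ℤ, w j = x (y j)) :
    Lstat n w = Lstat n x + Lstat n y := by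
  classical
  have hen' : e + 1 ≤ n := by omega
  have hEN : (e:ℤ) + 1 ≤ (n:ℤ) := by exact_mod_cast hen'
  have he2' : (e:ℤ) % 2 = 0 := by omega
  have hn2' : (n:ℤ) % 2 = 0 := by omega
  have hw0 : w 0 = 0 := signed_zero_s16 hw
  have hwinj := signed_injOn hw
  have hvmem : ∀ j : ℤ, 1 ≤ j → j ≤ (n:ℤ) → 1 ≤ v j ∧ v j ≤ (n:ℤ) := by
    intro j h1 h2
    have h3 := signed_mem hv j (by omega) h2
    have h4 := hpos j (by simp only [Finset.mem_Icc]; omega)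
    omega
  -- v ascending where w is
  have hvlt : ∀ i j : ℤ, 1 ≤ i → i ≤ (n:ℤ) → 1 ≤ j → j ≤ (n:ℤ) → w i < w j → v i < v j := by
    intro i j h1 h2 h3 h4 hlt
    rw [hfact, hfact] at hlt
    by_contra hc
    push_neg at hc
    rcases lt_or_eq_of_le hc with h|h
    · have := hasc (v j) (v i) (hvmem j h3 h4).1 h (hvmem i h1 h2).2
      omega
    · rw [h] at hlt; omega
  have hvasc1 : ∀ j : ℤ, 1 ≤ j → j < (e:ℤ) → v j < v (j+1) := by
    intro j h1 h2
    exact hvlt j (j+1) h1 (by omega) (by omega) (by omega) (hasce j h1 h2)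
  have hwasc2 : ∀ j : ℤ, 1 ≤ j → j < (n:ℤ) → j % 2 = 1 → w j < w (j+1) := by
    intro j h1 h2 h3
    have hnd : ¬ (w (j+1) < w j) := by
      intro hlt
      have hmem : j ∈ Dset n w := by
        simp only [Dset, Finset.mem_filter, Finset.mem_Ico]
        exact ⟨⟨by omega, by omega⟩, hlt⟩
      have := hdesc j hmem
      omega
    have hne : w j ≠ w (j+1) := by
      intro hc
      have := hwinj j (j+1) (by omega) (by omega) (by omega) (by omega) hc
      omega
    omega
  have hvasc2 : ∀ j : ℤ, (e:ℤ) < j → j < (n:ℤ) → j % 2 = 1 → v j < v (j+1) := by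
    intro j h1 h2 h3
    exact hvlt j (j+1) (by omega) (by omega) (by omega) (by omega) (hwasc2 j (by omega) h2 h3)
  -- x and y basics
  have hxmono := signed_strictmono hx hxpos hxasc
  have hyin := y_inside hy hyfix (by omega)
  have hyon := y_onto hy hyfix (by omega)
  have hyinj := signed_injOn hy
  have hwx : ∀ j : ℤ, (e:ℤ) < |j| → |j| ≤ (n:ℤ) → w j = x j := by
    intro j h1 h2
    rw [hfact2, hyfix j h1 h2]
  -- count transfer via y
  have hsx : ∀ c : ℤ,
      ((Finset.Icc (-(e:ℤ)) (e:ℤ)).filter (fun i => c < w i)).card =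
      ((Finset.Icc (-(e:ℤ)) (e:ℤ)).filter (fun i => c < x i)).card := by
    intro c
    apply Finset.card_bij (fun i _ => y i)
    · intro i hi
      simp only [Finset.mem_filter, Finset.mem_Icc] at hi ⊢
      obtain ⟨⟨h1, h2⟩, h3⟩ := hi
      have h4 := hyin i h1 h2
      refine ⟨⟨h4.1, h4.2⟩, ?_⟩
      rw [← hfact2]; exact h3
    · intro a ha b hb hab
      simp only [Finset.mem_filter, Finset.mem_Icc] at ha hb
      exact hyinj a b (by omega) (by omega) (by omega) (by omega) hab
    · intro i' hi'
      simp only [Finset.mem_filter, Finset.mem_Icc] at hi'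
      obtain ⟨⟨h1, h2⟩, h3⟩ := hi'
      obtain ⟨i, hib, hiy⟩ := hyon i' h1 h2
      refine ⟨i, ?_, hiy⟩
      simp only [Finset.mem_filter, Finset.mem_Icc]
      refine ⟨⟨hib.1, hib.2⟩, ?_⟩
      rw [hfact2, hiy]; exact h3
  -- per-column equality of fibers
  have hfib : ∀ j₀ : ℤ, (e:ℤ) < j₀ → j₀ ≤ (n:ℤ) →
      ((Finset.Icc (-(e:ℤ)) (e:ℤ)).filter (fun i => w j₀ < w i ∧ i % 2 ≠ j₀ % 2)).card =
      ((Finset.Icc (-(e:ℤ)) (e:ℤ)).filter (fun i => x j₀ < x i ∧ i % 2 ≠ j₀ % 2)).card := by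
    intro j₀ hj₀e hj₀n
    have hxj₀ : x j₀ = w j₀ := (hwx j₀ (by rw [abs_of_pos (by omega)]; omega)
      (by rw [abs_of_pos (by omega)]; omega)).symm
    -- the x side is an upper interval
    set S := (Finset.Icc (-(e:ℤ)) (e:ℤ)).filter (fun i => w j₀ < x i) with hSdef
    have hSsub : S ⊆ Finset.Icc (-(e:ℤ)) (e:ℤ) := Finset.filter_subset _ _
    have hSup : ∀ i ∈ S, ∀ i' : ℤ, i ≤ i' → i' ≤ (e:ℤ) → i' ∈ S := by
      intro i hi i' h1 h2
      simp only [hSdef, Finset.mem_filter, Finset.mem_Icc] at hi ⊢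
      obtain ⟨⟨h3, h4⟩, h5⟩ := hi
      refine ⟨⟨by omega, h2⟩, ?_⟩
      rcases lt_or_eq_of_le h1 with h|h
      · exact lt_trans h5 (hxmono i i' h3 h h2)
      · rw [← h]; exact h5
    have hSIoc : S = Finset.Ioc ((e:ℤ) - S.card) (e:ℤ) :=
      interval_of_upward (by omega) hSsub hSup
    have hs_eq : ((Finset.Icc (-(e:ℤ)) (e:ℤ)).filter (fun i => w j₀ < w i)).card = S.card := by
      rw [hSdef]; exact hsx (w j₀)
    -- odd counts on both sides
    have hcolw := column_w n e hn he2 he1 hen' w u v hw hu hv hasc hpos hfact hue hve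
      hvasc1 hvasc2 j₀ hj₀e hj₀n
    have hcolx : ((Finset.Icc (-(e:ℤ)) (e:ℤ)).filter (fun i => w j₀ < x i ∧ i % 2 = 1)).card =
        S.card / 2 := by
      have h1 : (Finset.Icc (-(e:ℤ)) (e:ℤ)).filter (fun i => w j₀ < x i ∧ i % 2 = 1) =
          S.filter (fun i => i % 2 = 1) := by
        rw [hSdef, Finset.filter_filter]
      rw [h1]
      have h2 := oddc_Ioc_even_top (b := (e:ℤ)) (s := S.card) he2'
      unfold oddc at h2
      rw [← hSIoc] at h2
      exact h2
    -- even counts determined by parity split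
    have hsplitw : ((Finset.Icc (-(e:ℤ)) (e:ℤ)).filter (fun i => w j₀ < w i ∧ i % 2 = 1)).card +
        ((Finset.Icc (-(e:ℤ)) (e:ℤ)).filter (fun i => w j₀ < w i ∧ i % 2 = 0)).card =
        ((Finset.Icc (-(e:ℤ)) (e:ℤ)).filter (fun i => w j₀ < w i)).card := by
      rw [← Finset.card_union_of_disjoint]
      · congr 1
        ext i
        simp only [Finset.mem_union, Finset.mem_filter, Finset.mem_Icc]
        omega
      · rw [Finset.disjoint_left]
        intro p hp hp'
        simp only [Finset.mem_filter] at hp hp'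
        omega
    have hsplitx : ((Finset.Icc (-(e:ℤ)) (e:ℤ)).filter (fun i => w j₀ < x i ∧ i % 2 = 1)).card +
        ((Finset.Icc (-(e:ℤ)) (e:ℤ)).filter (fun i => w j₀ < x i ∧ i % 2 = 0)).card =
        S.card := by
      rw [hSdef, ← Finset.card_union_of_disjoint]
      · congr 1
        ext i
        simp only [Finset.mem_union, Finset.mem_filter, Finset.mem_Icc]
        omega
      · rw [Finset.disjoint_left]
        intro p hp hp'
        simp only [Finset.mem_filter] at hp hp'
        omega
    -- put together by parity of j₀
    rcases (by omega : j₀ % 2 = 1 ∨ j₀ % 2 = 0) with hp|hp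
    · have hc1 : (Finset.Icc (-(e:ℤ)) (e:ℤ)).filter (fun i => w j₀ < w i ∧ i % 2 ≠ j₀ % 2) =
          (Finset.Icc (-(e:ℤ)) (e:ℤ)).filter (fun i => w j₀ < w i ∧ i % 2 = 0) := by
        apply Finset.filter_congr; intro i _
        constructor
        · rintro ⟨h1, h2⟩; exact ⟨h1, by omega⟩
        · rintro ⟨h1, h2⟩; exact ⟨h1, by omega⟩
      have hc2 : (Finset.Icc (-(e:ℤ)) (e:ℤ)).filter (fun i => x j₀ < x i ∧ i % 2 ≠ j₀ % 2) =
          (Finset.Icc (-(e:ℤ)) (e:ℤ)).filter (fun i => w j₀ < x i ∧ i % 2 = 0) := by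
        apply Finset.filter_congr; intro i _
        rw [hxj₀]
        constructor
        · rintro ⟨h1, h2⟩; exact ⟨h1, by omega⟩
        · rintro ⟨h1, h2⟩; exact ⟨h1, by omega⟩
      rw [hc1, hc2]
      omega
    · have hc1 : (Finset.Icc (-(e:ℤ)) (e:ℤ)).filter (fun i => w j₀ < w i ∧ i % 2 ≠ j₀ % 2) =
          (Finset.Icc (-(e:ℤ)) (e:ℤ)).filter (fun i => w j₀ < w i ∧ i % 2 = 1) := by
        apply Finset.filter_congr; intro i _
        constructor
        · rintro ⟨h1, h2⟩; exact ⟨h1, by omega⟩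
        · rintro ⟨h1, h2⟩; exact ⟨h1, by omega⟩
      have hc2 : (Finset.Icc (-(e:ℤ)) (e:ℤ)).filter (fun i => x j₀ < x i ∧ i % 2 ≠ j₀ % 2) =
          (Finset.Icc (-(e:ℤ)) (e:ℤ)).filter (fun i => w j₀ < x i ∧ i % 2 = 1) := by
        apply Finset.filter_congr; intro i _
        rw [hxj₀]
        constructor
        · rintro ⟨h1, h2⟩; exact ⟨h1, by omega⟩
        · rintro ⟨h1, h2⟩; exact ⟨h1, by omega⟩
      rw [hc1, hc2, hcolw, hcolx, hs_eq]
  -- partition of Lset cards into four classes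
  have hpart : ∀ f : ℤ → ℤ, (Lset n f).card =
      ((Lset n f).filter (fun p => (-(e:ℤ) ≤ p.1 ∧ p.1 ≤ (e:ℤ)) ∧ (-(e:ℤ) ≤ p.2 ∧ p.2 ≤ (e:ℤ)))).card +
      ((Lset n f).filter (fun p => (-(e:ℤ) ≤ p.1 ∧ p.1 ≤ (e:ℤ)) ∧ ¬(-(e:ℤ) ≤ p.2 ∧ p.2 ≤ (e:ℤ)))).card +
      ((Lset n f).filter (fun p => ¬(-(e:ℤ) ≤ p.1 ∧ p.1 ≤ (e:ℤ)) ∧ (-(e:ℤ) ≤ p.2 ∧ p.2 ≤ (e:ℤ)))).card +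
      ((Lset n f).filter (fun p => ¬(-(e:ℤ) ≤ p.1 ∧ p.1 ≤ (e:ℤ)) ∧ ¬(-(e:ℤ) ≤ p.2 ∧ p.2 ≤ (e:ℤ)))).card := by
    intro f
    have h1 := Finset.card_filter_add_card_filter_not
      (s := Lset n f) (p := fun p : ℤ×ℤ => (-(e:ℤ) ≤ p.1 ∧ p.1 ≤ (e:ℤ)))
    have h2 := Finset.card_filter_add_card_filter_not
      (s := (Lset n f).filter (fun p : ℤ×ℤ => (-(e:ℤ) ≤ p.1 ∧ p.1 ≤ (e:ℤ))))
      (p := fun p : ℤ×ℤ => (-(e:ℤ) ≤ p.2 ∧ p.2 ≤ (e:ℤ)))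
    have h3 := Finset.card_filter_add_card_filter_not
      (s := (Lset n f).filter (fun p : ℤ×ℤ => ¬(-(e:ℤ) ≤ p.1 ∧ p.1 ≤ (e:ℤ))))
      (p := fun p : ℤ×ℤ => (-(e:ℤ) ≤ p.2 ∧ p.2 ≤ (e:ℤ)))
    rw [Finset.filter_filter, Finset.filter_filter] at h2
    rw [Finset.filter_filter, Finset.filter_filter] at h3
    omega
  -- y picks up exactly the inside-inside pairs of w
  have hyy : Lset n y =
      (Lset n w).filter (fun p => (-(e:ℤ) ≤ p.1 ∧ p.1 ≤ (e:ℤ)) ∧ (-(e:ℤ) ≤ p.2 ∧ p.2 ≤ (e:ℤ))) := by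
    have hfixout : ∀ t : ℤ, -(n:ℤ) ≤ t → t ≤ n → ¬(-(e:ℤ) ≤ t ∧ t ≤ (e:ℤ)) → y t = t := by
      intro t h1 h2 h3
      apply hyfix t
      · rcases abs_cases t with ⟨h,_⟩|⟨h,_⟩ <;> omega
      · rcases abs_cases t with ⟨h,_⟩|⟨h,_⟩ <;> omega
    ext ⟨i, j⟩
    simp only [Lset, Finset.mem_filter, Finset.mem_product, Finset.mem_Icc]
    constructor
    · rintro ⟨⟨⟨hi1, hi2⟩, hj1, hj2⟩, hij, hinv, hpar⟩
      have hin : (-(e:ℤ) ≤ i ∧ i ≤ (e:ℤ)) ∧ (-(e:ℤ) ≤ j ∧ j ≤ (e:ℤ)) := by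
        by_contra hc
        rcases Classical.em (-(e:ℤ) ≤ i ∧ i ≤ (e:ℤ)) with hi|hi
        · have hj : ¬(-(e:ℤ) ≤ j ∧ j ≤ (e:ℤ)) := fun h => hc ⟨hi, h⟩
          have h4 := hyin i hi.1 hi.2
          have h5 := hfixout j hj1 hj2 hj
          omega
        · rcases Classical.em (-(e:ℤ) ≤ j ∧ j ≤ (e:ℤ)) with hj|hj
          · have h4 := hyin j hj.1 hj.2
            have h5 := hfixout i hi1 hi2 hi
            omega
          · have h4 := hfixout i hi1 hi2 hi
            have h5 := hfixout j hj1 hj2 hj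
            omega
      refine ⟨⟨⟨⟨hi1, hi2⟩, hj1, hj2⟩, hij, ?_, hpar⟩, hin⟩
      rw [hfact2, hfact2]
      have h4 := hyin i hin.1.1 hin.1.2
      have h5 := hyin j hin.2.1 hin.2.2
      exact hxmono (y j) (y i) h5.1 hinv h4.2
    · rintro ⟨⟨⟨⟨hi1, hi2⟩, hj1, hj2⟩, hij, hinv, hpar⟩, ⟨hiin, hjin⟩⟩
      refine ⟨⟨⟨hi1, hi2⟩, hj1, hj2⟩, hij, ?_, hpar⟩
      have h4 := hyin i hiin.1 hiin.2
      have h5 := hyin j hjin.1 hjin.2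
      have hne : y i ≠ y j := by
        intro hc
        have := hyinj i j (by omega) (by omega) (by omega) (by omega) hc
        omega
      rcases lt_trichotomy (y i) (y j) with h|h|h
      · exfalso
        have := hxmono (y i) (y j) h4.1 h h5.2
        rw [← hfact2, ← hfact2] at this
        omega
      · exact absurd h hne
      · exact h
  -- x has no inside-inside pairs
  have hxempty : ((Lset n x).filter
      (fun p => (-(e:ℤ) ≤ p.1 ∧ p.1 ≤ (e:ℤ)) ∧ (-(e:ℤ) ≤ p.2 ∧ p.2 ≤ (e:ℤ)))).card = 0 := by
    rw [Finset.card_eq_zero]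
    apply Finset.eq_empty_of_forall_notMem
    rintro ⟨i, j⟩ hp
    simp only [Lset, Finset.mem_filter, Finset.mem_product, Finset.mem_Icc] at hp
    obtain ⟨⟨_, hij, hinv, _⟩, ⟨hi1, hi2⟩, hj1, hj2⟩ := hp
    have := hxmono i j hi1 hij hj2
    omega
  -- outside-outside pairs agree
  have hoo : (Lset n w).filter
      (fun p => ¬(-(e:ℤ) ≤ p.1 ∧ p.1 ≤ (e:ℤ)) ∧ ¬(-(e:ℤ) ≤ p.2 ∧ p.2 ≤ (e:ℤ))) =
      (Lset n x).filter
      (fun p => ¬(-(e:ℤ) ≤ p.1 ∧ p.1 ≤ (e:ℤ)) ∧ ¬(-(e:ℤ) ≤ p.2 ∧ p.2 ≤ (e:ℤ))) := by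
    have hout : ∀ t : ℤ, -(n:ℤ) ≤ t → t ≤ n → ¬(-(e:ℤ) ≤ t ∧ t ≤ (e:ℤ)) → w t = x t := by
      intro t h1 h2 h3
      apply hwx t
      · rcases abs_cases t with ⟨h,_⟩|⟨h,_⟩ <;> omega
      · rcases abs_cases t with ⟨h,_⟩|⟨h,_⟩ <;> omega
    ext ⟨i, j⟩
    simp only [Lset, Finset.mem_filter, Finset.mem_product, Finset.mem_Icc]
    constructor
    · rintro ⟨⟨⟨⟨hi1, hi2⟩, hj1, hj2⟩, hij, hinv, hpar⟩, hc1, hc2⟩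
      have e1 := hout i hi1 hi2 hc1
      have e2 := hout j hj1 hj2 hc2
      exact ⟨⟨⟨⟨hi1, hi2⟩, hj1, hj2⟩, hij, by omega, hpar⟩, hc1, hc2⟩
    · rintro ⟨⟨⟨⟨hi1, hi2⟩, hj1, hj2⟩, hij, hinv, hpar⟩, hc1, hc2⟩
      have e1 := hout i hi1 hi2 hc1
      have e2 := hout j hj1 hj2 hc2
      exact ⟨⟨⟨⟨hi1, hi2⟩, hj1, hj2⟩, hij, by omega, hpar⟩, hc1, hc2⟩
  -- mixed classes have equal cardinality (reflection)
  have hmix : ∀ f : ℤ → ℤ, (∀ j : ℤ, f (-j) = -f j) →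
      ((Lset n f).filter
        (fun p => ¬(-(e:ℤ) ≤ p.1 ∧ p.1 ≤ (e:ℤ)) ∧ (-(e:ℤ) ≤ p.2 ∧ p.2 ≤ (e:ℤ)))).card =
      ((Lset n f).filter
        (fun p => (-(e:ℤ) ≤ p.1 ∧ p.1 ≤ (e:ℤ)) ∧ ¬(-(e:ℤ) ≤ p.2 ∧ p.2 ≤ (e:ℤ)))).card := by
    intro f hf
    apply Finset.card_bij (fun p _ => ((-p.2, -p.1) : ℤ × ℤ))
    · rintro ⟨i, j⟩ hp
      simp only [Finset.mem_filter] at hp ⊢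
      obtain ⟨hpL, hc1, hc2⟩ := hp
      refine ⟨lset_invol hf _ hpL, ?_, ?_⟩
      · omega
      · omega
    · rintro ⟨i, j⟩ _ ⟨i', j'⟩ _ h
      simp only [Prod.mk.injEq] at h ⊢
      omega
    · rintro ⟨i, j⟩ hp
      simp only [Finset.mem_filter] at hp
      obtain ⟨hpL, hc1, hc2⟩ := hp
      refine ⟨(-j, -i), ?_, by simp⟩
      simp only [Finset.mem_filter]
      refine ⟨lset_invol hf _ hpL, ?_, ?_⟩
      · omega
      · omega
  -- mixed class cards agree between w and x via column counts
  have hmapf : ∀ f : ℤ → ℤ, ∀ p ∈ (Lset n f).filter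
      (fun p => (-(e:ℤ) ≤ p.1 ∧ p.1 ≤ (e:ℤ)) ∧ ¬(-(e:ℤ) ≤ p.2 ∧ p.2 ≤ (e:ℤ))),
      p.2 ∈ Finset.Ioc (e:ℤ) (n:ℤ) := by
    rintro f ⟨i, j⟩ hp
    simp only [Lset, Finset.mem_filter, Finset.mem_product, Finset.mem_Icc] at hp
    obtain ⟨⟨⟨⟨hi1, hi2⟩, hj1, hj2⟩, hij, hinv, hpar⟩, hc1, hc2⟩ := hp
    simp only [Finset.mem_Ioc]
    omega
  have hfibcard : ∀ f : ℤ → ℤ, ∀ j₀ : ℤ, (e:ℤ) < j₀ → j₀ ≤ (n:ℤ) →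
      (((Lset n f).filter
        (fun p => (-(e:ℤ) ≤ p.1 ∧ p.1 ≤ (e:ℤ)) ∧ ¬(-(e:ℤ) ≤ p.2 ∧ p.2 ≤ (e:ℤ)))).filter
        (fun p => p.2 = j₀)).card =
      ((Finset.Icc (-(e:ℤ)) (e:ℤ)).filter (fun i => f j₀ < f i ∧ i % 2 ≠ j₀ % 2)).card := by
    intro f j₀ hj₀e hj₀n
    apply Finset.card_bij (fun p _ => p.1)
    · rintro ⟨i, j⟩ hp
      simp only [Lset, Finset.mem_filter, Finset.mem_product, Finset.mem_Icc] at hp ⊢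
      obtain ⟨⟨⟨⟨⟨hi1, hi2⟩, hj1, hj2⟩, hij, hinv, hpar⟩, hc1, hc2⟩, hj⟩ := hp
      try dsimp only at hc1 hc2 hj ⊢
      subst hj
      exact ⟨⟨hc1.1, hc1.2⟩, hinv, hpar⟩
    · rintro ⟨i, j⟩ hp ⟨i', j'⟩ hp' h
      simp only [Finset.mem_filter] at hp hp'
      have h1 : j = j₀ := hp.2
      have h2 : j' = j₀ := hp'.2
      dsimp only at h
      simp only [Prod.mk.injEq]
      exact ⟨h, by omega⟩
    · intro i hi
      simp only [Finset.mem_filter, Finset.mem_Icc] at hi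
      obtain ⟨⟨hi1, hi2⟩, hinv, hpar⟩ := hi
      refine ⟨(i, j₀), ?_, rfl⟩
      simp only [Lset, Finset.mem_filter, Finset.mem_product, Finset.mem_Icc]
      refine ⟨⟨⟨⟨⟨by omega, by omega⟩, by omega, by omega⟩, by omega, hinv, hpar⟩, ?_, ?_⟩, trivial⟩
      · omega
      · omega
  have hmixcard : ((Lset n w).filter
      (fun p => (-(e:ℤ) ≤ p.1 ∧ p.1 ≤ (e:ℤ)) ∧ ¬(-(e:ℤ) ≤ p.2 ∧ p.2 ≤ (e:ℤ)))).card =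
      ((Lset n x).filter
      (fun p => (-(e:ℤ) ≤ p.1 ∧ p.1 ≤ (e:ℤ)) ∧ ¬(-(e:ℤ) ≤ p.2 ∧ p.2 ≤ (e:ℤ)))).card := by
    rw [Finset.card_eq_sum_card_fiberwise (hmapf w),
      Finset.card_eq_sum_card_fiberwise (hmapf x)]
    apply Finset.sum_congr rfl
    intro j₀ hj₀
    simp only [Finset.mem_Ioc] at hj₀
    rw [hfibcard w j₀ hj₀.1 hj₀.2, hfibcard x j₀ hj₀.1 hj₀.2]
    exact hfib j₀ hj₀.1 hj₀.2
  -- conclude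
  have hcards : (Lset n w).card = (Lset n x).card + (Lset n y).card := by
    have h1 := hpart w
    have h2 := hpart x
    have h3 : (Lset n y).card = ((Lset n w).filter
      (fun p => (-(e:ℤ) ≤ p.1 ∧ p.1 ≤ (e:ℤ)) ∧ (-(e:ℤ) ≤ p.2 ∧ p.2 ≤ (e:ℤ)))).card := by
      rw [hyy]
    have h4 := congrArg Finset.card hoo
    have h5 := hmix w hw.1
    have h6 := hmix x hx.1
    omega
  have hdx := lset_even_card (n := n) hx.1
  have hdy := lset_even_card (n := n) hy.1
  unfold Lstat
  omega
end
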